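/- arXiv:1308.3810 — 7 statements merged into one kernel-verified Lean document; each statement's English description precedes it below -/
import Mathlib

section
/- For all r, s ≥ 1, there exists an (r-1)^(2^(s-1)) letter (r-1)^(2^(s-1))-by-s formation (a concatenation of s permutations of (r-1)^(2^(s-1)) distinct letters) that contains no binary (r,s)-formation. -/
/-- The increasing sequence `1 2 ... c`. -/
def Ic (c : ℕ) : List ℕ := List.range' 1 c

/-- The decreasing sequence `c (c-1) ... 1`. -/
def Dc (c : ℕ) : List ℕ := (Ic c).reverse

/-- `k` concatenated copies of the list `l`. -/
def rep (l : List ℕ) (k : ℕ) : List ℕ := (List.replicate k l).flatten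

/-- `up(c,t)`: the sequence `1 2 ... c` repeated `t` times. -/
def upSeq (c t : ℕ) : List ℕ := rep (Ic c) t

/-- `alt(c,k)`: the concatenation of `k` permutations alternating `I_c, D_c, I_c, ...`. -/
def altSeq (c k : ℕ) : List ℕ :=
  ((List.range k).map (fun i => if i % 2 = 0 then Ic c else Dc c)).flatten

/-- A sequence `s` contains `u` if some subsequence of `s` is obtained from `u`
by an injective renaming of its letters. -/
def Contains (s u : List ℕ) : Prop :=
  ∃ f : ℕ → ℕ, Function.Injective f ∧ (u.map f).Sublist s

/-- `F` is an `(r,s)`-formation: a concatenation of `s` permutations of a set of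
`r` distinct letters. -/
def IsFormation (r s : ℕ) (F : List ℕ) : Prop :=
  ∃ (A : Finset ℕ) (ps : List (List ℕ)), A.card = r ∧ ps.length = s ∧
    (∀ p ∈ ps, p.Nodup ∧ p.toFinset = A) ∧ F = ps.flatten

/-- `F` is a binary `(r,s)`-formation: an `(r,s)`-formation in which every
constituent permutation equals a fixed permutation `p` or its reverse. -/
def IsBinaryFormation (r s : ℕ) (F : List ℕ) : Prop :=
  ∃ (A : Finset ℕ) (p : List ℕ) (ps : List (List ℕ)), A.card = r ∧
    p.Nodup ∧ p.toFinset = A ∧ ps.length = s ∧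
    (∀ q ∈ ps, q = p ∨ q = p.reverse) ∧ F = ps.flatten

/-- The formation width of `u`: the minimum `s` such that there exists `r` for which
every `(r,s)`-formation contains `u`. -/
noncomputable def fw (u : List ℕ) : ℕ :=
  sInf {s | ∃ r, ∀ F, IsFormation r s F → Contains F u}

/-- The formation length of `u`: the minimum `r` such that every `(r, fw u)`-formation
contains `u`. -/
noncomputable def fl (u : List ℕ) : ℕ :=
  sInf {r | ∀ F, IsFormation r (fw u) F → Contains F u}

/-- For a permutation `π` of `{1,...,c}`, the sequence `I_π = π(1) π(2) ... π(c)`. -/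
def Iperm {c : ℕ} (π : Equiv.Perm (Fin c)) : List ℕ :=
  List.ofFn (fun i => (π i).val + 1)

/-- `l(u)` for a sequence `u` on letters `1,...,c`: the smallest `k` such that
`up(c,k)` contains `u`. -/
noncomputable def lval (c : ℕ) (u : List ℕ) : ℕ := sInf {k | Contains (upSeq c k) u}

/-- `r(u)` for a sequence `u` on letters `1,...,c`: the smallest `k` such that
`alt(c,k)` contains `u`. -/
noncomputable def rval (c : ℕ) (u : List ℕ) : ℕ := sInf {k | Contains (altSeq c k) u}

/-- The binary formation `I_c^{e_1} D_c^{e_2} I_c^{e_3} ...` determined by the list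
of exponents `e` (blocks alternate starting with `I_c`). -/
def altBlocks (c : ℕ) (e : List ℕ) : List ℕ :=
  (e.zipIdx.map (fun p => rep (if p.2 % 2 = 0 then Ic c else Dc c) p.1)).flatten


namespace StmtAux

/-- digit `j` of `x` in base `b` -/
def dg (b j x : ℕ) : ℕ := x / b ^ j % b

/-- sign of digit position `c` in block `k` -/
def sg (c k : ℕ) : Bool := decide ((((List.range k).countP (fun i => c.testBit i)) % 2) = 1)

/-- possibly flipped digit -/
def fl1 (b : ℕ) (s : Bool) (d : ℕ) : ℕ := if s then b - 1 - d else d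

/-- the permutation of `[0, b^m)` used as block `k` -/
def ph (b m k x : ℕ) : ℕ := ∑ j ∈ Finset.range m, fl1 b (sg j k) (dg b j x) * b ^ j

lemma dg_lt {b : ℕ} (hb : 0 < b) (j x : ℕ) : dg b j x < b := Nat.mod_lt _ hb

lemma fl1_lt {b d : ℕ} (hb : 0 < b) (s : Bool) (hd : d < b) : fl1 b s d < b := by
  cases s <;> simp [fl1] <;> omega

lemma fl1_fl1 {b d : ℕ} (s : Bool) (hd : d < b) : fl1 b s (fl1 b s d) = d := by
  cases s <;> simp [fl1] <;> omega

lemma sum_base_lt {b : ℕ} (hb : 0 < b) (c : ℕ → ℕ) (hc : ∀ j, c j < b) (m : ℕ) :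
    ∑ j ∈ Finset.range m, c j * b ^ j < b ^ m := by
  induction m with
  | zero => simpa using Nat.one_pos
  | succ m ih =>
    rw [Finset.sum_range_succ, pow_succ]
    have h1 : c m * b ^ m + b ^ m ≤ b ^ m * b := by
      calc c m * b ^ m + b ^ m = (c m + 1) * b ^ m := by ring
        _ ≤ b * b ^ m := Nat.mul_le_mul_right _ (hc m)
        _ = b ^ m * b := by ring
    omega

lemma dg_sum {b : ℕ} (hb : 0 < b) :
    ∀ (i : ℕ) (c : ℕ → ℕ), (∀ j, c j < b) → ∀ m, i < m →
      dg b i (∑ j ∈ Finset.range m, c j * b ^ j) = c i := by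
  intro i
  induction i with
  | zero =>
    intro c hc m hm
    obtain ⟨m', rfl⟩ : ∃ m', m = m' + 1 := ⟨m - 1, by omega⟩
    rw [Finset.sum_range_succ']
    have : ∑ j ∈ Finset.range m', c (j + 1) * b ^ (j + 1)
        = b * ∑ j ∈ Finset.range m', c (j + 1) * b ^ j := by
      rw [Finset.mul_sum]; exact Finset.sum_congr rfl (fun j _ => by ring)
    rw [this]
    simp only [dg, pow_zero, Nat.div_one, mul_one]
    rw [add_comm, Nat.add_mul_mod_self_left, Nat.mod_eq_of_lt (hc 0)]
  | succ i ih =>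
    intro c hc m hm
    obtain ⟨m', rfl⟩ : ∃ m', m = m' + 1 := ⟨m - 1, by omega⟩
    rw [Finset.sum_range_succ']
    have h2 : ∑ j ∈ Finset.range m', c (j + 1) * b ^ (j + 1)
        = b * ∑ j ∈ Finset.range m', c (j + 1) * b ^ j := by
      rw [Finset.mul_sum]; exact Finset.sum_congr rfl (fun j _ => by ring)
    rw [h2]
    have h3 : (b * (∑ j ∈ Finset.range m', c (j + 1) * b ^ j) + c 0) / b
        = ∑ j ∈ Finset.range m', c (j + 1) * b ^ j := by
      rw [add_comm, Nat.add_mul_div_left _ _ hb, Nat.div_eq_of_lt (hc 0), zero_add]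
    have h4 : dg b (i+1) (b * (∑ j ∈ Finset.range m', c (j + 1) * b ^ j) + c 0)
        = dg b i (∑ j ∈ Finset.range m', c (j + 1) * b ^ j) := by
      simp only [dg, pow_succ']
      rw [← Nat.div_div_eq_div_mul, h3]
    simp only [pow_zero, mul_one]
    rw [h4, ih (fun j => c (j+1)) (fun j => hc (j+1)) m' (by omega)]

lemma sum_dg {b : ℕ} (hb : 0 < b) :
    ∀ (m x : ℕ), x < b ^ m → ∑ j ∈ Finset.range m, dg b j x * b ^ j = x := by
  intro m
  induction m with
  | zero =>
    intro x hx
    have : x = 0 := by simpa using hx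
    subst this; simp
  | succ m ih =>
    intro x hx
    rw [Finset.sum_range_succ]
    have hR : x % b ^ m < b ^ m := Nat.mod_lt _ (Nat.pow_pos hb)
    have hdig : ∀ j < m, dg b j x = dg b j (x % b ^ m) := by
      intro j hj
      have hx2 : x = x % b ^ m + b ^ j * (b ^ (m - j - 1) * b * (x / b ^ m)) := by
        have : b ^ j * (b ^ (m - j - 1) * b) = b ^ m := by
          rw [← pow_succ, ← pow_add]; congr 1; omega
        rw [← mul_assoc, this]
        have := Nat.mod_add_div x (b ^ m)
        omega
      have hdvd : (x % b ^ m + b ^ j * (b ^ (m - j - 1) * b * (x / b ^ m))) / b ^ j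
          = x % b ^ m / b ^ j + b ^ (m - j - 1) * b * (x / b ^ m) :=
        Nat.add_mul_div_left _ _ (Nat.pow_pos hb)
      unfold dg
      conv_lhs => rw [hx2]
      rw [hdvd]
      have hT : b ^ (m - j - 1) * b * (x / b ^ m) = b * (b ^ (m - j - 1) * (x / b ^ m)) := by ring
      rw [hT, Nat.add_mul_mod_self_left]
    have hsum : ∑ j ∈ Finset.range m, dg b j x * b ^ j = x % b ^ m := by
      rw [Finset.sum_congr rfl (fun j hj => by
        rw [hdig j (Finset.mem_range.mp hj)])]
      exact ih _ hR
    have hdm : dg b m x = x / b ^ m := by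
      unfold dg
      have : x / b ^ m < b := by
        rw [Nat.div_lt_iff_lt_mul (Nat.pow_pos hb)]
        rw [pow_succ] at hx
        have h5 : b * b ^ m = b ^ m * b := by ring
        omega
      exact Nat.mod_eq_of_lt this
    rw [hsum, hdm, mul_comm]
    exact Nat.mod_add_div x (b ^ m)

lemma ph_lt {b : ℕ} (hb : 0 < b) (m k x : ℕ) : ph b m k x < b ^ m :=
  sum_base_lt hb _ (fun j => fl1_lt hb _ (dg_lt hb j x)) m

lemma dg_ph {b : ℕ} (hb : 0 < b) {i m : ℕ} (him : i < m) (k x : ℕ) :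
    dg b i (ph b m k x) = fl1 b (sg i k) (dg b i x) :=
  dg_sum hb i _ (fun j => fl1_lt hb _ (dg_lt hb j x)) m him

lemma ph_ph {b : ℕ} (hb : 0 < b) {m x : ℕ} (hx : x < b ^ m) (k : ℕ) :
    ph b m k (ph b m k x) = x := by
  have h0 : ph b m k (ph b m k x)
      = ∑ j ∈ Finset.range m, fl1 b (sg j k) (dg b j (ph b m k x)) * b ^ j := rfl
  have h1 : ∀ j ∈ Finset.range m,
      fl1 b (sg j k) (dg b j (ph b m k x)) * b ^ j = dg b j x * b ^ j := by
    intro j hj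
    rw [dg_ph hb (Finset.mem_range.mp hj), fl1_fl1 _ (dg_lt hb j x)]
  rw [h0, Finset.sum_congr rfl h1, sum_dg hb m x hx]

lemma dg_eq_zero_of_ge {b m x : ℕ} (hb : 0 < b) (hx : x < b ^ m) {j : ℕ} (hj : m ≤ j) :
    dg b j x = 0 := by
  unfold dg
  have : x < b ^ j := lt_of_lt_of_le hx (Nat.pow_le_pow_right hb hj)
  rw [Nat.div_eq_of_lt this]; simp

/-- comparison via the highest differing digit -/
lemma cmp_core {b m x y j : ℕ} (hb : 0 < b) (hx : x < b ^ m) (hy : y < b ^ m)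
    (hup : ∀ i, j < i → dg b i x = dg b i y) (hj : dg b j x < dg b j y) : x < y := by
  have hjm : j < m := by
    by_contra h
    rw [dg_eq_zero_of_ge hb hx (by omega), dg_eq_zero_of_ge hb hy (by omega)] at hj
    omega
  have hxe := sum_dg hb m x hx
  have hye := sum_dg hb m y hy
  have hsplit : ∀ z : ℕ, ∑ i ∈ Finset.range m, dg b i z * b ^ i
      = ∑ i ∈ Finset.range (j+1), dg b i z * b ^ i + ∑ i ∈ Finset.Ico (j+1) m, dg b i z * b ^ i := by
    intro z
    rw [Finset.range_eq_Ico, ← Finset.sum_Ico_consecutive _ (Nat.zero_le (j+1)) (by omega : j+1 ≤ m),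
      ← Finset.range_eq_Ico]
  have htail : ∑ i ∈ Finset.Ico (j+1) m, dg b i x * b ^ i
      = ∑ i ∈ Finset.Ico (j+1) m, dg b i y * b ^ i := by
    refine Finset.sum_congr rfl (fun i hi => ?_)
    rw [hup i (by exact (Finset.mem_Ico.mp hi).1)]
  have hlow : ∑ i ∈ Finset.range j, dg b i x * b ^ i < b ^ j :=
    sum_base_lt hb _ (fun i => dg_lt hb i x) j
  have hhead : ∑ i ∈ Finset.range (j+1), dg b i x * b ^ i
      < ∑ i ∈ Finset.range (j+1), dg b i y * b ^ i := by
    rw [Finset.sum_range_succ, Finset.sum_range_succ (fun i => dg b i y * b ^ i)]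
    have h1 : dg b j x * b ^ j + b ^ j ≤ dg b j y * b ^ j := by
      calc dg b j x * b ^ j + b ^ j = (dg b j x + 1) * b ^ j := by ring
        _ ≤ dg b j y * b ^ j := Nat.mul_le_mul_right _ hj
    have h2 : (0:ℕ) ≤ ∑ i ∈ Finset.range j, dg b i y * b ^ i := Nat.zero_le _
    omega
  have ex : ∑ i ∈ Finset.range (j+1), dg b i x * b ^ i + ∑ i ∈ Finset.Ico (j+1) m, dg b i x * b ^ i = x := by
    rw [← hsplit x]; exact hxe
  have ey : ∑ i ∈ Finset.range (j+1), dg b i y * b ^ i + ∑ i ∈ Finset.Ico (j+1) m, dg b i y * b ^ i = y := by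
    rw [← hsplit y]; exact hye
  omega


lemma sg_succ (c k : ℕ) : sg c (k+1) = xor (sg c k) (c.testBit k) := by
  unfold sg
  rw [List.range_succ, List.countP_append]
  rcases Nat.mod_two_eq_zero_or_one ((List.range k).countP (fun i => c.testBit i)) with h2 | h2 <;>
    cases h : c.testBit k <;>
    simp [h, List.countP_cons, h2] <;> omega

/-- highest differing digit -/
def D (b m x y : ℕ) : ℕ := Nat.findGreatest (fun i => dg b i x ≠ dg b i y) m

lemma D_symm (b m x y : ℕ) : D b m x y = D b m y x := by
  unfold D
  congr 1
  funext i
  simp [ne_comm]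

lemma D_spec {b m x y : ℕ} (hb : 0 < b) (hx : x < b ^ m) (hy : y < b ^ m) (hxy : x ≠ y) :
    dg b (D b m x y) x ≠ dg b (D b m x y) y ∧ D b m x y < m ∧
      ∀ i, D b m x y < i → dg b i x = dg b i y := by
  have hex : ∃ i, i < m ∧ dg b i x ≠ dg b i y := by
    by_contra h
    push_neg at h
    apply hxy
    rw [← sum_dg hb m x hx, ← sum_dg hb m y hy]
    exact Finset.sum_congr rfl (fun j hj => by rw [h j (Finset.mem_range.mp hj)])
  obtain ⟨i, him, hi⟩ := hex
  have hP : dg b (D b m x y) x ≠ dg b (D b m x y) y :=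
    Nat.findGreatest_spec (P := fun i => dg b i x ≠ dg b i y) (by omega) hi
  have hle : D b m x y ≤ m := Nat.findGreatest_le m
  have hDm : D b m x y < m := by
    rcases Nat.lt_or_ge (D b m x y) m with h | h
    · exact h
    · exfalso
      have : D b m x y = m := by omega
      rw [this] at hP
      rw [dg_eq_zero_of_ge hb hx le_rfl, dg_eq_zero_of_ge hb hy le_rfl] at hP
      exact hP rfl
  refine ⟨hP, hDm, fun i hi2 => ?_⟩
  rcases Nat.lt_or_ge m i with h | h
  · rw [dg_eq_zero_of_ge hb hx (by omega), dg_eq_zero_of_ge hb hy (by omega)]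
  · by_contra hne
    exact Nat.findGreatest_is_greatest (P := fun i => dg b i x ≠ dg b i y) hi2 h hne

lemma D_lt_pow {b m x y : ℕ} (hb : 0 < b) (hx : x < b ^ m) (hy : y < b ^ m) (hxy : x ≠ y) :
    D b m x y < m := (D_spec hb hx hy hxy).2.1

lemma ph_lt_iff {b m x y : ℕ} (hb : 0 < b) (hx : x < b ^ m) (hy : y < b ^ m) (hxy : x ≠ y)
    (k : ℕ) :
    (ph b m k x < ph b m k y)
      ↔ (if sg (D b m x y) k then dg b (D b m x y) y < dg b (D b m x y) x
          else dg b (D b m x y) x < dg b (D b m x y) y) := by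
  obtain ⟨hne, hDm, hup⟩ := D_spec hb hx hy hxy
  set c := D b m x y with hc
  clear_value c
  clear hc hxy hx hy
  have hupph : ∀ i, c < i → dg b i (ph b m k x) = dg b i (ph b m k y) := by
    intro i hi
    rcases Nat.lt_or_ge i m with h | h
    · rw [dg_ph hb h, dg_ph hb h, hup i hi]
    · rw [dg_eq_zero_of_ge hb (ph_lt hb m k x) h, dg_eq_zero_of_ge hb (ph_lt hb m k y) h]
  have hdx : dg b c (ph b m k x) = fl1 b (sg c k) (dg b c x) := dg_ph hb hDm k x
  have hdy : dg b c (ph b m k y) = fl1 b (sg c k) (dg b c y) := dg_ph hb hDm k y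
  have hdgx := dg_lt hb c x
  have hdgy := dg_lt hb c y
  have hkey : ∀ u v : ℕ, u < b ^ m → v < b ^ m →
      (∀ i, c < i → dg b i u = dg b i v) → dg b c u < dg b c v → u < v :=
    fun u v hu hv h1 h2 => cmp_core hb hu hv h1 h2
  cases hsg : sg c k
  · simp only [hsg, if_neg (Bool.false_ne_true)]
    constructor
    · intro h
      by_contra h2
      have h3 : dg b c y < dg b c x :=
        Nat.lt_of_le_of_ne (Nat.not_lt.mp h2) (fun e => hne e.symm)
      have : ph b m k y < ph b m k x := by
        apply hkey _ _ (ph_lt hb m k y) (ph_lt hb m k x) (fun i hi => (hupph i hi).symm)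
        rw [hdx, hdy, hsg]; simpa [fl1] using h3
      omega
    · intro h
      apply hkey _ _ (ph_lt hb m k x) (ph_lt hb m k y) hupph
      rw [hdx, hdy, hsg]; simpa [fl1] using h
  · simp only [hsg, if_pos rfl]
    constructor
    · intro h
      by_contra h2
      have h3 : dg b c x < dg b c y :=
        Nat.lt_of_le_of_ne (Nat.not_lt.mp h2) hne
      have : ph b m k y < ph b m k x := by
        apply hkey _ _ (ph_lt hb m k y) (ph_lt hb m k x) (fun i hi => (hupph i hi).symm)
        rw [hdx, hdy, hsg]
        simp only [fl1, if_true, ite_true]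
        have hy1 : dg b c y ≤ b - 1 := Nat.le_pred_of_lt hdgy
        have hx1' : dg b c x < b - 1 := lt_of_lt_of_le h3 hy1
        exact Nat.sub_lt_sub_left hx1' h3
      omega
    · intro h
      apply hkey _ _ (ph_lt hb m k x) (ph_lt hb m k y) hupph
      rw [hdx, hdy, hsg]
      simp only [fl1, if_true, ite_true]
      have hx1 : dg b c x ≤ b - 1 := Nat.le_pred_of_lt hdgx
      have hy1' : dg b c y < b - 1 := lt_of_lt_of_le h hx1
      exact Nat.sub_lt_sub_left hy1' h


lemma join_eq_flatten (l : List (List ℕ)) : l.flatten = l.flatten := rfl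

lemma pair_sublist_of_mem {u v : ℕ} : ∀ {l : List ℕ}, u ∈ l → v ∈ l → u ≠ v →
    [u, v].Sublist l ∨ [v, u].Sublist l := by
  intro l
  induction l with
  | nil => intro hu; simp at hu
  | cons a t ih =>
    intro hu hv huv
    by_cases hau : a = u
    · subst hau
      have hv' : v ∈ t := by
        rcases List.mem_cons.mp hv with h | h
        · exact absurd h.symm huv
        · exact h
      exact Or.inl (List.Sublist.cons₂ _ (List.singleton_sublist.mpr hv'))
    · by_cases hav : a = v
      · subst hav
        have hu' : u ∈ t := by
          rcases List.mem_cons.mp hu with h | h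
          · exact absurd h (fun e => hau e.symm)
          · exact h
        exact Or.inr (List.Sublist.cons₂ _ (List.singleton_sublist.mpr hu'))
      · have hu' : u ∈ t := by
          rcases List.mem_cons.mp hu with h | h
          · exact absurd h (fun e => hau e.symm)
          · exact h
        have hv' : v ∈ t := by
          rcases List.mem_cons.mp hv with h | h
          · exact absurd h (fun e => hav e.symm)
          · exact h
        rcases ih hu' hv' huv with h | h
        · exact Or.inl (h.cons a)
        · exact Or.inr (h.cons a)

lemma count_join_eq (x : ℕ) : ∀ (qs : List (List ℕ)), (∀ q ∈ qs, q.count x = 1) →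
    qs.flatten.count x = qs.length := by
  intro qs
  induction qs with
  | nil => intro _; simp
  | cons q t ih =>
    intro h
    rw [List.flatten_cons, List.count_append, h q (List.mem_cons_self),
      ih (fun q' hq' => h q' (List.mem_cons_of_mem _ hq'))]
    simp [add_comm]

lemma forced : ∀ (qs Bs : List (List ℕ)) (A : Finset ℕ),
    qs.length = Bs.length →
    (∀ q ∈ qs, ∀ x ∈ q, x ∈ A) →
    (∀ q ∈ qs, ∀ x ∈ A, q.count x = 1) →
    (∀ B ∈ Bs, ∀ x ∈ A, B.count x = 1) →
    qs.flatten.Sublist Bs.flatten →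
    List.Forall₂ List.Sublist qs Bs := by
  intro qs
  induction qs with
  | nil =>
    intro Bs A hlen _ _ _ _
    cases Bs with
    | nil => exact List.Forall₂.nil
    | cons B Bs => simp at hlen
  | cons q qs ih =>
    intro Bs A hlen hmem hcq hcB hsub
    cases Bs with
    | nil => simp at hlen
    | cons B Bs =>
      rw [List.flatten_cons, List.flatten_cons] at hsub
      obtain ⟨u, v, huv, hu, hv⟩ := List.sublist_append_iff.mp hsub
      have hlen' : qs.length = Bs.length := by simpa using hlen
      have hcu : ∀ x ∈ A, u.count x = 1 := by
        intro x hx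
        have h1 : (q ++ qs.flatten).count x = 1 + qs.length := by
          rw [List.count_append, hcq q (List.mem_cons_self) x hx,
            count_join_eq x qs (fun q' hq' => hcq q' (List.mem_cons_of_mem _ hq') x hx)]
        have h2 : (u ++ v).count x = u.count x + v.count x := List.count_append
        have h3 : v.count x ≤ Bs.length := by
          have := hv.count_le x
          rwa [count_join_eq x Bs (fun B' hB' => hcB B' (List.mem_cons_of_mem _ hB') x hx)] at this
        have h4 : u.count x ≤ 1 := by
          have := hu.count_le x
          rwa [hcB B (List.mem_cons_self) x hx] at this
        rw [← huv] at h2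
        omega
      have hueq : u = q := by
        have hpu : u <+: q ++ qs.flatten := ⟨v, huv.symm⟩
        have hpq : q <+: q ++ qs.flatten := List.prefix_append _ _
        rcases List.prefix_or_prefix_of_prefix hpu hpq with h | h
        · obtain ⟨w, hw⟩ := h
          cases w with
          | nil => simpa using hw
          | cons y w' =>
            exfalso
            have hyq : y ∈ q := by rw [← hw]; simp
            have hyA : y ∈ A := hmem q (List.mem_cons_self) y hyq
            have h1 : q.count y = 1 := hcq q (List.mem_cons_self) y hyA
            have h2 : u.count y = 1 := hcu y hyA
            rw [← hw, List.count_append] at h1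
            have : (y :: w').count y ≥ 1 := by
              simp [List.count_cons]
            omega
        · obtain ⟨w, hw⟩ := h
          cases w with
          | nil => rw [← hw]; simp
          | cons y w' =>
            exfalso
            have hwv : (y :: w') ++ v = qs.flatten := by
              have : q ++ ((y :: w') ++ v) = q ++ qs.flatten := by
                rw [← List.append_assoc, hw, ← huv]
              exact List.append_cancel_left this
            have hyj : y ∈ qs.flatten := by rw [← hwv]; simp
            have hyA : y ∈ A := by
              obtain ⟨l', hl', hyl'⟩ := List.mem_flatten.mp hyj
              exact hmem l' (List.mem_cons_of_mem _ hl') y hyl'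
            have h2 : u.count y = 1 := hcu y hyA
            have h1 : q.count y = 1 := hcq q (List.mem_cons_self) y hyA
            rw [← hw, List.count_append] at h2
            have : (y :: w').count y ≥ 1 := by simp [List.count_cons]
            omega
      subst hueq
      have hveq : v = qs.flatten := List.append_cancel_left huv.symm
      subst hveq
      exact List.Forall₂.cons hu
        (ih Bs A hlen' (fun q' hq' => hmem q' (List.mem_cons_of_mem _ hq'))
          (fun q' hq' => hcq q' (List.mem_cons_of_mem _ hq'))
          (fun B' hB' => hcB B' (List.mem_cons_of_mem _ hB')) hv)

end StmtAux

open StmtAux in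
theorem stmt1 (r s : ℕ) (hr : 1 ≤ r) (hs : 1 ≤ s) :
    ∃ F, IsFormation ((r - 1) ^ (2 ^ (s - 1))) s F ∧
      ∀ G, IsBinaryFormation r s G → ¬ G.Sublist F := by
  classical
  set b := r - 1 with hbdef
  set m := 2 ^ (s - 1) with hmdef
  set n := b ^ m with hndef
  have hm0 : m ≠ 0 := by
    have : 0 < m := by rw [hmdef]; exact Nat.pow_pos (by norm_num)
    omega
  have hbn : n ≠ 0 → 0 < b := by
    intro hn
    by_contra hb
    have : b = 0 := by omega
    rw [hndef, this, zero_pow hm0] at hn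
    exact hn rfl
  set Bs : List (List ℕ) := (List.range s).map (fun k => (List.range n).map (ph b m k)) with hBs
  refine ⟨Bs.flatten, ?_, ?_⟩
  · -- IsFormation
    refine ⟨Finset.range n, Bs, Finset.card_range n, by simp [hBs], ?_, rfl⟩
    intro p hp
    obtain ⟨k, hk, rfl⟩ := List.mem_map.mp hp
    by_cases hn : n = 0
    · rw [hn]; constructor <;> simp
    · have hb : 0 < b := hbn hn
      constructor
      · exact (List.nodup_range (n := n)).map_on (fun x hx y hy he => by
          have hx' : x < n := List.mem_range.mp hx
          have hy' : y < n := List.mem_range.mp hy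
          rw [← ph_ph hb hx' k, he, ph_ph hb hy' k])
      · ext z
        simp only [List.mem_toFinset, List.mem_map, List.mem_range, Finset.mem_range]
        constructor
        · rintro ⟨i, hi, rfl⟩; exact ph_lt hb m k i
        · intro hz; exact ⟨ph b m k z, ph_lt hb m k z, ph_ph hb hz k⟩
  · -- avoidance
    rintro G ⟨A, p, ps, hcard, hnd, htf, hlen, hbin, rfl⟩ hsub
    rw [join_eq_flatten, join_eq_flatten] at hsub
    -- letters of A are in ps.flatten
    have hAmem : ∀ x ∈ A, x ∈ ps.flatten := by
      intro x hx
      rw [← htf, List.mem_toFinset] at hx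
      have hps : ps ≠ [] := by intro h; rw [h] at hlen; simp at hlen; omega
      refine List.mem_flatten.mpr ⟨ps.head hps, List.head_mem hps, ?_⟩
      rcases hbin _ (List.head_mem hps) with h | h
      · rw [h]; exact hx
      · rw [h]; exact List.mem_reverse.mpr hx
    have hAlt : ∀ x ∈ A, x < n := by
      intro x hx
      have : x ∈ Bs.flatten := hsub.subset (hAmem x hx)
      obtain ⟨B, hB, hxB⟩ := List.mem_flatten.mp this
      obtain ⟨k, hk, rfl⟩ := List.mem_map.mp hB
      obtain ⟨i, hi, rfl⟩ := List.mem_map.mp hxB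
      have hi' : i < n := List.mem_range.mp hi
      exact ph_lt (hbn (by omega)) m k i
    have hrn : r ≤ n := by
      rw [← hcard, ← Finset.card_range n]
      exact Finset.card_le_card (fun x hx => Finset.mem_range.mpr (hAlt x hx))
    have hb : 0 < b := hbn (by omega)
    have hr2 : 2 ≤ r := by omega
    -- forced alignment
    have HF : List.Forall₂ List.Sublist ps Bs := by
      apply forced ps Bs A (by simp [hBs, hlen])
      · intro q hq x hxq
        rcases hbin q hq with rfl | rfl
        · rw [← htf, List.mem_toFinset]; exact hxq
        · rw [← htf, List.mem_toFinset]; exact List.mem_reverse.mp hxq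
      · intro q hq x hx
        have hxp : x ∈ p := by rw [← htf, List.mem_toFinset] at hx; exact hx
        rcases hbin q hq with rfl | rfl
        · exact List.count_eq_one_of_mem hnd hxp
        · exact List.count_eq_one_of_mem (List.nodup_reverse.mpr hnd) (List.mem_reverse.mpr hxp)
      · intro B hB x hx
        obtain ⟨k, hk, rfl⟩ := List.mem_map.mp hB
        have hxn := hAlt x hx
        have hnodup : (List.map (ph b m k) (List.range n)).Nodup :=
          (List.nodup_range (n := n)).map_on (fun a ha y hy he => by
            have ha' : a < n := List.mem_range.mp ha
            have hy' : y < n := List.mem_range.mp hy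
            rw [← ph_ph hb ha' k, he, ph_ph hb hy' k])
        refine List.count_eq_one_of_mem hnodup ?_
        exact List.mem_map.mpr ⟨ph b m k x, List.mem_range.mpr (ph_lt hb m k x), ph_ph hb hxn k⟩
      · exact hsub
    have hpslen : ps.length = s := hlen
    have hBslen : Bs.length = s := by simp [hBs]
    obtain ⟨-, hidx⟩ := List.forall₂_iff_get.mp HF
    -- block sublists
    have hblk : ∀ k (hk : k < s), (ps[k]'(by omega)).Sublist ((List.range n).map (ph b m k)) := by
      intro k hk
      have h₁ : k < ps.length := by omega
      have h₂ : k < Bs.length := by omega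
      have := hidx k h₁ h₂
      rw [List.get_eq_getElem, List.get_eq_getElem] at this
      have hBk : Bs[k]'h₂ = (List.range n).map (ph b m k) := by
        simp [hBs, List.getElem_map, List.getElem_range]
      rwa [hBk] at this
    -- order extraction
    have ordlem : ∀ k u v, u < n → v < n → [u, v].Sublist ((List.range n).map (ph b m k)) →
        ph b m k u < ph b m k v := by
      intro k u v hu hv hsb
      obtain ⟨l', hl', hmap⟩ := List.sublist_map_iff.mp hsb
      match l', hmap with
      | [a1, a2], hmap =>
        simp only [List.map_cons, List.map_nil, List.cons.injEq, and_true] at hmap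
        obtain ⟨h1, h2⟩ := hmap
        have hpw := (List.pairwise_lt_range (n := n)).sublist hl'
        have h12 : a1 < a2 := by
          rw [List.pairwise_cons] at hpw
          exact hpw.1 a2 (by simp)
        have ha1 : a1 < n := List.mem_range.mp (hl'.subset (by simp))
        have ha2 : a2 < n := List.mem_range.mp (hl'.subset (by simp))
        have e1 : ph b m k u = a1 := by rw [h1, ph_ph hb ha1 k]
        have e2 : ph b m k v = a2 := by rw [h2, ph_ph hb ha2 k]
        rw [e1, e2]; exact h12
    -- key lemma for oriented pairs
    have key : ∀ u v, u ∈ A → v ∈ A → u ≠ v → [u, v].Sublist p → ∀ i, i + 1 < s →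
        (D b m u v).testBit i
          = xor (decide (ps.getD (i+1) [] = p)) (decide (ps.getD i [] = p)) := by
      intro u v hu hv hne hp i his
      have hun := hAlt u hu
      have hvn := hAlt v hv
      obtain ⟨hneD, hDm, -⟩ := D_spec hb hun hvn hne
      have horder : ∀ k, k < s → ((ph b m k u < ph b m k v) ↔ ps.getD k [] = p) := by
        intro k hk
        have hklen : k < ps.length := by omega
        have hgetD : ps.getD k [] = ps[k]'hklen := List.getD_eq_getElem ps [] hklen
        rcases hbin _ (List.getElem_mem hklen) with hqk | hqk
        · rw [hgetD, hqk]
          simp only [iff_true]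
          exact ordlem k u v hun hvn (hp.trans (hqk ▸ hblk k hk))
        · rw [hgetD, hqk]
          have hvu : ph b m k v < ph b m k u := by
            apply ordlem k v u hvn hun
            have : [v, u].Sublist p.reverse := by
              have := hp.reverse
              simpa using this
            exact this.trans (hqk ▸ hblk k hk)
          constructor
          · intro h; exact absurd hvu (by omega)
          · intro h
            exfalso
            have hpr : [u, v].Sublist p.reverse := by rw [h]; exact hp
            have hpp : p.reverse.Sublist ((List.range n).map (ph b m k)) := hqk ▸ hblk k hk
            have h1 : ph b m k u < ph b m k v := ordlem k u v hun hvn (hpr.trans hpp)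
            omega
      -- boolean form
      have hbool : ∀ k, k < s →
          decide (ps.getD k [] = p)
            = xor (sg (D b m u v) k) (decide (dg b (D b m u v) u < dg b (D b m u v) v)) := by
        intro k hk
        have h1 := ph_lt_iff hb hun hvn hne k
        have h2 := horder k hk
        cases hsgk : sg (D b m u v) k
        · rw [hsgk] at h1
          simp only [Bool.false_eq_true, if_false] at h1
          rw [Bool.false_xor]
          exact decide_eq_decide.mpr (h2.symm.trans h1)
        · rw [hsgk] at h1
          simp only [if_true] at h1
          rw [Bool.true_xor]
          have h3 : ps.getD k [] = p ↔ ¬ (dg b (D b m u v) u < dg b (D b m u v) v) := by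
            rw [← h2, h1]
            constructor
            · intro hlt; omega
            · intro hnlt
              have : dg b (D b m u v) u ≠ dg b (D b m u v) v := hneD
              omega
          rw [decide_eq_decide.mpr h3]
          exact decide_not
      have e1 := hbool i (by omega)
      have e2 := hbool (i+1) (by omega)
      have hsg := sg_succ (D b m u v) i
      rw [e1, e2, hsg]
      cases sg (D b m u v) i <;> cases (D b m u v).testBit i <;>
        cases decide (dg b (D b m u v) u < dg b (D b m u v) v) <;> rfl
    -- unoriented version
    have key2 : ∀ u v, u ∈ A → v ∈ A → u ≠ v → ∀ i, i + 1 < s →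
        (D b m u v).testBit i
          = xor (decide (ps.getD (i+1) [] = p)) (decide (ps.getD i [] = p)) := by
      intro u v hu hv hne i his
      have hup : u ∈ p := by rw [← htf, List.mem_toFinset] at hu; exact hu
      have hvp : v ∈ p := by rw [← htf, List.mem_toFinset] at hv; exact hv
      rcases pair_sublist_of_mem hup hvp hne with h | h
      · exact key u v hu hv hne h i his
      · rw [D_symm]
        exact key v u hv hu hne.symm h i his
    -- D is constant over pairs
    obtain ⟨u₀, hu₀, v₀, hv₀, hne₀⟩ := Finset.one_lt_card.mp (by omega : 1 < A.card)
    have keyD : ∀ u v, u ∈ A → v ∈ A → u ≠ v → D b m u v = D b m u₀ v₀ := by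
      intro u v hu hv hne
      apply Nat.eq_of_testBit_eq
      intro i
      by_cases hi : i + 1 < s
      · rw [key2 u v hu hv hne i hi, key2 u₀ v₀ hu₀ hv₀ hne₀ i hi]
      · have hmle : m ≤ 2 ^ i := by
          rw [hmdef]
          exact Nat.pow_le_pow_right (by norm_num) (by omega)
        have hD1 : D b m u v < 2 ^ i :=
          lt_of_lt_of_le (D_lt_pow hb (hAlt u hu) (hAlt v hv) hne) hmle
        have hD2 : D b m u₀ v₀ < 2 ^ i :=
          lt_of_lt_of_le (D_lt_pow hb (hAlt u₀ hu₀) (hAlt v₀ hv₀) hne₀) hmle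
        rw [Nat.testBit_lt_two_pow hD1, Nat.testBit_lt_two_pow hD2]
    -- pigeonhole
    have hinj : Set.InjOn (dg b (D b m u₀ v₀)) ↑A := by
      intro u hu v hv he
      by_contra hne
      have hD := keyD u v hu hv hne
      have := (D_spec hb (hAlt u hu) (hAlt v hv) hne).1
      rw [hD] at this
      exact this he
    have hle : A.card ≤ (Finset.range b).card :=
      Finset.card_le_card_of_injOn (dg b (D b m u₀ v₀))
        (fun a _ => Finset.mem_range.mpr (dg_lt hb _ a)) hinj
    rw [hcard, Finset.card_range] at hle
    omega
end

section
/- If u is a sequence beginning with letter a, then fw(au) = fw(u) + 1, where au denotes u with an additional copy of a prepended. -/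
-- auxiliary
def Sset (v : List ℕ) : Set ℕ := {s | ∃ r, ∀ F, IsFormation r s F → Contains F v}

lemma fw_eq (v : List ℕ) : fw v = sInf (Sset v) := rfl

lemma contains_mono {F F' v : List ℕ} (h : F.Sublist F') (hc : Contains F v) :
    Contains F' v := by
  obtain ⟨f, hf, hs⟩ := hc
  exact ⟨f, hf, hs.trans h⟩

lemma Sset_succ {v : List ℕ} {k : ℕ} (hk : k ∈ Sset v) : k + 1 ∈ Sset v := by
  obtain ⟨r, hr⟩ := hk
  refine ⟨r, fun F hF => ?_⟩
  obtain ⟨A, ps, hA, hlen, hp, hFj⟩ := hF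
  have h1 : IsFormation r k (ps.take k).flatten :=
    ⟨A, ps.take k, hA, by simp [hlen], fun p hp' => hp p (List.mem_of_mem_take hp'), rfl⟩
  have h2 : (ps.take k).flatten.Sublist F := by
    have : ps.flatten = (ps.take k).flatten ++ (ps.drop k).flatten := by
      rw [← List.flatten_append, List.take_append_drop]
    rw [hFj, this]
    exact List.sublist_append_left _ _
  exact contains_mono h2 (hr _ h1)

lemma Sset_mono {v : List ℕ} {k m : ℕ} (hk : k ∈ Sset v) (hkm : k ≤ m) : m ∈ Sset v := by
  induction m with
  | zero => simpa [Nat.le_zero.mp hkm] using hk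
  | succ n ih =>
    rcases Nat.lt_or_ge k (n+1) with h1 | h1
    · exact Sset_succ (ih (Nat.lt_succ_iff.mp h1))
    · simpa [Nat.le_antisymm hkm h1] using hk

lemma forall₂_sublist_join : ∀ {l : List ℕ} {ps : List (List ℕ)},
    List.Forall₂ (· ∈ ·) l ps → l.Sublist ps.flatten := by
  intro l ps h
  induction h with
  | nil => simp
  | @cons x p l' ps' hx _ ih =>
    simpa using (List.singleton_sublist.mpr hx).append ih

lemma exists_inj (S A : Finset ℕ) (h : S.card = A.card) :
    ∃ f : ℕ → ℕ, Function.Injective f ∧ ∀ x ∈ S, f x ∈ A := by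
  classical
  let e := Finset.equivOfCardEq h
  set M := A.sup id + 1 with hM
  have hlt : ∀ b ∈ A, b < M := fun b hb => Nat.lt_succ_of_le (Finset.le_sup (f := id) hb)
  refine ⟨fun x => if hx : x ∈ S then (e ⟨x, hx⟩ : ℕ) else x + M, ?_, ?_⟩
  · intro x y hxy
    by_cases hx : x ∈ S <;> by_cases hy : y ∈ S <;> simp [hx, hy] at hxy
    · exact hxy
    · have := hlt _ (e ⟨x, hx⟩).2; omega
    · have := hlt _ (e ⟨y, hy⟩).2; omega
    · omega
  · intro x hx
    simp only [dif_pos hx]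
    exact (e ⟨x, hx⟩).2

lemma length_mem_Sset (v : List ℕ) : v.length ∈ Sset v := by
  classical
  refine ⟨v.toFinset.card, fun F hF => ?_⟩
  obtain ⟨A, ps, hA, hlen, hp, hFj⟩ := hF
  obtain ⟨f, hf, hfA⟩ := exists_inj v.toFinset A (by rw [hA])
  refine ⟨f, hf, ?_⟩
  rw [hFj]
  apply forall₂_sublist_join
  rw [List.forall₂_iff_get]
  refine ⟨by simp [hlen], fun i h₁ h₂ => ?_⟩
  have hmem : f (v.get ⟨i, by simpa using h₁⟩) ∈ A :=
    hfA _ (List.mem_toFinset.mpr (v.get_mem _))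
  have hgA := (hp _ (ps.get_mem ⟨i, h₂⟩)).2
  have : f (v.get ⟨i, by simpa using h₁⟩) ∈ ps.get ⟨i, h₂⟩ := by
    rw [← List.mem_toFinset, hgA]; exact hmem
  simpa using this

lemma fw_mem_Sset (v : List ℕ) : fw v ∈ Sset v :=
  Nat.sInf_mem ⟨v.length, length_mem_Sset v⟩

lemma fw_pos {v : List ℕ} (hv : v ≠ []) : 1 ≤ fw v := by
  by_contra hc
  have h0 : fw v = 0 := by omega
  have hm := fw_mem_Sset v
  rw [h0] at hm
  obtain ⟨r, hr⟩ := hm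
  have hform : IsFormation r 0 [] :=
    ⟨Finset.range r, [], by simp, rfl, by simp, rfl⟩
  obtain ⟨f, hf, hs⟩ := hr [] hform
  have := List.sublist_nil.mp hs
  cases v <;> simp_all

theorem stmt4 (a : ℕ) (u : List ℕ) (h : u.head? = some a) :
    fw (a :: u) = fw u + 1 := by
  classical
  obtain ⟨u', rfl⟩ : ∃ u', u = a :: u' := by
    cases u with
    | nil => simp at h
    | cons b t => exact ⟨t, by simpa using (by simpa using h : b = a) ▸ rfl⟩
  set u := a :: u' with hu
  -- upper bound: fw u + 1 ∈ Sset (a :: u)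
  have hub : fw u + 1 ∈ Sset (a :: u) := by
    obtain ⟨r, hr⟩ := fw_mem_Sset u
    refine ⟨r, fun F hF => ?_⟩
    obtain ⟨A, ps, hA, hlen, hp, hFj⟩ := hF
    cases ps with
    | nil => simp at hlen
    | cons q rest =>
      have hG : IsFormation r (fw u) rest.flatten :=
        ⟨A, rest, hA, by simpa using hlen, fun p hp' => hp p (List.mem_cons_of_mem _ hp'), rfl⟩
      obtain ⟨f, hf, hs⟩ := hr _ hG
      have hfa : f a ∈ rest.flatten := hs.subset (by simp [hu])
      obtain ⟨l, hl, hfal⟩ := List.mem_flatten.mp hfa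
      have hfaA : f a ∈ A := by
        rw [← (hp l (List.mem_cons_of_mem _ hl)).2]; exact List.mem_toFinset.mpr hfal
      have hfaq : f a ∈ q := by
        rw [← List.mem_toFinset, (hp q List.mem_cons_self).2]; exact hfaA
      refine ⟨f, hf, ?_⟩
      have : ((a :: u).map f) = [f a] ++ u.map f := by simp
      rw [this, hFj]
      simpa using (List.singleton_sublist.mpr hfaq).append hs
  -- lower bound: fw u ∉ Sset (a :: u)
  have hlb : fw u ∉ Sset (a :: u) := by
    intro hmem
    obtain ⟨r, hr⟩ := hmem
    have hpos : 1 ≤ fw u := fw_pos (by simp [hu])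
    have hfwu : fw u = sInf (Sset u) := rfl
    have hnot : fw u - 1 ∉ Sset u := Nat.notMem_of_lt_sInf (by omega)
    simp only [Sset, Set.mem_setOf_eq, not_exists, not_forall] at hnot
    obtain ⟨G, hGform, hGnc⟩ := hnot r
    obtain ⟨A, ps, hA, hlen, hp, hGj⟩ := hGform
    set p := A.sort (· ≤ ·) with hpdef
    have hform : IsFormation r (fw u) (p ++ G) := by
      refine ⟨A, p :: ps, hA, by simp [hlen]; omega, ?_, by simp [hGj]⟩
      intro q hq
      rcases List.mem_cons.mp hq with rfl | hq'
      · exact ⟨Finset.sort_nodup _ _, Finset.sort_toFinset _ _⟩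
      · exact hp q hq'
    obtain ⟨f, hf, hs⟩ := hr _ hform
    have hmap : (a :: u).map f = f a :: f a :: u'.map f := by simp [hu]
    rw [hmap] at hs
    obtain ⟨l₁, l₂, heq, hl₁, hl₂⟩ := List.sublist_append_iff.mp hs
    have hcount : p.count (f a) ≤ 1 := List.nodup_iff_count_le_one.mp (Finset.sort_nodup _ _) _
    apply hGnc
    match l₁, heq with
    | [], heq =>
      refine ⟨f, hf, ?_⟩
      have h2 : l₂ = f a :: f a :: List.map f u' := by simpa using heq.symm
      have h3 : (List.map f u).Sublist (f a :: f a :: List.map f u') := by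
        simp only [hu, List.map_cons]
        exact (List.sublist_cons_self _ _).cons₂ _
      exact h3.trans (h2 ▸ hl₂)
    | [x], heq =>
      refine ⟨f, hf, ?_⟩
      have h2 : l₂ = f a :: u'.map f := by
        have := heq; simp at this; exact this.2.symm
      rw [h2] at hl₂
      simpa [hu] using hl₂
    | x :: y :: t, heq =>
      exfalso
      have hx : x = f a := by simp at heq; tauto
      have hy : y = f a := by simp at heq; tauto
      have h2 : List.count (f a) (x :: y :: t) ≥ 2 := by
        subst hx hy; simp [List.count_cons]
      have := hl₁.count_le (f a)
      omega
  -- conclude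
  have hne : (Sset (a :: u)).Nonempty := ⟨_, hub⟩
  have hle : sInf (Sset (a :: u)) ≤ fw u + 1 := Nat.sInf_le hub
  have hge : fw u + 1 ≤ sInf (Sset (a :: u)) := by
    by_contra hc
    push_neg at hc
    have hmem := Nat.sInf_mem hne
    exact hlb (Sset_mono hmem (by omega))
  have : fw (a :: u) = sInf (Sset (a :: u)) := rfl
  omega
end

section
/- If u is a sequence with exactly two distinct letters and length t ≥ 2, then fw(u) = t - 1. -/
open List in
lemma join_eq_flatten (L : List (List ℕ)) : L.flatten = L.flatten := rfl

open List

section helpers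
variable {x y : ℕ}

lemma snoc_sub {l m : List ℕ} {e e' : ℕ} (h : l ++ [e] <+ m ++ [e']) :
    l ++ [e] <+ m ∨ (e = e' ∧ l <+ m) := by
  have h' : e :: l.reverse <+ e' :: m.reverse := by
    simpa using h.reverse
  cases h' with
  | cons _ h2 =>
    left
    have : (l ++ [e]).reverse <+ m.reverse := by simpa using h2
    exact List.reverse_sublist.mp (by simpa using this)
  | cons_cons _ h2 =>
    right
    exact ⟨rfl, List.reverse_sublist.mp h2⟩

lemma snoc_sub_ne {l m : List ℕ} {e e' : ℕ} (hne : e ≠ e') (h : l ++ [e] <+ m ++ [e']) :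
    l ++ [e] <+ m := by
  rcases snoc_sub h with h | ⟨rfl, _⟩
  · exact h
  · exact absurd rfl hne

lemma snoc_sub_le {l m : List ℕ} {e e' : ℕ} (h : l ++ [e] <+ m ++ [e']) : l <+ m := by
  rcases snoc_sub h with h | ⟨_, h⟩
  · exact ((List.sublist_append_left l [e]).trans h)
  · exact h

lemma tail_of_append_singleton {v' : List ℕ} {c : ℕ} (h : v' ≠ []) :
    (v' ++ [c]).tail = v'.tail ++ [c] := by
  cases v' with
  | nil => exact absurd rfl h
  | cons d v'' => rfl

lemma Qplus (hxy : x ≠ y) :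
    ∀ v : List ℕ, (∀ c ∈ v, c = x ∨ c = y) → v ≠ [] →
      ¬ v <+ (v.tail.map (fun c => [c, if c = x then y else x])).flatten := by
  intro v
  induction v using List.reverseRecOn with
  | nil => intro _ h; exact absurd rfl h
  | append_singleton v' c ih =>
    intro hmem _ hsub
    rcases eq_or_ne v' [] with rfl | hne
    · simp at hsub
    · rw [tail_of_append_singleton hne, map_append, flatten_append] at hsub
      have hco : c ≠ (if c = x then y else x) := by
        rcases hmem c (by simp) with rfl | rfl
        · rw [if_pos rfl]; exact hxy
        · rw [if_neg (Ne.symm hxy)]; exact Ne.symm hxy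
      have hsub2 : v' ++ [c] <+ (v'.tail.map (fun c => [c, if c = x then y else x])).flatten ++ [c] := by
        apply snoc_sub_ne hco
        simpa [List.append_assoc] using hsub
      rcases snoc_sub hsub2 with h | ⟨_, h⟩
      · exact ih (fun d hd => hmem d (by simp [hd])) hne ((List.sublist_append_left v' [c]).trans h)
      · exact ih (fun d hd => hmem d (by simp [hd])) hne h

lemma Rminus (hxy : x ≠ y) :
    ∀ (w : List ℕ) (c : ℕ), (∀ d ∈ w, d = x ∨ d = y) →
      ¬ (w ++ [c]) <+ (w.tail.map (fun d => [if d = x then y else x, d])).flatten := by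
  intro w
  induction w using List.reverseRecOn with
  | nil => intro c _ hsub; simp at hsub
  | append_singleton w' e ih =>
    intro c hmem hsub
    rcases eq_or_ne w' [] with rfl | hne
    · simp at hsub
    · rw [tail_of_append_singleton hne, map_append, flatten_append] at hsub
      have heo : e ≠ (if e = x then y else x) := by
        rcases hmem e (by simp) with rfl | rfl
        · rw [if_pos rfl]; exact hxy
        · rw [if_neg (Ne.symm hxy)]; exact Ne.symm hxy
      set W' := (w'.tail.map (fun d => [if d = x then y else x, d])).flatten with hW'
      have hsub2 : (w' ++ [e]) ++ [c] <+ (W' ++ [if e = x then y else x]) ++ [e] := by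
        simpa [List.append_assoc] using hsub
      have ihe : ¬ (w' ++ [e]) <+ W' := ih e (fun d hd => hmem d (by simp [hd]))
      rcases snoc_sub hsub2 with h | ⟨_, h⟩
      · rcases snoc_sub h with h2 | ⟨_, h2⟩
        · exact ihe ((List.sublist_append_left (w' ++ [e]) [c]).trans h2)
        · exact ihe h2
      · exact ihe (snoc_sub_ne heo h)

lemma replicate_sublist_flatten (z : ℕ) :
    ∀ (bs : List (List ℕ)), (∀ B ∈ bs, z ∈ B) → List.replicate bs.length z <+ bs.flatten := by
  intro bs
  induction bs with
  | nil => simp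
  | cons B bs ih =>
    intro h
    have : List.replicate (B :: bs).length z = [z] ++ List.replicate bs.length z := by
      simp [List.replicate_succ]
    rw [this]
    exact List.Sublist.append (List.singleton_sublist.mpr (h B (by simp)))
      (ih (fun B' hB' => h B' (by simp [hB'])))

lemma pair_list_eq {l : List ℕ} (hp : l.Pairwise (· < ·)) (hx : x ∈ l) (hy : y ∈ l)
    (hsub : ∀ z ∈ l, z = x ∨ z = y) (hlt : x < y) : l = [x, y] := by
  match l, hp, hx, hy, hsub with
  | [], _, hx, _, _ => exact absurd hx (by simp)
  | [a], _, hx, hy, _ =>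
    simp at hx hy; omega
  | a :: b :: d :: rest, hp, _, _, hsub =>
    have hab : a < b := by
      have := List.pairwise_cons.mp hp
      exact this.1 b (by simp)
    have hbd : b < d := by
      have := (List.pairwise_cons.mp hp).2
      exact (List.pairwise_cons.mp this).1 d (by simp)
    rcases hsub a (by simp) with rfl | rfl <;>
      rcases hsub b (by simp) with rfl | rfl <;>
      rcases hsub d (by simp) with rfl | rfl <;> omega
  | [a, b], hp, hx, hy, hsub =>
    have hab : a < b := by
      have := List.pairwise_cons.mp hp
      exact this.1 b (by simp)
    simp only [List.mem_cons, List.mem_singleton] at hx hy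
    rcases hsub a (by simp) with rfl | rfl <;> rcases hsub b (by simp) with rfl | rfl <;>
      first
        | rfl
        | omega

lemma filter_pair {r : ℕ} (hxy : x ≠ y) (hx : x ∈ Ic r) (hy : y ∈ Ic r) :
    (Ic r).filter (fun c => c = x || c = y) = if x < y then [x, y] else [y, x] := by
  have hp : ((Ic r).filter (fun c => c = x || c = y)).Pairwise (· < ·) :=
    (List.pairwise_lt_range' (s := 1) (n := r)).sublist List.filter_sublist
  have hxm : x ∈ (Ic r).filter (fun c => c = x || c = y) := by
    simp [List.mem_filter, hx]
  have hym : y ∈ (Ic r).filter (fun c => c = x || c = y) := by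
    simp [List.mem_filter, hy]
  have hall : ∀ z ∈ (Ic r).filter (fun c => c = x || c = y), z = x ∨ z = y := by
    intro z hz
    have := (List.mem_filter.mp hz).2
    simpa using this
  rcases lt_or_gt_of_ne hxy with hlt | hgt
  · rw [if_pos hlt]
    exact pair_list_eq hp hxm hym hall hlt
  · rw [if_neg (by omega)]
    exact pair_list_eq hp hym hxm (fun z hz => (hall z hz).symm) hgt

lemma filter_flatten' (p : ℕ → Bool) :
    ∀ (L : List (List ℕ)), (L.flatten).filter p = (L.map (List.filter p)).flatten := by
  intro L
  induction L with
  | nil => rfl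
  | cons B L ih => simp [List.filter_append, ih]

lemma flatten_map_prefix {g : ℕ → List ℕ} {l₁ l₂ : List ℕ} (h : l₁ <+: l₂) :
    (l₁.map g).flatten <+ (l₂.map g).flatten := by
  obtain ⟨ts, rfl⟩ := h
  rw [map_append, flatten_append]
  exact List.sublist_append_left _ _

lemma tail_dropLast' (l : List ℕ) : l.tail.dropLast = l.dropLast.tail := by
  rcases l with _ | ⟨a, _ | ⟨b, l⟩⟩ <;> simp

def pswap (a b x y : ℕ) : ℕ → ℕ := fun n => Equiv.swap (Equiv.swap a x b) y (Equiv.swap a x n)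

lemma pswap_inj (a b x y : ℕ) : Function.Injective (pswap a b x y) :=
  (Equiv.injective _).comp (Equiv.injective _)

lemma pswap_a {a b x y : ℕ} (hab : a ≠ b) (hxy : x ≠ y) : pswap a b x y a = x := by
  unfold pswap
  rw [Equiv.swap_apply_left]
  have h1 : x ≠ Equiv.swap a x b := by
    intro h
    have h2 : (Equiv.swap a x) a = (Equiv.swap a x) b := by
      rw [Equiv.swap_apply_left]; exact h
    exact hab ((Equiv.swap a x).injective h2)
  exact Equiv.swap_apply_of_ne_of_ne h1 hxy

lemma pswap_b {a b x y : ℕ} : pswap a b x y b = y := by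
  unfold pswap
  rw [Equiv.swap_apply_left]

end helpers

lemma pick_f {a b x y p q d e : ℕ} (hab : a ≠ b) (hxy : x ≠ y)
    (hde : (d = a ∧ e = b) ∨ (d = b ∧ e = a))
    (hpq : (p = x ∧ q = y) ∨ (p = y ∧ q = x)) :
    ∃ f : ℕ → ℕ, Function.Injective f ∧ (f a = x ∧ f b = y ∨ f a = y ∧ f b = x) ∧
      f d = p ∧ f e = q := by
  rcases hde with ⟨rfl, rfl⟩ | ⟨rfl, rfl⟩ <;> rcases hpq with ⟨rfl, rfl⟩ | ⟨rfl, rfl⟩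
  · exact ⟨pswap d e p q, pswap_inj _ _ _ _, Or.inl ⟨pswap_a hab hxy, pswap_b⟩,
      pswap_a hab hxy, pswap_b⟩
  · exact ⟨pswap d e p q, pswap_inj _ _ _ _, Or.inr ⟨pswap_a hab hxy.symm, pswap_b⟩,
      pswap_a hab hxy.symm, pswap_b⟩
  · exact ⟨pswap d e p q, pswap_inj _ _ _ _,
      Or.inr ⟨pswap_b, pswap_a hab.symm hxy⟩, pswap_a hab.symm hxy, pswap_b⟩
  · exact ⟨pswap d e p q, pswap_inj _ _ _ _,
      Or.inl ⟨pswap_b, pswap_a hab.symm hxy.symm⟩, pswap_a hab.symm hxy.symm, pswap_b⟩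

lemma upperEmbed {a b x y : ℕ} (hab : a ≠ b) (hxy : x ≠ y) :
    ∀ (u : List ℕ) (bs : List (List ℕ)), (∀ c ∈ u, c = a ∨ c = b) → a ∈ u → b ∈ u →
      bs.length + 1 = u.length → (∀ B ∈ bs, B = [x, y] ∨ B = [y, x]) →
      ∃ f : ℕ → ℕ, Function.Injective f ∧ (f a = x ∧ f b = y ∨ f a = y ∧ f b = x) ∧
        (u.map f) <+ bs.flatten := by
  intro u
  induction u using List.reverseRecOn with
  | nil => intro bs _ ha _ _ _; simp at ha
  | append_singleton u' c ih =>
    intro bs hmem ha hb hlen hbs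
    have hu'ne : u' ≠ [] := by
      rintro rfl
      have h1 : a = c := by simpa using ha
      have h2 : b = c := by simpa using hb
      exact hab (h1.trans h2.symm)
    have hbsne : bs ≠ [] := by
      intro h
      rw [h] at hlen
      simp at hlen
      cases u' with
      | nil => exact hu'ne rfl
      | cons z u'' => simp at hlen
    obtain ⟨bs', B, rfl⟩ := bs.eq_nil_or_concat.resolve_left hbsne
    simp only [List.concat_eq_append] at hlen hbs ⊢
    have hlen' : bs'.length + 1 = u'.length := by
      simp at hlen ⊢
      omega
    have hBmem : B = [x, y] ∨ B = [y, x] := hbs B (by simp)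
    by_cases hcase : a ∈ u' ∧ b ∈ u'
    · obtain ⟨f, hinj, hfor, hsub⟩ := ih bs' (fun d hd => hmem d (by simp [hd])) hcase.1 hcase.2
        hlen' (fun B' hB' => hbs B' (by simp [hB']))
      refine ⟨f, hinj, hfor, ?_⟩
      rw [map_append, flatten_append]
      apply List.Sublist.append hsub
      have hfc : f c = x ∨ f c = y := by
        rcases hmem c (by simp) with rfl | rfl <;> rcases hfor with ⟨h1, h2⟩ | ⟨h1, h2⟩ <;>
          simp [h1, h2]
      have : f c ∈ B := by
        rcases hBmem with rfl | rfl <;> rcases hfc with h | h <;> simp [h]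
      simpa using List.singleton_sublist.mpr this
    · -- u' is constant; c is the other letter
      have hde : ∃ d e, (∀ z ∈ u', z = d) ∧ c = e ∧ ((d = a ∧ e = b) ∨ (d = b ∧ e = a)) := by
        rcases Decidable.not_and_iff_or_not.mp hcase with hna | hnb
        · refine ⟨b, a, ?_, ?_, Or.inr ⟨rfl, rfl⟩⟩
          · intro z hz
            rcases hmem z (by simp [hz]) with rfl | rfl
            · exact absurd hz hna
            · rfl
          · have := ha
            rcases (by simpa using this : a ∈ u' ∨ a = c) with h | h
            · exact absurd h hna
            · exact h.symm
        · refine ⟨a, b, ?_, ?_, Or.inl ⟨rfl, rfl⟩⟩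
          · intro z hz
            rcases hmem z (by simp [hz]) with rfl | rfl
            · rfl
            · exact absurd hz hnb
          · have := hb
            rcases (by simpa using this : b ∈ u' ∨ b = c) with h | h
            · exact absurd h hnb
            · exact h.symm
      obtain ⟨d, e, hconst, rfl, hde⟩ := hde
      obtain ⟨p, q, hBpq, hpq⟩ : ∃ p q, B = [p, q] ∧ ((p = x ∧ q = y) ∨ (p = y ∧ q = x)) := by
        rcases hBmem with rfl | rfl
        · exact ⟨x, y, rfl, Or.inl ⟨rfl, rfl⟩⟩
        · exact ⟨y, x, rfl, Or.inr ⟨rfl, rfl⟩⟩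
      obtain ⟨f, hinj, hfor, hfd, hfe⟩ := pick_f hab hxy hde hpq
      refine ⟨f, hinj, hfor, ?_⟩
      have hmapu' : u'.map f = List.replicate u'.length (f d) := by
        rw [List.eq_replicate_iff]
        constructor
        · simp
        · intro z hz
          obtain ⟨w, hw, rfl⟩ := List.mem_map.mp hz
          rw [hconst w hw]
      have hrep : u'.length = bs'.length + 1 := hlen'.symm
      rw [map_append, flatten_append, hmapu', hrep, List.replicate_succ']
      simp only [List.flatten_cons, List.flatten_nil, List.append_nil, List.map_cons,
        List.map_nil]
      have h1 : List.replicate bs'.length (f d) <+ bs'.flatten := by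
        apply replicate_sublist_flatten
        intro B' hB'
        rcases hbs B' (by simp [hB']) with rfl | rfl <;>
          rcases hpq with ⟨rfl, rfl⟩ | ⟨rfl, rfl⟩ <;> simp [hfd]
      have h2 : [f d] ++ [f c] <+ B := by
        rw [hBpq, hfd, hfe]
        simp
      calc List.replicate bs'.length (f d) ++ [f d] ++ [f c]
          = List.replicate bs'.length (f d) ++ ([f d] ++ [f c]) := by simp
        _ <+ bs'.flatten ++ B := List.Sublist.append h1 h2

lemma notContains (u : List ℕ) (a b : ℕ) (hab : a ≠ b) (hmem : ∀ c ∈ u, c = a ∨ c = b)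
    (ha : a ∈ u) (hb : b ∈ u) (r s : ℕ) (hs : s + 2 ≤ u.length) :
    ¬ Contains (((u.tail.take s).map (fun c => if c = a then Ic r else Dc r)).flatten) u := by
  rintro ⟨f, hinj, hsub⟩
  set x := f a with hx
  set y := f b with hy
  have hxy : x ≠ y := fun h => hab (hinj h)
  set v := u.map f with hv
  set w0 := u.tail.take s with hw0
  set p : ℕ → Bool := fun c => c = x || c = y with hp
  set F := (w0.map (fun c => if c = a then Ic r else Dc r)).flatten with hF
  have hvelem : ∀ c ∈ v, c = x ∨ c = y := by
    intro c hc
    obtain ⟨z, hz, rfl⟩ := List.mem_map.mp hc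
    rcases hmem z hz with rfl | rfl
    · exact Or.inl rfl
    · exact Or.inr rfl
  have hvne : v ≠ [] := by
    intro h
    have : v.length = u.length := by simp [hv]
    rw [h] at this
    simp at this
    omega
  have hvp : v.filter p = v := by
    apply List.filter_eq_self.mpr
    intro c hc
    rcases hvelem c hc with rfl | rfl <;> simp [hp]
  have hsub2 : v <+ F.filter p := by
    rw [← hvp]
    exact hsub.filter p
  have hIcmem : ∀ z : ℕ, z ∈ v → z ∈ Ic r := by
    intro z hzv
    have hzF := hsub.subset hzv
    rw [hF] at hzF
    obtain ⟨B, hB, hzB⟩ := List.mem_flatten.mp hzF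
    obtain ⟨c, _, rfl⟩ := List.mem_map.mp hB
    by_cases hca : c = a
    · rw [if_pos hca] at hzB; exact hzB
    · rw [if_neg hca] at hzB
      unfold Dc at hzB
      exact List.mem_reverse.mp hzB
  have hxI : x ∈ Ic r ∧ y ∈ Ic r :=
    ⟨hIcmem x (List.mem_map.mpr ⟨a, ha, rfl⟩), hIcmem y (List.mem_map.mpr ⟨b, hb, rfl⟩)⟩
  have hPIc : (Ic r).filter p = if x < y then [x, y] else [y, x] :=
    filter_pair hxy hxI.1 hxI.2
  have hPDc : (Dc r).filter p = if x < y then [y, x] else [x, y] := by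
    unfold Dc
    rw [List.filter_reverse, hPIc]
    rcases lt_or_gt_of_ne hxy with hlt | hgt
    · rw [if_pos hlt, if_pos hlt]; rfl
    · rw [if_neg (by omega), if_neg (by omega)]; rfl
  have hFfilt : F.filter p =
      (w0.map (fun c => (if c = a then Ic r else Dc r).filter p)).flatten := by
    rw [hF, filter_flatten', List.map_map]
    rfl
  have hvtail : v.tail.take s = w0.map f := by
    rw [hv, hw0, ← List.map_tail, ← List.map_take]
  have hw0mem : ∀ c ∈ w0, c = a ∨ c = b := by
    intro c hc
    apply hmem
    exact (List.tail_sublist u).subset ((List.take_sublist s u.tail).subset hc)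
  rcases lt_or_gt_of_ne hxy with hlt | hgt
  · -- orientation +
    have hkey : v <+ ((v.tail.take s).map (fun d => [d, if d = x then y else x])).flatten := by
      have heq : (v.tail.take s).map (fun d => [d, if d = x then y else x]) =
          w0.map (fun c => (if c = a then Ic r else Dc r).filter p) := by
        rw [hvtail, List.map_map]
        apply List.map_congr_left
        intro c hc
        rcases hw0mem c hc with rfl | rfl
        · simp [hPIc, hlt, ← hx]
        · simp [hPDc, hlt, Ne.symm hab, Ne.symm hxy, ← hy]
      rw [heq, ← hFfilt]
      exact hsub2
    have hkey2 : v <+ ((v.tail).map (fun d => [d, if d = x then y else x])).flatten :=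
      hkey.trans (flatten_map_prefix (List.take_prefix s v.tail))
    exact Qplus hxy v hvelem hvne hkey2
  · -- orientation −
    have hkey : v <+ ((v.tail.take s).map (fun d => [if d = x then y else x, d])).flatten := by
      have heq : (v.tail.take s).map (fun d => [if d = x then y else x, d]) =
          w0.map (fun c => (if c = a then Ic r else Dc r).filter p) := by
        rw [hvtail, List.map_map]
        apply List.map_congr_left
        intro c hc
        rcases hw0mem c hc with rfl | rfl
        · simp [hPIc, (show ¬ x < y by omega), ← hx]
        · simp [hPDc, (show ¬ x < y by omega), Ne.symm hab, Ne.symm hxy, ← hy]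
      rw [heq, ← hFfilt]
      exact hsub2
    have hslen : s ≤ v.tail.length - 1 := by
      have : v.length = u.length := by simp [hv]
      simp only [List.length_tail]
      omega
    have hpre : v.tail.take s <+: v.tail.dropLast := by
      rw [List.dropLast_eq_take]
      have h3 : v.tail.take s = (v.tail.take (v.tail.length - 1)).take s := by
        rw [List.take_take, min_eq_left hslen]
      rw [h3]
      exact List.take_prefix _ _
    have hkey2 : v <+ ((v.dropLast.tail).map (fun d => [if d = x then y else x, d])).flatten := by
      have h4 := hkey.trans (flatten_map_prefix hpre)
      rwa [tail_dropLast'] at h4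
    have h5 := Rminus hxy v.dropLast (v.getLast hvne)
      (fun d hd => hvelem d ((List.dropLast_sublist v).subset hd))
    apply h5
    rw [List.dropLast_append_getLast hvne]
    exact hkey2

theorem stmt7 (u : List ℕ) (t : ℕ) (h2 : u.toFinset.card = 2)
    (hl : u.length = t) (ht : 2 ≤ t) : fw u = t - 1 := by
  obtain ⟨a, b, hab, hTF⟩ := Finset.card_eq_two.mp h2
  have hmem : ∀ c ∈ u, c = a ∨ c = b := by
    intro c hc
    have h3 : c ∈ u.toFinset := List.mem_toFinset.mpr hc
    rw [hTF] at h3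
    simpa using h3
  have ha : a ∈ u := by
    have h3 : a ∈ u.toFinset := by rw [hTF]; simp
    exact List.mem_toFinset.mp h3
  have hb : b ∈ u := by
    have h3 : b ∈ u.toFinset := by rw [hTF]; simp
    exact List.mem_toFinset.mp h3
  have hmemS : (t - 1) ∈ {s | ∃ r, ∀ F, IsFormation r s F → Contains F u} := by
    refine ⟨2, fun F hF => ?_⟩
    obtain ⟨A, ps, hA, hlen, hps, rfl⟩ := hF
    obtain ⟨x, y, hxy, rfl⟩ := Finset.card_eq_two.mp hA
    have hblocks : ∀ B ∈ ps, B = [x, y] ∨ B = [y, x] := by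
      intro B hB
      obtain ⟨hnd, hTF2⟩ := hps B hB
      have hlen2 : B.length = 2 := by
        have h4 := List.toFinset_card_of_nodup hnd
        rw [hTF2, Finset.card_pair hxy] at h4
        exact h4.symm
      obtain ⟨c, d, rfl⟩ := List.length_eq_two.mp hlen2
      have hcd : c ≠ d := by
        simp only [List.nodup_cons, List.mem_singleton, List.nodup_nil, and_true] at hnd
        exact hnd.1
      have hcf : c ∈ ({x, y} : Finset ℕ) := by rw [← hTF2]; simp
      have hdf : d ∈ ({x, y} : Finset ℕ) := by rw [← hTF2]; simp
      simp only [Finset.mem_insert, Finset.mem_singleton] at hcf hdf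
      rcases hcf with rfl | rfl <;> rcases hdf with rfl | rfl
      · exact absurd rfl hcd
      · exact Or.inl rfl
      · exact Or.inr rfl
      · exact absurd rfl hcd
    obtain ⟨f, hinj, _, hsub⟩ := upperEmbed hab hxy u ps hmem ha hb (by omega) hblocks
    exact ⟨f, hinj, hsub⟩
  unfold fw
  apply le_antisymm (Nat.sInf_le hmemS)
  apply le_csInf ⟨_, hmemS⟩
  intro s hs
  by_contra hlt
  push_neg at hlt
  obtain ⟨r, hr⟩ := hs
  apply notContains u a b hab hmem ha hb r s (by omega)
  apply hr
  refine ⟨(Ic r).toFinset, (u.tail.take s).map (fun c => if c = a then Ic r else Dc r),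
    ?_, ?_, ?_, ?_⟩
  · rw [List.toFinset_card_of_nodup (by unfold Ic; exact List.nodup_range')]
    unfold Ic
    simp
  · rw [List.length_map, List.length_take, List.length_tail, hl]
    omega
  · intro pp hpp
    obtain ⟨c, hc, rfl⟩ := List.mem_map.mp hpp
    by_cases hca : c = a
    · rw [if_pos hca]
      exact ⟨by unfold Ic; exact List.nodup_range', rfl⟩
    · rw [if_neg hca]
      unfold Dc
      exact ⟨by rw [List.nodup_reverse]; unfold Ic; exact List.nodup_range',
        List.toFinset_reverse⟩
  · rfl
end

section
/- For every l ≥ 2 and t ≥ 1, fw(up(l,t)) = 2t - 1, where up(l,t) is the sequence 12...l repeated t times. -/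
namespace Stmt8Aux

lemma Ic_nodup (c : ℕ) : (Ic c).Nodup := List.nodup_range'
lemma Dc_nodup (c : ℕ) : (Dc c).Nodup := by
  simpa [Dc, List.nodup_reverse] using Ic_nodup c
lemma Ic_pairwise (c : ℕ) : (Ic c).Pairwise (· < ·) := List.pairwise_lt_range'
lemma Dc_pairwise (c : ℕ) : (Dc c).Pairwise (· > ·) := by
  rw [Dc, List.pairwise_reverse]; exact Ic_pairwise c
lemma Ic_length (c : ℕ) : (Ic c).length = c := List.length_range'

lemma rep_succ (u : List ℕ) (t : ℕ) : rep u (t + 1) = u ++ rep u t := by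
  simp [rep, List.replicate_succ]

lemma rep_map (f : ℕ → ℕ) (u : List ℕ) (t : ℕ) : (rep u t).map f = rep (u.map f) t := by
  induction t with
  | zero => simp [rep]
  | succ t ih => simp [rep_succ, ih]

/-- Alternating blocks, starting with `Ic` iff `b = true`. -/
def altAux (c : ℕ) : Bool → ℕ → List ℕ
  | _, 0 => []
  | b, k+1 => (if b then Ic c else Dc c) ++ altAux c (!b) k

lemma altAux_eq (c : ℕ) : ∀ (k : ℕ) (b : Bool),
    ((List.range k).map (fun i => if decide (i % 2 = 0) = b then Ic c else Dc c)).flatten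
      = altAux c b k := by
  intro k
  induction k with
  | zero => intro b; simp [altAux]
  | succ k ih =>
    intro b
    rw [List.range_succ_eq_map]
    simp only [List.map_cons, List.flatten_cons, List.map_map]
    have h1 : ∀ i : ℕ, decide ((Nat.succ i) % 2 = 0) = !decide (i % 2 = 0) := by
      intro i
      rcases Nat.mod_two_eq_zero_or_one i with h | h <;>
        simp [Nat.succ_mod_two_eq_zero_iff, h]
    have h2 : ((fun i => if decide (i % 2 = 0) = b then Ic c else Dc c) ∘ Nat.succ)
        = (fun i => if decide (i % 2 = 0) = !b then Ic c else Dc c) := by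
      funext i
      simp only [Function.comp_apply, h1]
      cases b <;> cases hd : decide (i % 2 = 0) <;> simp
    rw [h2, ih (!b)]
    cases b <;> simp [altAux]

lemma altSeq_eq_altAux (c k : ℕ) : altSeq c k = altAux c true k := by
  show ((List.range k).map (fun i => if i % 2 = 0 then Ic c else Dc c)).flatten = _
  rw [← altAux_eq c k true]
  congr 1
  apply List.map_congr_left
  intro i _
  by_cases h : i % 2 = 0 <;> simp [h]

/-- The alternating word `x y x y ...` of length `n`. -/
def altW (x y : ℕ) : ℕ → List ℕ
  | 0 => []
  | n+1 => x :: altW y x n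

lemma altW_length : ∀ (n x y : ℕ), (altW x y n).length = n := by
  intro n
  induction n with
  | zero => intros; rfl
  | succ n ih => intro x y; simp [altW, ih]

lemma altW_append : ∀ (j m x y : ℕ),
    altW x y (j + m) = altW x y j ++ (if j % 2 = 0 then altW x y m else altW y x m) := by
  intro j
  induction j with
  | zero => intro m x y; simp [altW]
  | succ j ih =>
    intro m x y
    rw [show j + 1 + m = (j + m) + 1 from by omega]
    show x :: altW y x (j + m) = (x :: altW y x j) ++ _
    rw [ih m y x]
    rcases Nat.mod_two_eq_zero_or_one j with h | h <;>
      simp [h, Nat.succ_mod_two_eq_zero_iff]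

lemma altW_not_nodup (x y n : ℕ) : ¬ (altW x y (n + 3)).Nodup := by
  show ¬ (x :: y :: x :: altW y x n).Nodup
  simp [List.nodup_cons]



lemma alt_bound (c : ℕ) : ∀ (k : ℕ) (b : Bool) (x y n : ℕ), x ≠ y →
    (altW x y n).Sublist (altAux c b k) →
    n ≤ k + (if x < y ↔ b = true then 1 else 0) := by
  intro k
  induction k with
  | zero =>
    intro b x y n hxy h
    rw [show altAux c b 0 = [] from rfl, List.sublist_nil] at h
    have hn : n = 0 := by simpa [altW_length] using congrArg List.length h
    omega
  | succ k ih =>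
    intro b x y n hxy h
    have hyx : y < x ↔ ¬ x < y := by omega
    rw [show altAux c b (k+1) = (if b then Ic c else Dc c) ++ altAux c (!b) k from rfl] at h
    obtain ⟨w1, w2, hw, h1, h2⟩ := List.sublist_append_iff.mp h
    have hlen : n = w1.length + w2.length := by
      have := congrArg List.length hw; simpa [altW_length] using this
    set j := w1.length with hj
    set m := w2.length with hm
    have hsplit : altW x y n
        = altW x y j ++ (if j % 2 = 0 then altW x y m else altW y x m) := by
      rw [hlen]; exact altW_append ..
    have h12 : w1 = altW x y j ∧ w2 = (if j % 2 = 0 then altW x y m else altW y x m) :=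
      List.append_inj (hw.symm.trans hsplit) (by simp only [altW_length]; exact hj.symm)
    have hBnodup : (if b then Ic c else Dc c).Nodup := by
      cases b <;> simp [Ic_nodup, Dc_nodup]
    have hjle : j ≤ 2 := by
      by_contra hgt
      have hnd : (altW x y j).Nodup := (h12.1 ▸ h1).nodup hBnodup
      rw [show j = (j - 3) + 3 from by omega] at hnd
      exact altW_not_nodup x y (j - 3) hnd
    have hj2 : j = 0 ∨ j = 1 ∨ j = 2 := by omega
    rcases hj2 with hj0 | hj0 | hj0
    · -- nothing taken from first block
      have hw2 : w2 = altW x y m := by rw [h12.2]; simp [hj0]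
      have := ih (!b) x y m hxy (hw2 ▸ h2)
      split_ifs at this ⊢ <;> omega
    · -- one letter taken
      have hw2 : w2 = altW y x m := by
        rw [h12.2]; simp [hj0]
      have hthis := ih (!b) y x m hxy.symm (hw2 ▸ h2)
      have hcond : (y < x ↔ (!b) = true) ↔ (x < y ↔ b = true) := by
        cases b <;> simp [hyx]
      rw [if_congr hcond rfl rfl] at hthis
      split_ifs at hthis ⊢ <;> omega
    · -- two letters taken: direction matches block
      have hw1 : w1 = [x, y] := by rw [h12.1, hj0]; rfl
      have hxy2 : x < y ↔ b = true := by
        cases b with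
        | true =>
          have hp : List.Pairwise (· < ·) [x, y] :=
            List.Pairwise.sublist (hw1 ▸ h1) (by simpa using Ic_pairwise c)
          simpa using hp
        | false =>
          have hp : List.Pairwise (· > ·) [x, y] :=
            List.Pairwise.sublist (hw1 ▸ h1) (by simpa using Dc_pairwise c)
          have hgt : y < x := by simpa using hp
          exact iff_of_false (by omega) (by simp)
      have hw2 : w2 = altW x y m := by rw [h12.2]; simp [hj0]
      have hthis := ih (!b) x y m hxy (hw2 ▸ h2)
      have hcond2 : ¬ (x < y ↔ (!b) = true) := by
        intro hc
        cases b
        · exact Bool.false_ne_true (hxy2.mp (hc.mpr rfl))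
        · exact Bool.false_ne_true (hc.mp (hxy2.mpr rfl))
      rw [if_neg hcond2] at hthis
      rw [if_pos hxy2]
      omega

section ES
variable {α : Type*} [LinearOrder α]
open Function Finset
theorem erdos_szekeres {r s n : ℕ} {f : Fin n → α} (hn : r * s < n) (hf : Injective f) :
    (∃ t : Finset (Fin n), r < #t ∧ StrictMonoOn f ↑t) ∨
      ∃ t : Finset (Fin n), s < #t ∧ StrictAntiOn f ↑t := by
  -- Given an index `i`, produce the set of increasing (resp., decreasing) subsequences which ends
  -- at `i`.
  let inc_sequences_ending_in : Fin n → Finset (Finset (Fin n)) := fun i =>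
    univ.powerset.filter fun t => Finset.max t = i ∧ StrictMonoOn f ↑t
  let dec_sequences_ending_in : Fin n → Finset (Finset (Fin n)) := fun i =>
    univ.powerset.filter fun t => Finset.max t = i ∧ StrictAntiOn f ↑t
  -- The singleton sequence is in both of the above collections.
  -- (This is useful to show that the maximum length subsequence is at least 1, and that the set
  -- of subsequences is nonempty.)
  have inc_i : ∀ i, {i} ∈ inc_sequences_ending_in i := fun i => by
    simp [inc_sequences_ending_in, StrictMonoOn]
  have dec_i : ∀ i, {i} ∈ dec_sequences_ending_in i := fun i => by
    simp [dec_sequences_ending_in, StrictAntiOn]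
  -- Define the pair of labels: at index `i`, the pair is the maximum length of an increasing
  -- subsequence ending at `i`, paired with the maximum length of a decreasing subsequence ending
  -- at `i`.
  -- We call these labels `(a_i, b_i)`.
  let ab' : Fin n → ℕ × ℕ := by
    intro i
    apply
      (max' ((inc_sequences_ending_in i).image card) (Nonempty.image ⟨{i}, inc_i i⟩ _),
        max' ((dec_sequences_ending_in i).image card) (Nonempty.image ⟨{i}, dec_i i⟩ _))
  -- Porting note: it costs many resources to unfold `ab'` so we obscure the definition:
  generalize hab : ab' = ab
  -- It now suffices to show that one of the labels is 'big' somewhere. In particular, if the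
  -- first in the pair is more than `r` somewhere, then we have an increasing subsequence in our
  -- set, and if the second is more than `s` somewhere, then we have a decreasing subsequence.
  rsuffices ⟨i, hi⟩ : ∃ i, r < (ab i).1 ∨ s < (ab i).2
  · refine Or.imp ?_ ?_ hi
    on_goal 1 =>
      have : (ab i).1 ∈ image card (inc_sequences_ending_in i) := by
        simp only [← hab]; exact max'_mem _ (Nonempty.image ⟨{i}, inc_i i⟩ _)
    on_goal 2 =>
      have : (ab i).2 ∈ image card (dec_sequences_ending_in i) := by
        simp only [← hab]; exact max'_mem _ (Nonempty.image ⟨{i}, dec_i i⟩ _)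
    all_goals
      intro hi
      rw [mem_image] at this
      obtain ⟨t, ht₁, ht₂⟩ := this
      refine ⟨t, by rwa [ht₂], ?_⟩
      rw [mem_filter] at ht₁
      apply ht₁.2.2
  -- Show first that the pair of labels is unique.
  have : Injective ab := by
    simp only [← hab]
    apply Injective.of_lt_imp_ne
    intro i j k q
    injection q with q₁ q₂
    -- We have two cases: `f i < f j` or `f j < f i`.
    -- In the former we'll show `a_i < a_j`, and in the latter we'll show `b_i < b_j`.
    cases lt_or_gt_of_ne fun _ => ne_of_lt ‹i < j› (hf ‹f i = f j›)
    on_goal 1 =>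
      apply ne_of_lt _ q₁
      have : (ab' i).1 ∈ image card (inc_sequences_ending_in i) := by exact max'_mem _ (Nonempty.image ⟨{i}, inc_i i⟩ _)
    on_goal 2 =>
      apply ne_of_lt _ q₂
      have : (ab' i).2 ∈ image card (dec_sequences_ending_in i) := by exact max'_mem _ (Nonempty.image ⟨{i}, dec_i i⟩ _)
    all_goals
      -- Reduce to showing there is a subsequence of length `a_i + 1` which ends at `j`.
      rw [Nat.lt_iff_add_one_le]
      apply le_max'
      rw [mem_image] at this ⊢
      -- In particular we take the subsequence `t` of length `a_i` which ends at `i`, by definition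
      -- of `a_i`
      rcases this with ⟨t, ht₁, ht₂⟩
      rw [mem_filter] at ht₁
      -- Ensure `t` ends at `i`.
      have : t.max = i := by simp only [ht₁.2.1]
      -- Now our new subsequence is given by adding `j` at the end of `t`.
      refine ⟨insert j t, ?_, ?_⟩
      -- First make sure it's valid, i.e., that this subsequence ends at `j` and is increasing
      · rw [mem_filter]
        refine ⟨?_, ?_, ?_⟩
        · rw [mem_powerset]; apply subset_univ
        -- It ends at `j` since `i < j`.
        · convert max_insert (a := j) (s := t)
          rw [ht₁.2.1, max_eq_left]
          apply WithBot.coe_le_coe.mpr (le_of_lt ‹i < j›)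
        -- To show it's increasing (i.e., `f` is monotone increasing on `t.insert j`), we do cases
        -- on what the possibilities could be - either in `t` or equals `j`.
        simp only [StrictMonoOn, StrictAntiOn, coe_insert, Set.mem_insert_iff, mem_coe]
        -- Most of the cases are just bashes.
        rintro x ⟨rfl | _⟩ y ⟨rfl | _⟩ _
        · apply (irrefl _ ‹j < j›).elim
        · exfalso
          apply not_le_of_gt (_root_.trans ‹i < j› ‹j < y›) (le_max_of_eq ‹y ∈ t› ‹t.max = i›)
        · first
          | apply lt_of_le_of_lt _ ‹f i < f j›
          | apply lt_of_lt_of_le ‹f j < f i› _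
          rcases lt_or_eq_of_le (le_max_of_eq ‹x ∈ t› ‹t.max = i›) with (_ | rfl)
          · apply le_of_lt (ht₁.2.2 ‹x ∈ t› (mem_of_max ‹t.max = i›) ‹x < i›)
          · rfl
        · apply ht₁.2.2 ‹x ∈ t› ‹y ∈ t› ‹x < y›
      -- Finally show that this new subsequence is one longer than the old one.
      · rw [card_insert_of_notMem, ht₂]
        intro
        apply not_le_of_gt ‹i < j› (le_max_of_eq ‹j ∈ t› ‹t.max = i›)
  -- Finished both goals!
  -- Now that we have uniqueness of each label, it remains to do some counting to finish off.
  -- Suppose all the labels are small.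
  by_contra! q
  -- Then the labels `(a_i, b_i)` all fit in the following set: `{ (x,y) | 1 ≤ x ≤ r, 1 ≤ y ≤ s }`
  let ran : Finset (ℕ × ℕ) := (range r).image Nat.succ ×ˢ (range s).image Nat.succ
  -- which we prove here.
  have : image ab univ ⊆ ran := by
    -- First some logical shuffling
    rintro ⟨x₁, x₂⟩
    simp only [ran, mem_image, exists_prop, mem_range, mem_univ, mem_product, true_and,
      Prod.ext_iff]
    rintro ⟨i, rfl, rfl⟩
    specialize q i
    -- Show `1 ≤ a_i` and `1 ≤ b_i`, which is easy from the fact that `{i}` is an increasing and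
    -- decreasing subsequence which we did right near the top.
    have z : 1 ≤ (ab i).1 ∧ 1 ≤ (ab i).2 := by
      simp only [← hab]
      constructor <;>
        · apply le_max'
          rw [mem_image]
          exact ⟨{i}, by solve_by_elim, card_singleton i⟩
    -- Need to get `a_i ≤ r`, here phrased as: there is some `a < r` with `a+1 = a_i`.
    exact ⟨⟨(ab i).1 - 1, by omega⟩, (ab i).2 - 1, by omega⟩
  -- To get our contradiction, it suffices to prove `n ≤ r * s`
  apply not_le_of_gt hn
  -- Which follows from considering the cardinalities of the subset above, since `ab` is injective.
  simpa [ran, Nat.succ_injective, card_image_of_injective, ‹Injective ab›] using card_le_card this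
end ES


lemma isFormation_altSeq (r k : ℕ) : IsFormation r k (altSeq r k) := by
  refine ⟨(Ic r).toFinset, (List.range k).map (fun i => if i % 2 = 0 then Ic r else Dc r),
    ?_, by simp, ?_, rfl⟩
  · rw [List.toFinset_card_of_nodup (Ic_nodup r), Ic_length]
  · intro p hp
    simp only [List.mem_map] at hp
    obtain ⟨i, _, rfl⟩ := hp
    by_cases h : i % 2 = 0 <;>
      simp [h, Ic_nodup, Dc_nodup, Dc, List.toFinset_reverse]

lemma altW_sublist_up (l t : ℕ) (hl : 2 ≤ l) (f : ℕ → ℕ) :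
    (altW (f 1) (f 2) (2 * t)).Sublist ((upSeq l t).map f) := by
  induction t with
  | zero => simp [altW, upSeq, rep]
  | succ t ih =>
    rw [show 2 * (t + 1) = (2 * t) + 1 + 1 from by omega]
    show ((f 1) :: (f 2) :: altW (f 1) (f 2) (2 * t)).Sublist _
    rw [upSeq, rep_succ, List.map_append]
    obtain ⟨rest, hrest⟩ : ∃ rest, (Ic l).map f = f 1 :: f 2 :: rest := by
      obtain ⟨l', rfl⟩ : ∃ l', l = l' + 2 := ⟨l - 2, by omega⟩
      exact ⟨(List.range' 3 l').map f, by simp [Ic, List.range'_succ]⟩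
    rw [hrest]
    show ((f 1) :: (f 2) :: altW (f 1) (f 2) (2 * t)).Sublist
      (f 1 :: f 2 :: (rest ++ (rep (Ic l) t).map f))
    exact ((ih.trans (List.sublist_append_right _ _)).cons₂ _).cons₂ _

lemma not_contains_alt (l t r : ℕ) (hl : 2 ≤ l) (ht : 1 ≤ t) :
    ¬ Contains (altSeq r (2 * t - 2)) (upSeq l t) := by
  rintro ⟨f, hf, hsub⟩
  have hab : f 1 ≠ f 2 := fun h => by have := hf h; omega
  have h1 : (altW (f 1) (f 2) (2 * t)).Sublist (altSeq r (2 * t - 2)) :=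
    (altW_sublist_up l t hl f).trans hsub
  rw [altSeq_eq_altAux] at h1
  have := alt_bound r (2 * t - 2) true (f 1) (f 2) (2 * t) hab h1
  split_ifs at this <;> omega

lemma formation_mono {r s s' : ℕ} (hss : s ≤ s') (u : List ℕ)
    (h : ∀ F, IsFormation r s F → Contains F u) :
    ∀ F, IsFormation r s' F → Contains F u := by
  rintro F ⟨A, ps, hA, hlen, hperm, rfl⟩
  have htl : (ps.take s).length = s := by
    rw [List.length_take, hlen]; omega
  have hform : IsFormation r s (ps.take s).flatten :=
    ⟨A, ps.take s, hA, htl, fun p hp => hperm p (List.mem_of_mem_take hp), rfl⟩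
  obtain ⟨f, hf, hsub⟩ := h _ hform
  refine ⟨f, hf, hsub.trans ?_⟩
  conv_rhs => rw [← List.take_append_drop s ps]
  rw [show (ps.take s ++ ps.drop s).flatten = (ps.take s).flatten ++ (ps.drop s).flatten from
    List.flatten_append ..]
  exact List.sublist_append_left _ _

lemma rep_sublist_flatten (u : List ℕ) (P : List ℕ → Bool)
    (hP : ∀ p, P p = true → u.Sublist p) :
    ∀ (ps : List (List ℕ)) (t : ℕ), t ≤ (ps.filter P).length → (rep u t).Sublist ps.flatten := by
  intro ps
  induction ps with
  | nil =>
    intro t ht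
    simp only [List.filter_nil, List.length_nil, Nat.le_zero] at ht
    subst ht
    simp [rep]
  | cons p ps ih =>
    intro t ht
    show (rep u t).Sublist (p ++ ps.flatten)
    by_cases hp : P p = true
    · cases t with
      | zero => simp [rep]
      | succ t =>
        rw [List.filter_cons_of_pos hp, List.length_cons] at ht
        rw [rep_succ]
        exact List.Sublist.append (hP p hp) (ih t (by omega))
    · rw [List.filter_cons_of_neg (by simpa using hp)] at ht
      exact (ih t ht).trans (List.sublist_append_right _ _)

def listMax (L : List ℕ) : ℕ := L.foldr max 0

lemma le_listMax {L : List ℕ} {x : ℕ} (h : x ∈ L) : x ≤ listMax L := by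
  induction L with
  | nil => simp at h
  | cons a L ih =>
    rcases List.mem_cons.mp h with rfl | h
    · exact le_max_left _ _
    · exact le_trans (ih h) (le_max_right _ _)

def injExt (L : List ℕ) : ℕ → ℕ := fun n =>
  if h : 1 ≤ n ∧ n ≤ L.length then L.get ⟨n - 1, by omega⟩ else listMax L + n + 1

lemma injExt_injective (L : List ℕ) (hL : L.Nodup) : Function.Injective (injExt L) := by
  intro a b hab
  unfold injExt at hab
  split_ifs at hab with h1 h2 h2
  · have := List.nodup_iff_injective_get.mp hL hab
    have := congrArg Fin.val this
    simp only at this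
    omega
  · exfalso
    have hmem : L.get ⟨a - 1, by omega⟩ ∈ L := List.get_mem _ _
    have := le_listMax hmem
    omega
  · exfalso
    have hmem : L.get ⟨b - 1, by omega⟩ ∈ L := List.get_mem _ _
    have := le_listMax hmem
    omega
  · omega

lemma injExt_map (L : List ℕ) : (Ic L.length).map (injExt L) = L := by
  apply List.ext_getElem
  · simp [Ic]
  · intro i h1 h2
    simp only [List.getElem_map, Ic, List.getElem_range']
    unfold injExt
    rw [dif_pos ⟨by omega, by omega⟩]
    simp only [List.get_eq_getElem]
    congr 1
    omega

lemma pairwise_filter_shrink {R : ℕ → ℕ → Prop} {p : List ℕ} {S T : Finset ℕ}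
    (hTS : ∀ x, x ∈ T → x ∈ S)
    (h : (p.filter (· ∈ S)).Pairwise R) : (p.filter (· ∈ T)).Pairwise R := by
  have heq : p.filter (· ∈ T) = (p.filter (· ∈ S)).filter (· ∈ T) := by
    rw [List.filter_filter]
    apply List.filter_congr
    intro x _
    by_cases hx : x ∈ T <;> simp [hx, hTS x]
  rw [heq]
  exact List.Pairwise.filter _ h

lemma refine_block (q : List ℕ) (hq : q.Nodup) (m : ℕ) (hlen : m * m < q.length) :
    ∃ T : Finset ℕ, (∀ x ∈ T, x ∈ q) ∧ m < T.card ∧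
      ((q.filter (· ∈ T)).Pairwise (· < ·) ∨ (q.filter (· ∈ T)).Pairwise (· > ·)) := by
  have hinj : Function.Injective q.get := List.nodup_iff_injective_get.mp hq
  rcases erdos_szekeres (r := m) (s := m) hlen hinj with ⟨t, hcard, hmono⟩ | ⟨t, hcard, hmono⟩
  · refine ⟨t.image q.get, ?_, ?_, Or.inl ?_⟩
    · intro x hx
      obtain ⟨i, _, rfl⟩ := Finset.mem_image.mp hx
      exact List.get_mem _ _
    · rwa [Finset.card_image_of_injective _ hinj]
    · have hpq : q.Pairwise (fun a b => a ∈ t.image q.get → b ∈ t.image q.get → a < b) := by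
        rw [List.pairwise_iff_get]
        intro i j hij ha hb
        obtain ⟨i', hi't, hi'⟩ := Finset.mem_image.mp ha
        obtain ⟨j', hj't, hj'⟩ := Finset.mem_image.mp hb
        cases hinj hi'
        cases hinj hj'
        exact hmono (by simpa using hi't) (by simpa using hj't) hij
      have hflt := List.Pairwise.filter (fun x => decide (x ∈ t.image q.get)) hpq
      refine List.Pairwise.imp_of_mem ?_ hflt
      intro a b ha hb hab
      rw [List.mem_filter] at ha hb
      exact hab (by simpa using ha.2) (by simpa using hb.2)
  · refine ⟨t.image q.get, ?_, ?_, Or.inr ?_⟩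
    · intro x hx
      obtain ⟨i, _, rfl⟩ := Finset.mem_image.mp hx
      exact List.get_mem _ _
    · rwa [Finset.card_image_of_injective _ hinj]
    · have hpq : q.Pairwise (fun a b => a ∈ t.image q.get → b ∈ t.image q.get → a > b) := by
        rw [List.pairwise_iff_get]
        intro i j hij ha hb
        obtain ⟨i', hi't, hi'⟩ := Finset.mem_image.mp ha
        obtain ⟨j', hj't, hj'⟩ := Finset.mem_image.mp hb
        cases hinj hi'
        cases hinj hj'
        exact hmono (by simpa using hi't) (by simpa using hj't) hij
      have hflt := List.Pairwise.filter (fun x => decide (x ∈ t.image q.get)) hpq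
      refine List.Pairwise.imp_of_mem ?_ hflt
      intro a b ha hb hab
      rw [List.mem_filter] at ha hb
      exact hab (by simpa using ha.2) (by simpa using hb.2)

def gBound : ℕ → ℕ → ℕ
  | 0, m => m
  | k+1, m => (gBound k m) * (gBound k m) + 1

lemma step1 : ∀ (ps : List (List ℕ)) (S : Finset ℕ) (m : ℕ),
    (∀ x ∈ S, ∀ p ∈ ps, x ∈ p) → (∀ p ∈ ps, p.Nodup) →
    gBound ps.length m ≤ S.card →
    ∃ T : Finset ℕ, T ⊆ S ∧ m ≤ T.card ∧
      ∀ p ∈ ps, ((p.filter (· ∈ T)).Pairwise (· < ·) ∨ (p.filter (· ∈ T)).Pairwise (· > ·)) := by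
  intro ps
  induction ps with
  | nil =>
    intro S m _ _ hcard
    exact ⟨S, Finset.Subset.refl S, by simpa [gBound] using hcard, by simp⟩
  | cons p ps ih =>
    intro S m hmem hnd hcard
    set q := p.filter (· ∈ S) with hqdef
    have hqnd : q.Nodup := (hnd p (List.mem_cons_self)).filter _
    have hqtf : q.toFinset = S := by
      ext x
      simp only [hqdef, List.mem_toFinset, List.mem_filter, decide_eq_true_eq]
      exact ⟨fun h => h.2, fun h => ⟨hmem x h p (List.mem_cons_self), h⟩⟩
    have hqlen : S.card = q.length := by
      rw [← hqtf, List.toFinset_card_of_nodup hqnd]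
    have hcard' : gBound ps.length m * gBound ps.length m < q.length := by
      rw [← hqlen]
      have : gBound (ps.length + 1) m ≤ S.card := by simpa using hcard
      simp only [gBound] at this
      omega
    obtain ⟨S₁, hS₁q, hS₁card, hS₁sorted⟩ := refine_block q hqnd (gBound ps.length m) hcard'
    have hS₁S : S₁ ⊆ S := by
      intro x hx
      have := hS₁q x hx
      rw [hqdef, List.mem_filter] at this
      simpa using this.2
    obtain ⟨T, hTS₁, hTcard, hTsorted⟩ :=
      ih S₁ m (fun x hx p' hp' => hmem x (hS₁S hx) p' (List.mem_cons_of_mem _ hp'))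
        (fun p' hp' => hnd p' (List.mem_cons_of_mem _ hp')) (by omega)
    refine ⟨T, fun x hx => hS₁S (hTS₁ hx), hTcard, ?_⟩
    intro p' hp'
    rcases List.mem_cons.mp hp' with rfl | hp'
    · -- head block
      have hM : ∀ {R : ℕ → ℕ → Prop}, (q.filter (· ∈ S₁)).Pairwise R →
          (p'.filter (· ∈ T)).Pairwise R := by
        intro R h
        have h1 : (p'.filter (· ∈ S₁)).Pairwise R := by
          have heq : p'.filter (· ∈ S₁) = q.filter (· ∈ S₁) := by
            rw [hqdef, List.filter_filter]
            apply List.filter_congr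
            intro x _
            by_cases hx : x ∈ S₁ <;> simp [hx, fun h => hS₁S h]
          rw [heq]; exact h
        exact pairwise_filter_shrink (fun x hx => hTS₁ hx) h1
      exact hS₁sorted.imp (fun h => hM h) (fun h => hM h)
    · exact hTsorted p' hp'

lemma upper (l t : ℕ) (hl : 2 ≤ l) (ht : 1 ≤ t) :
    ∀ F, IsFormation (gBound (2 * t - 1) l) (2 * t - 1) F → Contains F (upSeq l t) := by
  rintro F ⟨A, ps, hA, hlen, hperm, rfl⟩
  obtain ⟨T0, hT0A, hT0card, hT0sorted⟩ :=
    step1 ps A l (fun x hx p hp => by rw [← (hperm p hp).2] at hx; exact List.mem_toFinset.mp hx)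
      (fun p hp => (hperm p hp).1) (by rw [hlen, hA])
  obtain ⟨T, hTT0, hTcard⟩ := Finset.exists_subset_card_eq hT0card
  have hsorted : ∀ p ∈ ps,
      ((p.filter (· ∈ T)).Pairwise (· < ·) ∨ (p.filter (· ∈ T)).Pairwise (· > ·)) :=
    fun p hp => (hT0sorted p hp).imp
      (pairwise_filter_shrink (fun x hx => hTT0 hx))
      (pairwise_filter_shrink (fun x hx => hTT0 hx))
  set LS := T.sort (· ≤ ·) with hLSdef
  have hLSnd : LS.Nodup := T.sort_nodup _
  have hLSsorted : LS.Pairwise (· < ·) := List.sortedLT_iff_pairwise.mp T.sortedLT_sort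
  have hLS_tf : LS.toFinset = T := T.sort_toFinset _
  have hLSlen : LS.length = l := by rw [hLSdef, Finset.length_sort, hTcard]
  have hkey : ∀ p ∈ ps, p.filter (· ∈ T) = LS ∨ p.filter (· ∈ T) = LS.reverse := by
    intro p hp
    have hqnd : (p.filter (· ∈ T)).Nodup := (hperm p hp).1.filter _
    have hqtf : (p.filter (· ∈ T)).toFinset = T := by
      ext x
      simp only [List.mem_toFinset, List.mem_filter, decide_eq_true_eq]
      refine ⟨fun h => h.2, fun h => ⟨?_, h⟩⟩
      have hxA : x ∈ A := hT0A (hTT0 h)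
      rw [← (hperm p hp).2] at hxA
      exact List.mem_toFinset.mp hxA
    rcases hsorted p hp with h | h
    · left
      exact List.Perm.eq_of_pairwise (fun a _ _ _ h1 h2 => absurd (h1.trans h2) (lt_irrefl a))
        h hLSsorted (List.perm_of_nodup_nodup_toFinset_eq hqnd hLSnd (hqtf.trans hLS_tf.symm))
    · right
      have hrev : (p.filter (· ∈ T)).reverse = LS := by
        refine List.Perm.eq_of_pairwise (fun a _ _ _ h1 h2 => absurd (h1.trans h2) (lt_irrefl a))
          ?_ hLSsorted
          (List.perm_of_nodup_nodup_toFinset_eq (by simpa using hqnd) hLSnd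
            (by rw [List.toFinset_reverse]; exact hqtf.trans hLS_tf.symm))
        show List.Pairwise (· < ·) (List.filter (fun x => decide (x ∈ T)) p).reverse
        rw [List.pairwise_reverse]
        exact h
      rw [← hrev, List.reverse_reverse]
  classical
  set P : List ℕ → Bool := fun p => decide (p.filter (· ∈ T) = LS) with hPdef
  have hcount := List.length_eq_length_filter_add (l := ps) P
  have hcase : t ≤ (ps.filter P).length ∨ t ≤ (ps.filter (fun p => !(P p))).length := by
    rw [hlen] at hcount; omega
  rcases hcase with hcase | hcase
  · refine ⟨injExt LS, injExt_injective LS hLSnd, ?_⟩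
    have hmap : (upSeq l t).map (injExt LS) = rep LS t := by
      rw [upSeq, rep_map]
      congr 1
      rw [← hLSlen]
      exact injExt_map LS
    rw [hmap]
    exact rep_sublist_flatten LS P
      (fun p hPp => by
        have hfp : p.filter (· ∈ T) = LS := by simpa [hPdef] using hPp
        rw [← hfp]; exact List.filter_sublist) ps t hcase
  · set L := LS.reverse with hLdef
    have hLnd : L.Nodup := by simpa [hLdef] using hLSnd
    have hLlen : L.length = l := by simp [hLdef, hLSlen]
    set P' : List ℕ → Bool := fun p => decide (p.filter (· ∈ T) = L) with hP'def
    have hcase' : t ≤ (ps.filter P').length := by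
      refine le_trans hcase ?_
      rw [← List.countP_eq_length_filter, ← List.countP_eq_length_filter]
      apply List.countP_mono_left
      intro p hp hneg
      simp only [hP'def, decide_eq_true_eq]
      rcases hkey p hp with h | h
      · exfalso; simp [hPdef, h] at hneg
      · exact h
    refine ⟨injExt L, injExt_injective L hLnd, ?_⟩
    have hmap : (upSeq l t).map (injExt L) = rep L t := by
      rw [upSeq, rep_map]
      congr 1
      rw [← hLlen]
      exact injExt_map L
    rw [hmap]
    exact rep_sublist_flatten L P'
      (fun p hPp => by
        have hfp : p.filter (· ∈ T) = L := by simpa [hP'def] using hPp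
        rw [← hfp]; exact List.filter_sublist) ps t hcase'

end Stmt8Aux

open Stmt8Aux in
theorem stmt8 (l t : ℕ) (hl : 2 ≤ l) (ht : 1 ≤ t) :
    fw (upSeq l t) = 2 * t - 1 := by
  have hup : (2 * t - 1) ∈ {s | ∃ r, ∀ F, IsFormation r s F → Contains F (upSeq l t)} :=
    ⟨gBound (2 * t - 1) l, upper l t hl ht⟩
  have hne : {s | ∃ r, ∀ F, IsFormation r s F → Contains F (upSeq l t)}.Nonempty := ⟨_, hup⟩
  unfold fw
  apply le_antisymm (Nat.sInf_le hup)
  by_contra hcon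
  push_neg at hcon
  obtain ⟨r, hr⟩ := Nat.sInf_mem hne
  have hle : sInf {s | ∃ r, ∀ F, IsFormation r s F → Contains F (upSeq l t)} ≤ 2 * t - 2 := by
    omega
  have h2 : ∀ F, IsFormation r (2 * t - 2) F → Contains F (upSeq l t) :=
    formation_mono hle _ hr
  exact not_contains_alt l t r hl ht (h2 _ (isFormation_altSeq r (2 * t - 2)))
end

section
/- For every c ≥ 2 and every permutation π of {1,...,c}: if a is the least k such that I_π^k contains the increasing sequence I_c as a subsequence, and b is the least k such that I_π^k contains the decreasing sequence D_c as a subsequence, then a + b = c + 1. -/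
namespace Stmt10

/-- greedy "number of copies" needed -/
def nd (p : List ℕ) : List ℕ → ℕ
  | [] => 0
  | a :: t => nd p t + (match t.head? with
      | none => 1
      | some b => if p.idxOf b ≤ p.idxOf a then 1 else 0)

@[simp] lemma nd_nil (p : List ℕ) : nd p [] = 0 := rfl
@[simp] lemma nd_single (p a : ℕ → ℕ) : True := trivial

lemma nd_singleton (p : List ℕ) (a : ℕ) : nd p [a] = 1 := rfl

lemma nd_cons_cons (p : List ℕ) (a b : ℕ) (t : List ℕ) :
    nd p (a :: b :: t) = nd p (b :: t) + if p.idxOf b ≤ p.idxOf a then 1 else 0 := rfl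

lemma rep_zero (l : List ℕ) : rep l 0 = [] := rfl

lemma rep_succ (l : List ℕ) (k : ℕ) : rep l (k + 1) = l ++ rep l k := by
  simp [rep, List.replicate_succ]

lemma rep_add (l : List ℕ) (m n : ℕ) : rep l (m + n) = rep l m ++ rep l n := by
  induction m with
  | zero => rw [Nat.zero_add]; rfl
  | succ m ih => rw [Nat.succ_add, rep_succ, rep_succ, ih, List.append_assoc]

lemma rep_mono (l : List ℕ) {m n : ℕ} (h : m ≤ n) : (rep l m).Sublist (rep l n) := by
  obtain ⟨d, rfl⟩ := Nat.exists_eq_add_of_le h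
  rw [rep_add]
  exact List.sublist_append_left _ _

lemma nd_le_one_of_chain (p : List ℕ) :
    ∀ u : List ℕ, u.IsChain (fun a b => p.idxOf a < p.idxOf b) → nd p u ≤ 1
  | [], _ => by simp
  | [a], _ => le_refl 1
  | a :: b :: t, h => by
    rw [List.isChain_cons_cons] at h
    rw [nd_cons_cons, if_neg (by omega)]
    simpa using nd_le_one_of_chain p (b :: t) h.2

lemma nd_append_le (p : List ℕ) :
    ∀ u v : List ℕ, nd p (u ++ v) ≤ nd p u + nd p v
  | [], v => by simp
  | [a], v => by
    cases v with
    | nil => simp [nd_singleton]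
    | cons b t =>
        simp only [List.singleton_append, nd_cons_cons, nd_singleton]
        split <;> omega
  | a :: b :: t, v => by
    have := nd_append_le p (b :: t) v
    simp only [List.cons_append, nd_cons_cons] at *
    split <;> omega

lemma nd_le_of_sublist (p : List ℕ) (hp : p.Nodup) :
    ∀ (k : ℕ) (u : List ℕ), u.Sublist (rep p k) → nd p u ≤ k := by
  intro k
  induction k with
  | zero => intro u h; rw [rep_zero, List.sublist_nil] at h; simp [h]
  | succ k ih =>
    intro u h
    rw [rep_succ, List.sublist_append_iff] at h
    obtain ⟨u1, u2, rfl, h1, h2⟩ := h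
    have hc : u1.IsChain (fun a b => p.idxOf a < p.idxOf b) := by
      refine List.Pairwise.isChain (List.Pairwise.sublist h1 ?_)
      rw [List.pairwise_iff_getElem]
      intro i j hi hj hij
      rwa [hp.idxOf_getElem i hi, hp.idxOf_getElem j hj]
    have := nd_le_one_of_chain p u1 hc
    have := nd_append_le p u1 u2
    have := ih u2 h2
    omega

lemma sublist_of_pairwise (p : List ℕ) :
    ∀ (u : List ℕ) (n : ℕ), (∀ x ∈ u, x ∈ p) →
      u.Pairwise (fun a b => p.idxOf a < p.idxOf b) →
      (∀ x ∈ u, n ≤ p.idxOf x) → u.Sublist (p.drop n)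
  | [], n, _, _, _ => List.nil_sublist _
  | a :: t, n, hmem, hpw, hn => by
    have ha : a ∈ p := hmem a (by simp)
    have hlt : p.idxOf a < p.length := List.idxOf_lt_length_iff.2 ha
    rw [List.pairwise_cons] at hpw
    have ht : t.Sublist (p.drop (p.idxOf a + 1)) :=
      sublist_of_pairwise p t (p.idxOf a + 1)
        (fun x hx => hmem x (by simp [hx]))
        hpw.2 (fun x hx => hpw.1 x hx)
    have hstep : p.drop (p.idxOf a) = a :: p.drop (p.idxOf a + 1) := by
      rw [List.drop_eq_getElem_cons hlt, List.getElem_idxOf hlt]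
    have : (a :: t).Sublist (p.drop (p.idxOf a)) := by
      rw [hstep]; exact ht.cons_cons a
    exact this.trans (List.drop_sublist_drop_left p (hn a (by simp)))

/-- greedy split -/
def ti (p : List ℕ) : List ℕ → List ℕ × List ℕ
  | [] => ([], [])
  | [a] => ([a], [])
  | a :: b :: t =>
      if p.idxOf a < p.idxOf b then
        ((ti p (b :: t)).1.cons a, (ti p (b :: t)).2)
      else ([a], b :: t)

lemma ti_append (p : List ℕ) : ∀ u : List ℕ, (ti p u).1 ++ (ti p u).2 = u
  | [] => rfl
  | [a] => rfl
  | a :: b :: t => by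
    rw [ti]
    split
    · simpa using ti_append p (b :: t)
    · rfl

lemma ti_head (p : List ℕ) : ∀ (a : ℕ) (t : List ℕ), ∃ w, (ti p (a :: t)).1 = a :: w
  | a, [] => ⟨[], rfl⟩
  | a, b :: t => by
    rw [ti]
    split
    · exact ⟨_, rfl⟩
    · exact ⟨[], rfl⟩

lemma ti_nd (p : List ℕ) : ∀ (a : ℕ) (t : List ℕ),
    nd p (a :: t) = nd p (ti p (a :: t)).2 + 1
  | a, [] => rfl
  | a, b :: t => by
    by_cases h : p.idxOf a < p.idxOf b
    · rw [ti, if_pos h, nd_cons_cons, if_neg (by omega), ti_nd p b t]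
    · rw [ti, if_neg h, nd_cons_cons, if_pos (by omega)]

lemma ti_chain (p : List ℕ) : ∀ u : List ℕ,
    (ti p u).1.IsChain (fun a b => p.idxOf a < p.idxOf b)
  | [] => List.isChain_nil
  | [a] => by simp [ti]
  | a :: b :: t => by
    rw [ti]
    split
    · rename_i h
      obtain ⟨w, hw⟩ := ti_head p b t
      have := ti_chain p (b :: t)
      rw [hw] at this ⊢
      exact List.isChain_cons_cons.2 ⟨h, this⟩
    · simp

lemma sublist_rep_nd_aux (p : List ℕ) :
    ∀ (n : ℕ) (u : List ℕ), u.length ≤ n → (∀ x ∈ u, x ∈ p) →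
      u.Sublist (rep p (nd p u)) := by
  intro n
  induction n with
  | zero =>
    intro u hlen _
    rw [List.length_eq_zero_iff.1 (Nat.le_zero.1 hlen)]
    exact List.nil_sublist _
  | succ n ih =>
    intro u hlen hmem
    cases u with
    | nil => exact List.nil_sublist _
    | cons a t =>
      obtain ⟨w, hw⟩ := ti_head p a t
      have hsplit := ti_append p (a :: t)
      set u1 := (ti p (a :: t)).1 with hu1
      set u2 := (ti p (a :: t)).2 with hu2
      have hlen2 : u2.length ≤ n := by
        have := congrArg List.length hsplit
        simp only [List.length_append, List.length_cons] at this
        rw [hw] at this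
        simp only [List.length_cons] at this
        simp only [List.length_cons] at hlen
        omega
      have hmem2 : ∀ x ∈ u2, x ∈ p := by
        intro x hx
        exact hmem x (by rw [← hsplit]; exact List.mem_append_right _ hx)
      have h2 : u2.Sublist (rep p (nd p u2)) := ih u2 hlen2 hmem2
      have hpw : u1.Pairwise (fun a b => p.idxOf a < p.idxOf b) := by
        haveI : IsTrans ℕ (fun a b => p.idxOf a < p.idxOf b) :=
          ⟨fun _ _ _ => Nat.lt_trans⟩
        exact List.isChain_iff_pairwise.1 (ti_chain p (a :: t))
      have h1 : u1.Sublist p := by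
        have := sublist_of_pairwise p u1 0
          (fun x hx => hmem x (by rw [← hsplit]; exact List.mem_append_left _ hx))
          hpw (fun x _ => Nat.zero_le _)
        simpa using this
      have hfin : (u1 ++ u2).Sublist (p ++ rep p (nd p u2)) := h1.append h2
      rw [hsplit] at hfin
      have hnd : nd p (a :: t) = nd p u2 + 1 := ti_nd p a t
      have hrepeq : rep p (nd p (a :: t)) = p ++ rep p (nd p u2) := by
        rw [hnd, Nat.add_comm, rep_add]
        congr 1
        simp [rep]
      rw [hrepeq]
      exact hfin

lemma sublist_rep_nd (p : List ℕ) (u : List ℕ) (hmem : ∀ x ∈ u, x ∈ p) :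
    u.Sublist (rep p (nd p u)) :=
  sublist_rep_nd_aux p u.length u le_rfl hmem

lemma nd_snoc_snoc (p : List ℕ) : ∀ (w : List ℕ) (b a : ℕ),
    nd p (w ++ [b, a]) =
      nd p (w ++ [b]) + (if p.idxOf a ≤ p.idxOf b then 1 else 0)
  | [], b, a => by
    simp only [List.nil_append]
    rw [nd_cons_cons, nd_singleton, nd_singleton]
  | x :: w', b, a => by
    have hh : (w' ++ [b, a]).head? = (w' ++ [b]).head? := by
      cases w' <;> simp
    have key : ∀ v v' : List ℕ, v.head? = v'.head? →
        nd p (x :: v) - nd p v = nd p (x :: v') - nd p v' ∧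
          nd p v ≤ nd p (x :: v) ∧ nd p v' ≤ nd p (x :: v') := by
      intro v v' hv
      constructor
      · show nd p (x :: v) - nd p v = nd p (x :: v') - nd p v'
        rw [nd, nd, hv]
        omega
      constructor
      · rw [nd]; omega
      · rw [nd]; omega
    have := key (w' ++ [b, a]) (w' ++ [b]) hh
    have hrec := nd_snoc_snoc p w' b a
    simp only [List.cons_append] at *
    omega

lemma nd_add_nd_reverse (p : List ℕ) : ∀ u : List ℕ, u ≠ [] →
    u.IsChain (fun a b => p.idxOf a ≠ p.idxOf b) →
      nd p u + nd p u.reverse = u.length + 1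
  | [], h, _ => absurd rfl h
  | [a], _, _ => rfl
  | a :: b :: t, _, hch => by
    rw [List.isChain_cons_cons] at hch
    have ih := nd_add_nd_reverse p (b :: t) (by simp) hch.2
    have hrev : (a :: b :: t).reverse = t.reverse ++ [b, a] := by
      simp
    have hrev2 : (b :: t).reverse = t.reverse ++ [b] := by simp
    rw [hrev, nd_snoc_snoc, ← hrev2, nd_cons_cons]
    have hne := hch.1
    simp only [List.length_cons] at *
    rcases Nat.lt_or_ge (p.idxOf a) (p.idxOf b) with h | h
    · rw [if_neg (by omega), if_pos (by omega)]
      omega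
    · rw [if_pos (by omega), if_neg (by omega)]
      omega

lemma indexOf_inj' {p : List ℕ} {a b : ℕ} (ha : a ∈ p) (hb : b ∈ p)
    (h : p.idxOf a = p.idxOf b) : a = b :=
  (List.idxOf_inj ha).1 h

lemma sInf_sublist_rep (p : List ℕ) (hp : p.Nodup) (u : List ℕ)
    (hmem : ∀ x ∈ u, x ∈ p) :
    sInf {k | u.Sublist (rep p k)} = nd p u := by
  have hset : {k | u.Sublist (rep p k)} = Set.Ici (nd p u) := by
    ext k
    simp only [Set.mem_setOf_eq, Set.mem_Ici]
    constructor
    · exact nd_le_of_sublist p hp k u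
    · intro hk
      exact (sublist_rep_nd p u hmem).trans (rep_mono p hk)
  rw [hset, csInf_Ici]

lemma chain'_range'' (R : ℕ → ℕ → Prop) :
    ∀ (n s : ℕ), (∀ m, s ≤ m → m + 1 < s + n → R m (m + 1)) →
      List.IsChain R (List.range' s n)
  | 0, s, _ => List.isChain_nil
  | 1, s, _ => by simp
  | n + 2, s, h => by
    rw [List.range'_succ, List.range'_succ]
    refine List.isChain_cons_cons.2 ⟨h s le_rfl (by omega), ?_⟩
    rw [← List.range'_succ]
    exact chain'_range'' R (n + 1) (s + 1) (fun m hm hlt => h m (by omega) (by omega))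

end Stmt10

open Stmt10

theorem stmt10 (c : ℕ) (hc : 2 ≤ c) (π : Equiv.Perm (Fin c)) :
    sInf {k | (Ic c).Sublist (rep (Iperm π) k)} +
      sInf {k | (Dc c).Sublist (rep (Iperm π) k)} = c + 1 := by
  set p := Iperm π with hpdef
  have hp : p.Nodup := by
    rw [hpdef, Iperm, List.nodup_ofFn]
    intro i j h
    simp only at h
    exact π.injective (Fin.val_injective (Nat.succ_injective h))
  have hmemI : ∀ x ∈ Ic c, x ∈ p := by
    intro x hx
    rw [Ic, List.mem_range'] at hx
    obtain ⟨i, hi, rfl⟩ := hx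
    rw [hpdef, Iperm, List.mem_ofFn]
    refine ⟨π.symm ⟨i, hi⟩, ?_⟩
    simp
    omega
  have hmemD : ∀ x ∈ Dc c, x ∈ p := by
    intro x hx
    rw [Dc, List.mem_reverse] at hx
    exact hmemI x hx
  have hch : (Ic c).IsChain (fun a b => p.idxOf a ≠ p.idxOf b) := by
    rw [Ic]
    refine chain'_range'' _ c 1 (fun m hm hlt => ?_)
    intro heq
    have h1 : m ∈ p := hmemI m (by rw [Ic, List.mem_range']; exact ⟨m - 1, by omega, by omega⟩)
    have h2 : m + 1 ∈ p := hmemI (m + 1) (by rw [Ic, List.mem_range']; exact ⟨m, by omega, by omega⟩)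
    have := indexOf_inj' h1 h2 heq
    omega
  have hlen : (Ic c).length = c := by rw [Ic, List.length_range']
  have hne : Ic c ≠ [] := by
    intro h
    rw [h] at hlen
    simp at hlen
    omega
  rw [sInf_sublist_rep p hp (Ic c) hmemI, sInf_sublist_rep p hp (Dc c) hmemD]
  have hsum := nd_add_nd_reverse p (Ic c) hne hch
  rw [Dc]
  omega
end

section
/- Fix c ≥ 2 and let u = I_c^{e_1} D_c^{e_2} I_c^{e_3} ... L_c^{e_n} with all e_i > 0 (L = I if n odd, D if n even). Then r(u) = 2(e_1 + ... + e_n) - n, where r(u) is the smallest k such that alt(c,k) contains u. -/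
/-! Auxiliary definitions -/

def ab2 (x y : ℕ) : ℕ → List ℕ
  | 0 => []
  | k+1 => x :: y :: ab2 x y k

def JW (x y : ℕ) : List ℕ → List ℕ
  | [] => []
  | k :: e => ab2 x y k ++ JW y x e

def altB (p q : List ℕ) : List ℕ → List ℕ
  | [] => []
  | k :: e => rep p k ++ altB q p e

def blocksW (p q : List ℕ) : ℕ → List ℕ
  | 0 => []
  | m+1 => p ++ blocksW q p m

lemma join_cons' (l : List ℕ) (L : List (List ℕ)) : (l :: L).flatten = l ++ L.flatten := rfl

def dlen (p : ℕ) (l : List ℕ) : ℕ := (l.destutter' (· ≠ ·) p).length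

lemma dlen_nil (p : ℕ) : dlen p [] = 1 := rfl

lemma dlen_cons (p x : ℕ) (l : List ℕ) :
    dlen p (x :: l) = if p ≠ x then dlen x l + 1 else dlen p l := by
  rw [dlen, List.destutter'_cons]
  split <;> simp [dlen]

lemma dlen_le_succ (l : List ℕ) (a b : ℕ) : dlen a l ≤ dlen b l + 1 := by
  cases l with
  | nil => simp [dlen_nil]
  | cons x l =>
    rw [dlen_cons, dlen_cons]
    by_cases hax : a = x <;> by_cases hbx : b = x <;> simp [hax, hbx] <;> omega

lemma dlen_cons_ge (l : List ℕ) (a x : ℕ) : dlen a l ≤ dlen a (x :: l) := by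
  rw [dlen_cons]
  split
  · exact dlen_le_succ l a x
  · exact le_rfl

lemma dlen_mono : ∀ {W V : List ℕ}, W.Sublist V → ∀ a, dlen a W ≤ dlen a V := by
  intro W V h
  induction h with
  | slnil => intro a; exact le_rfl
  | cons x h ih => intro a; exact (ih a).trans (dlen_cons_ge _ a x)
  | cons_cons x h ih =>
    intro a
    rw [dlen_cons, dlen_cons]
    split
    · exact Nat.add_le_add_right (ih x) 1
    · exact ih a

lemma rep_zero (l : List ℕ) : rep l 0 = [] := rfl

lemma rep_succ (l : List ℕ) (k : ℕ) : rep l (k+1) = l ++ rep l k := by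
  simp [rep, List.replicate_succ]

lemma rep_pair (x y : ℕ) : ∀ k, rep [x, y] k = ab2 x y k := by
  intro k
  induction k with
  | zero => rfl
  | succ k ih => rw [rep_succ, ih]; rfl

/-! destutter-length computations for `JW` -/

lemma dlen_ab2 (x y : ℕ) (hxy : x ≠ y) :
    ∀ (k : ℕ) (t : List ℕ) (p : ℕ), 0 < k → p ≠ x →
      dlen p (ab2 x y k ++ t) = 2 * k + dlen y t := by
  intro k
  induction k with
  | zero => omega
  | succ k ih =>
    intro t p _ hp
    show dlen p (x :: y :: (ab2 x y k ++ t)) = _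
    rw [dlen_cons, if_pos hp, dlen_cons, if_pos hxy]
    rcases Nat.eq_zero_or_pos k with hk | hk
    · subst hk; show dlen y ([] ++ t) + 1 + 1 = _; rw [List.nil_append]; omega
    · rw [ih t y hk (Ne.symm hxy)]; omega

lemma dlen_ab2' (x y : ℕ) (hxy : x ≠ y) (k : ℕ) (t : List ℕ) (hk : 0 < k) :
    dlen x (ab2 x y k ++ t) = 2 * k - 1 + dlen y t := by
  obtain ⟨k, rfl⟩ : ∃ k', k = k' + 1 := ⟨k - 1, by omega⟩
  show dlen x (x :: y :: (ab2 x y k ++ t)) = _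
  rw [dlen_cons, if_neg (by simp), dlen_cons, if_pos hxy]
  rcases Nat.eq_zero_or_pos k with hk' | hk'
  · subst hk'; show dlen y ([] ++ t) + 1 = _; rw [List.nil_append]; omega
  · rw [dlen_ab2 x y hxy k t y hk' (Ne.symm hxy)]; omega

lemma len_le_sum : ∀ (e : List ℕ), (∀ i ∈ e, 0 < i) → e.length ≤ e.sum := by
  intro e
  induction e with
  | nil => simp
  | cons k e ih =>
    intro h
    have h1 := h k (List.mem_cons_self)
    have h2 := ih (fun i hi => h i (List.mem_cons_of_mem _ hi))
    simp [List.sum_cons]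
    omega

lemma dlen_JW_head : ∀ (e : List ℕ) (x y : ℕ), e ≠ [] → (∀ i ∈ e, 0 < i) → x ≠ y →
    dlen x (JW x y e) = 2 * e.sum - e.length + 1 := by
  intro e
  induction e with
  | nil => simp
  | cons k e ih =>
    intro x y _ hpos hxy
    have hk : 0 < k := hpos k (List.mem_cons_self)
    show dlen x (ab2 x y k ++ JW y x e) = _
    rw [dlen_ab2' x y hxy k _ hk]
    cases e with
    | nil =>
      show 2 * k - 1 + dlen y [] = _
      rw [dlen_nil]
      simp only [List.sum_cons, List.sum_nil, List.length_cons, List.length_nil]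
      omega
    | cons k' e' =>
      rw [ih y x (by simp) (fun i hi => hpos i (List.mem_cons_of_mem _ hi)) (Ne.symm hxy)]
      have := len_le_sum (k' :: e') (fun i hi => hpos i (List.mem_cons_of_mem _ hi))
      simp only [List.sum_cons, List.length_cons] at *
      omega

lemma dlen_JW (e : List ℕ) (x y p : ℕ) (hne : e ≠ []) (hpos : ∀ i ∈ e, 0 < i)
    (hxy : x ≠ y) (hp : p ≠ x) :
    dlen p (JW x y e) = 2 * e.sum - e.length + 2 := by
  cases e with
  | nil => exact absurd rfl hne
  | cons k e =>
    have hk : 0 < k := hpos k (List.mem_cons_self)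
    show dlen p (ab2 x y k ++ JW y x e) = _
    rw [dlen_ab2 x y hxy k _ p hk hp]
    cases e with
    | nil =>
      show 2 * k + dlen y [] = _
      rw [dlen_nil]
      simp only [List.sum_cons, List.sum_nil, List.length_cons, List.length_nil]
      omega
    | cons k' e' =>
      rw [dlen_JW_head (k' :: e') y x (by simp)
        (fun i hi => hpos i (List.mem_cons_of_mem _ hi)) (Ne.symm hxy)]
      have := len_le_sum (k' :: e') (fun i hi => hpos i (List.mem_cons_of_mem _ hi))
      simp only [List.sum_cons, List.length_cons] at *
      omega

/-! destutter-length bounds for `blocksW` -/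

lemma dlen_blocksW_head (x y : ℕ) (hxy : x ≠ y) :
    ∀ m, dlen x (blocksW [x, y] [y, x] m) = m + 1 := by
  intro m
  induction m generalizing x y with
  | zero => rfl
  | succ m ih =>
    show dlen x (x :: y :: blocksW [y, x] [x, y] m) = _
    rw [dlen_cons, if_neg (by simp), dlen_cons, if_pos hxy, ih y x (Ne.symm hxy)]

lemma blocksW_nil : ∀ m, blocksW [] [] m = [] := by
  intro m
  induction m with
  | zero => rfl
  | succ m ih => show [] ++ blocksW [] [] m = []; simpa using ih

lemma dlen_single_head (x : ℕ) : ∀ m, dlen x (blocksW [x] [x] m) = 1 := by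
  intro m
  induction m with
  | zero => rfl
  | succ m ih =>
    show dlen x (x :: blocksW [x] [x] m) = 1
    rw [dlen_cons, if_neg (by simp), ih]

lemma dlen_blocksW (L : List ℕ) (hlen : L.length ≤ 2) (hnd : L.Nodup) :
    ∀ (m : ℕ) (p : ℕ), dlen p (blocksW L L.reverse m) ≤ m + 2 := by
  intro m p
  match L, hlen, hnd with
  | [], _, _ =>
    rw [show ([] : List ℕ).reverse = [] from rfl, blocksW_nil, dlen_nil]; omega
  | [x], _, _ =>
    rw [show [x].reverse = [x] from rfl]
    cases m with
    | zero => rw [show blocksW [x] [x] 0 = [] from rfl, dlen_nil]; omega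
    | succ m =>
      show dlen p (x :: blocksW [x] [x] m) ≤ _
      rw [dlen_cons]
      split
      · rw [dlen_single_head]; omega
      · rename_i h
        simp only [ne_eq, not_not] at h
        rw [h, dlen_single_head]
        omega
  | [x, y], _, hnd =>
    have hxy : x ≠ y := by simp at hnd; exact hnd
    rw [show [x, y].reverse = [y, x] from rfl]
    cases m with
    | zero => rw [show blocksW [x,y] [y,x] 0 = [] from rfl, dlen_nil]; omega
    | succ m =>
      show dlen p (x :: y :: blocksW [y, x] [x, y] m) ≤ _
      rw [dlen_cons]
      split
      · rw [dlen_cons, if_pos hxy, dlen_blocksW_head y x (Ne.symm hxy)]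
      · rename_i h
        simp only [ne_eq, not_not] at h
        rw [h, dlen_cons, if_pos hxy, dlen_blocksW_head y x (Ne.symm hxy)]
        omega
  | _ :: _ :: _ :: _, hlen, _ => simp at hlen

/-! commuting map/filter with the block structures -/

lemma filter_map_rep (f : ℕ → ℕ) (P : ℕ → Bool) (l : List ℕ) :
    ∀ k, ((rep l k).map f).filter P = rep ((l.map f).filter P) k := by
  intro k
  induction k with
  | zero => rfl
  | succ k ih => rw [rep_succ, rep_succ, List.map_append, List.filter_append, ih]

lemma filter_map_altB (f : ℕ → ℕ) (P : ℕ → Bool) :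
    ∀ (e : List ℕ) (p q : List ℕ),
      ((altB p q e).map f).filter P = altB ((p.map f).filter P) ((q.map f).filter P) e := by
  intro e
  induction e with
  | nil => intro p q; rfl
  | cons k e ih =>
    intro p q
    show ((rep p k ++ altB q p e).map f).filter P = _
    rw [List.map_append, List.filter_append, filter_map_rep, ih]
    rfl

lemma filter_blocksW (P : ℕ → Bool) :
    ∀ (m : ℕ) (p q : List ℕ),
      (blocksW p q m).filter P = blocksW (p.filter P) (q.filter P) m := by
  intro m
  induction m with
  | zero => intro p q; rfl
  | succ m ih =>
    intro p q
    show (p ++ blocksW q p m).filter P = _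
    rw [List.filter_append, ih]
    rfl

/-! representations of `altSeq` and `altBlocks` -/

lemma altSeq_eq_blocksW (c : ℕ) : ∀ (m : ℕ), altSeq c m = blocksW (Ic c) (Dc c) m := by
  have key : ∀ (m : ℕ) (p q : List ℕ),
      ((List.range m).map (fun i => if i % 2 = 0 then p else q)).flatten = blocksW p q m := by
    intro m
    induction m with
    | zero => intro p q; rfl
    | succ m ih =>
      intro p q
      rw [List.range_succ_eq_map, List.map_cons, List.map_map]
      have hfun : ((fun i => if i % 2 = 0 then p else q) ∘ Nat.succ)
          = (fun i => if i % 2 = 0 then q else p) := by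
        funext i
        rcases Nat.mod_two_eq_zero_or_one i with h | h
        · have h2 : Nat.succ i % 2 = 1 := by omega
          simp [Function.comp, h, h2]
        · have h2 : Nat.succ i % 2 = 0 := by omega
          simp [Function.comp, h, h2]
      rw [hfun, join_cons', ih]
      norm_num
      rfl
  intro m
  exact key m (Ic c) (Dc c)

lemma altBlocks_eq_altB (c : ℕ) (e : List ℕ) : altBlocks c e = altB (Ic c) (Dc c) e := by
  have key : ∀ (e : List ℕ) (i : ℕ),
      ((e.zipIdx i).map (fun p => rep (if p.2 % 2 = 0 then Ic c else Dc c) p.1)).flatten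
        = altB (if i % 2 = 0 then Ic c else Dc c) (if i % 2 = 0 then Dc c else Ic c) e := by
    intro e
    induction e with
    | nil => intro i; rfl
    | cons k e ih =>
      intro i
      rw [List.zipIdx_cons, List.map_cons, join_cons', ih (i + 1)]
      rcases Nat.mod_two_eq_zero_or_one i with h | h
      · have h2 : (i + 1) % 2 = 1 := by omega
        norm_num [h, h2]
        rfl
      · have h2 : (i + 1) % 2 = 0 := by omega
        norm_num [h, h2]
        rfl
  have h0 := key e 0
  simp only [show (0 : ℕ) % 2 = 0 from rfl, if_pos] at h0
  exact h0

lemma altB_pair : ∀ (e : List ℕ) (a b : ℕ), altB [a, b] [b, a] e = JW a b e := by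
  intro e
  induction e with
  | nil => intro a b; rfl
  | cons k e ih =>
    intro a b
    show rep [a, b] k ++ altB [b, a] [a, b] e = ab2 a b k ++ JW b a e
    rw [rep_pair, ih]

/-! the two-letter filter of `Ic`/`Dc` -/

lemma Ic_decomp (c : ℕ) (hc : 2 ≤ c) :
    Ic c = 1 :: (List.range' 2 (c - 2) ++ [c]) := by
  obtain ⟨d, rfl⟩ : ∃ d, c = d + 2 := ⟨c - 2, by omega⟩
  have h2 : d + 2 - 2 = d := by omega
  rw [h2, Ic]
  have e1 := List.range'_append (s := 1) (m := 1) (n := d + 1) (step := 1)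
  have e2 := List.range'_append (s := 2) (m := d) (n := 1) (step := 1)
  simp only [one_mul] at e1 e2
  rw [Nat.add_comm 1 (d + 1)] at e1
  rw [Nat.add_comm 2 d] at e2
  conv_lhs => rw [show d + 2 = d + 1 + 1 from rfl, ← e1, show (1 : ℕ) + 1 = 2 from rfl, ← e2]
  simp [List.range'_one]

lemma filter_map_Ic (c : ℕ) (hc : 2 ≤ c) (f : ℕ → ℕ) (hinj : Function.Injective f) :
    ((Ic c).map f).filter (fun x => decide (x = f 1 ∨ x = f c)) = [f 1, f c] := by
  rw [Ic_decomp c hc]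
  rw [List.map_cons, List.map_append, List.filter_cons, List.filter_append]
  have h1 : (decide (f 1 = f 1 ∨ f 1 = f c)) = true := by simp
  have hmid : ((List.range' 2 (c-2)).map f).filter (fun x => decide (x = f 1 ∨ x = f c)) = [] := by
    rw [List.filter_eq_nil_iff]
    intro x hx
    simp only [List.mem_map, List.mem_range'] at hx
    obtain ⟨j, ⟨hj1, hj2⟩, rfl⟩ := hx
    simp only [decide_eq_true_eq, not_or]
    constructor
    · intro h; have := hinj h; omega
    · intro h; have := hinj h; omega
  rw [hmid]
  simp

lemma filter_map_Dc (c : ℕ) (hc : 2 ≤ c) (f : ℕ → ℕ) (hinj : Function.Injective f) :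
    ((Dc c).map f).filter (fun x => decide (x = f 1 ∨ x = f c)) = [f c, f 1] := by
  rw [Dc, List.map_reverse, List.filter_reverse, filter_map_Ic c hc f hinj]
  rfl

/-! upper bound : block-level embedding -/

lemma blocksW_two (p q : List ℕ) (m : ℕ) :
    blocksW p q (m + 2) = p ++ (q ++ blocksW p q m) := rfl

lemma UL1 : ∀ (k : ℕ) (p q t : List ℕ) (M : ℕ), 0 < k → t.Sublist (blocksW q p M) →
    (rep p k ++ t).Sublist (blocksW p q (2 * k - 1 + M)) := by
  intro k
  induction k with
  | zero => omega
  | succ k ih =>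
    intro p q t M _ ht
    rcases Nat.eq_zero_or_pos k with hk | hk
    · subst hk
      have h1 : 2 * 1 - 1 + M = M + 1 := by omega
      rw [h1]
      show (rep p 1 ++ t).Sublist (p ++ blocksW q p M)
      rw [show rep p 1 = p ++ [] from by rw [rep_succ, rep_zero]]
      rw [List.append_assoc, List.nil_append]
      exact ht.append_left p
    · have h1 : 2 * (k + 1) - 1 + M = (2 * k - 1 + M) + 2 := by omega
      rw [h1, blocksW_two, rep_succ, List.append_assoc]
      refine (((ih p q t M hk ht).trans (List.sublist_append_right q _))).append_left p

lemma UL : ∀ (e : List ℕ), e ≠ [] → (∀ i ∈ e, 0 < i) → ∀ p q : List ℕ,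
    (altB p q e).Sublist (blocksW p q (2 * e.sum - e.length)) := by
  intro e
  induction e with
  | nil => simp
  | cons k e ih =>
    intro _ hpos p q
    have hk : 0 < k := hpos k (List.mem_cons_self)
    show (rep p k ++ altB q p e).Sublist _
    cases e with
    | nil =>
      have h1 : 2 * List.sum [k] - List.length [k] = 2 * k - 1 + 0 := by
        simp only [List.sum_cons, List.sum_nil, List.length_cons, List.length_nil]
        omega
      rw [h1]
      exact UL1 k p q (altB q p []) 0 hk (List.nil_sublist _)
    | cons k' e' =>
      have hpos' : ∀ i ∈ k' :: e', 0 < i := fun i hi => hpos i (List.mem_cons_of_mem _ hi)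
      have hls := len_le_sum (k' :: e') hpos'
      have h1 : 2 * (k :: k' :: e').sum - (k :: k' :: e').length
          = 2 * k - 1 + (2 * (k' :: e').sum - (k' :: e').length) := by
        simp only [List.sum_cons, List.length_cons] at *
        omega
      rw [h1]
      exact UL1 k p q _ _ hk (ih (by simp) hpos' q p)

lemma length_le_two (L : List ℕ) (a b : ℕ) (hnd : L.Nodup) (h : ∀ x ∈ L, x = a ∨ x = b) :
    L.length ≤ 2 := by
  match L with
  | [] => simp
  | [_] => simp
  | [_, _] => simp
  | x :: y :: z :: t =>
    exfalso
    simp only [List.nodup_cons, List.mem_cons, not_or] at hnd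
    have hx := h x (by simp)
    have hy := h y (by simp)
    have hz := h z (by simp)
    rcases hx with rfl | rfl <;> rcases hy with h' | h' <;> rcases hz with h'' | h'' <;>
      simp_all

theorem stmt14 (c : ℕ) (hc : 2 ≤ c) (e : List ℕ) (he : ∀ x ∈ e, 0 < x)
    (hne : e ≠ []) :
    rval c (altBlocks c e) = 2 * e.sum - e.length := by
  have hmem : Contains (altSeq c (2 * e.sum - e.length)) (altBlocks c e) := by
    refine ⟨id, Function.injective_id, ?_⟩
    rw [List.map_id, altBlocks_eq_altB, altSeq_eq_blocksW]
    exact UL e hne he (Ic c) (Dc c)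
  apply le_antisymm
  · exact Nat.sInf_le hmem
  · show 2 * e.sum - e.length ≤ sInf {k | Contains (altSeq c k) (altBlocks c e)}
    have hne' : Set.Nonempty {k | Contains (altSeq c k) (altBlocks c e)} :=
      ⟨2 * e.sum - e.length, hmem⟩
    apply le_csInf hne'
    intro m hm
    obtain ⟨f, hinj, hsub⟩ :=
      (hm : ∃ f : ℕ → ℕ, Function.Injective f ∧ ((altBlocks c e).map f).Sublist (altSeq c m))
    have hab : f 1 ≠ f c := fun h => by have := hinj h; omega
    set P : ℕ → Bool := fun x => decide (x = f 1 ∨ x = f c) with hP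
    have hWV : (((altBlocks c e).map f).filter P).Sublist ((altSeq c m).filter P) :=
      hsub.filter P
    have hW : ((altBlocks c e).map f).filter P = JW (f 1) (f c) e := by
      rw [altBlocks_eq_altB, filter_map_altB, filter_map_Ic c hc f hinj,
        filter_map_Dc c hc f hinj, altB_pair]
    set L : List ℕ := (Ic c).filter P with hLdef
    have hV : (altSeq c m).filter P = blocksW L L.reverse m := by
      rw [altSeq_eq_blocksW, filter_blocksW]
      congr 1
      rw [Dc, List.filter_reverse]
    rw [hW, hV] at hWV
    have hnd : L.Nodup := List.Nodup.filter _ (by rw [Ic]; exact List.nodup_range' (s := 1) (n := c))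
    have hmem2 : ∀ x ∈ L, x = f 1 ∨ x = f c := by
      intro x hx
      have := List.of_mem_filter hx
      rw [hP] at this
      simpa using this
    have h2 := dlen_blocksW L (length_le_two L (f 1) (f c) hnd hmem2) hnd m (f 1 + 1)
    have h1 : dlen (f 1 + 1) (JW (f 1) (f c) e) = 2 * e.sum - e.length + 2 :=
      dlen_JW e (f 1) (f c) (f 1 + 1) hne he hab (by omega)
    have h3 := dlen_mono hWV (f 1 + 1)
    omega
end

section
/- For every c ≥ 2 and k ≥ 1, fw(I_c^k D_c) = c + 2k - 1. In particular, the (c, c+2k-2)-formation obtained by concatenating alt(c, 2k-2) and I_c^c avoids I_π^k D_π for every permutation π of {1,...,c}. -/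
lemma chain_lt (w : ℕ → ℕ) : ∀ (a b : ℕ), a < b → (∀ t, a ≤ t → t < b → w t < w (t+1)) →
    w a < w b := by
  intro a b hab
  induction b with
  | zero => omega
  | succ b ih =>
    intro h
    rcases Nat.lt_or_ge a b with hb | hb
    · exact lt_trans (ih hb (fun t ht ht' => h t ht (by omega))) (h b (by omega) (by omega))
    · have : a = b := by omega
      subst this
      exact h a le_rfl (by omega)

lemma chain_gt (w : ℕ → ℕ) : ∀ (a b : ℕ), a < b → (∀ t, a ≤ t → t < b → w (t+1) < w t) →
    w b < w a := by
  intro a b hab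
  induction b with
  | zero => omega
  | succ b ih =>
    intro h
    rcases Nat.lt_or_ge a b with hb | hb
    · exact lt_trans (h b (by omega) (by omega)) (ih hb (fun t ht ht' => h t ht (by omega)))
    · have : a = b := by omega
      subst this
      exact h a le_rfl (by omega)

lemma main_no_g (L : List ℕ) (c k : ℕ) (hc : 2 ≤ c) (hk : 1 ≤ k) (hL : L.length = c)
    (w g : ℕ → ℕ)
    (hcopy : ∀ j, j < k → ∀ i, i < c → w (j*c + i) = L.getD i 0)
    (htail : ∀ s, s < c → w (k*c + s) = L.getD (c - 1 - s) 0)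
    (hmono : Monotone g) (h0 : 1 ≤ g 0) (hub : g ((k+1)*c - 1) ≤ 2*k + c - 2)
    (hpair : ∀ i, i + 1 < (k+1)*c → g i = g (i+1) →
      ((g i % 2 = 0 ∧ g i ≤ 2*k - 2) → w (i+1) < w i) ∧
      (¬(g i % 2 = 0 ∧ g i ≤ 2*k - 2) → w i < w (i+1))) : False := by
  have hMe : k*c + c = (k+1)*c := by ring
  have hkc : c ≤ k * c := by nlinarith
  -- advance lemmas
  have adv1 : ∀ i, i + 1 < (k+1)*c → (g i % 2 = 0 ∧ g i ≤ 2*k - 2) → w i < w (i+1) →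
      g i + 1 ≤ g (i+1) := by
    intro i hi hP hasc
    rcases Nat.lt_or_ge (g i) (g (i+1)) with h | h
    · omega
    · have he : g i = g (i+1) := le_antisymm (hmono (by omega)) h
      exact absurd ((hpair i hi he).1 hP) (by omega)
  have adv2 : ∀ i, i + 1 < (k+1)*c → ¬(g i % 2 = 0 ∧ g i ≤ 2*k - 2) → ¬ (w i < w (i+1)) →
      g i + 1 ≤ g (i+1) := by
    intro i hi hP hna
    rcases Nat.lt_or_ge (g i) (g (i+1)) with h | h
    · omega
    · have he : g i = g (i+1) := le_antisymm (hmono (by omega)) h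
      exact absurd ((hpair i hi he).2 hP) hna
  -- the invariant
  have inv : ∀ j, j < k → 2*j+1 ≤ g (j*c) ∨
      (g (j*c) = 2*j ∧ L.getD 0 0 < L.getD 1 0 ∧ L.getD 0 0 < L.getD (c-1) 0) := by
    intro j
    induction j with
    | zero => intro _; left; simpa using h0
    | succ j ih =>
      intro hjk
      have ihj := ih (by omega)
      have h1 : j*c + c = (j+1)*c := by ring
      have h2 : (j+1)*c + c = (j+2)*c := by ring
      have hjck : (j+2)*c ≤ (k+1)*c := Nat.mul_le_mul_right c (by omega)
      have hj1k : (j+1)*c ≤ k*c := Nat.mul_le_mul_right c (by omega)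
      have hABle : g (j*c) ≤ g ((j+1)*c) := hmono (by omega)
      -- window pair index bound
      have hidx : ∀ t, t < c → (j*c + t) + 1 < (k+1)*c := by intro t ht; omega
      -- value facts
      have hv0 : w (j*c) = L.getD 0 0 := by
        have := hcopy j (by omega) 0 (by omega); simpa using this
      have hv0' : w ((j+1)*c) = L.getD 0 0 := by
        have := hcopy (j+1) (by omega) 0 (by omega); simpa using this
      have hvt : ∀ t, t < c → w (j*c + t) = L.getD t 0 := fun t ht => hcopy j (by omega) t ht
      -- a full window on one slot is impossible
      have window : g (j*c) = g ((j+1)*c) → False := by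
        intro hEq
        have hconst : ∀ t, j*c ≤ t → t ≤ (j+1)*c → g t = g (j*c) := by
          intro t ht1 ht2
          exact le_antisymm (hEq ▸ hmono ht2) (hmono ht1)
        by_cases hP : g (j*c) % 2 = 0 ∧ g (j*c) ≤ 2*k - 2
        · have hdesc : ∀ t, j*c ≤ t → t < (j+1)*c → w (t+1) < w t := by
            intro t ht1 ht2
            have he : g t = g (t+1) := by
              rw [hconst t ht1 (by omega), hconst (t+1) (by omega) (by omega)]
            have hPt : g t % 2 = 0 ∧ g t ≤ 2*k - 2 := by
              rw [hconst t ht1 (by omega)]; exact hP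
            exact (hpair t (by omega) he).1 hPt
          have := chain_gt w (j*c) ((j+1)*c) (by omega) hdesc
          rw [hv0, hv0'] at this; omega
        · have hasc : ∀ t, j*c ≤ t → t < (j+1)*c → w t < w (t+1) := by
            intro t ht1 ht2
            have he : g t = g (t+1) := by
              rw [hconst t ht1 (by omega), hconst (t+1) (by omega) (by omega)]
            have hPt : ¬(g t % 2 = 0 ∧ g t ≤ 2*k - 2) := by
              rw [hconst t ht1 (by omega)]; exact hP
            exact (hpair t (by omega) he).2 hPt
          have := chain_lt w (j*c) ((j+1)*c) (by omega) hasc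
          rw [hv0, hv0'] at this; omega
      rcases ihj with hA | ⟨hA, hu1, hu2⟩
      · -- case (a)
        by_cases hB : 2*(j+1)+1 ≤ g ((j+1)*c)
        · left; exact hB
        · -- B ≤ 2j+2
          push_neg at hB
          have hAne : g (j*c) ≠ g ((j+1)*c) := fun h => window h
          have hAeq : g (j*c) = 2*j+1 ∧ g ((j+1)*c) = 2*j+2 := by omega
          obtain ⟨hA', hB'⟩ := hAeq
          -- crossing point
          set r0 := Nat.findGreatest (fun t => g (j*c + t) = 2*j+1) c with hr0def
          have hP0 : g (j*c + 0) = 2*j+1 := by simpa using hA'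
          have hr0spec : g (j*c + r0) = 2*j+1 :=
            Nat.findGreatest_spec (P := fun t => g (j*c + t) = 2*j+1) (m := 0) (by omega) hP0
          have hr0lt : r0 < c := by
            rcases Nat.lt_or_ge r0 c with h | h
            · exact h
            · exfalso
              have : r0 ≤ c := Nat.findGreatest_le c
              have : r0 = c := by omega
              rw [this, h1] at hr0spec; omega
          have hlow : ∀ t, t ≤ r0 → g (j*c + t) = 2*j+1 := by
            intro t ht
            have l1 : g (j*c) ≤ g (j*c + t) := hmono (by omega)
            have l2 : g (j*c + t) ≤ g (j*c + r0) := hmono (by omega)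
            omega
          have hhigh : ∀ t, r0 < t → t ≤ c → g (j*c + t) = 2*j+2 := by
            intro t ht1 ht2
            have l2 : g (j*c + t) ≤ g ((j+1)*c) := hmono (by omega)
            have l1 : g (j*c) ≤ g (j*c + t) := hmono (by omega)
            have hne := Nat.findGreatest_is_greatest (P := fun t => g (j*c + t) = 2*j+1) (by rw [hr0def] at ht1; exact ht1) ht2
            omega
          have hPodd : ¬((2*j+1) % 2 = 0 ∧ 2*j+1 ≤ 2*k - 2) := by omega
          have hPeven : (2*j+2) % 2 = 0 ∧ 2*j+2 ≤ 2*k - 2 := by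
            constructor
            · omega
            · omega
          have hascpre : ∀ t, t + 1 ≤ r0 → w (j*c + t) < w (j*c + t + 1) := by
            intro t ht
            have he : g (j*c + t) = g (j*c + t + 1) := by
              rw [hlow t (by omega), show j*c + t + 1 = j*c + (t+1) by ring, hlow (t+1) ht]
            have := (hpair (j*c + t) (hidx t (by omega)) he).2 (by rw [hlow t (by omega)]; exact hPodd)
            exact this
          have hdescpost : ∀ t, r0 < t → t + 1 ≤ c → w (j*c + t + 1) < w (j*c + t) := by
            intro t ht1 ht2
            have he : g (j*c + t) = g (j*c + t + 1) := by
              rw [hhigh t ht1 (by omega), show j*c + t + 1 = j*c + (t+1) by ring,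
                hhigh (t+1) (by omega) ht2]
            exact (hpair (j*c + t) (hidx t (by omega)) he).1
              (by rw [hhigh t ht1 (by omega)]; exact hPeven)
          -- u2
          have hu2 : L.getD 0 0 < L.getD (c-1) 0 := by
            rcases Nat.lt_or_ge r0 (c-1) with hrc | hrc
            · -- junction pair is a descent
              have := hdescpost (c-1) hrc (by omega)
              rw [show j*c + (c-1) + 1 = (j+1)*c by omega] at this
              rw [hv0', hvt (c-1) (by omega)] at this
              exact this
            · -- r0 = c-1 : prefix ascents all the way
              have hr : r0 = c - 1 := by omega
              have := chain_lt w (j*c) (j*c + (c-1)) (by omega)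
                (fun t ht1 ht2 => by
                  have h3 := hascpre (t - j*c) (by omega)
                  rw [show j*c + (t - j*c) = t by omega] at h3
                  exact h3)
              rw [hv0, hvt (c-1) (by omega)] at this
              exact this
          have hu1 : L.getD 0 0 < L.getD 1 0 := by
            rcases Nat.lt_or_ge 0 r0 with hrc | hrc
            · have := hascpre 0 (by omega)
              rw [show j*c + 0 + 1 = j*c + 1 by ring] at this
              rw [show (j*c + 0) = j*c by ring] at this
              rw [hv0, hvt 1 (by omega)] at this
              exact this
            · -- r0 = 0 : all descents after position 0
              have hr : r0 = 0 := by omega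
              have := chain_gt w (j*c + 1) ((j+1)*c) (by omega)
                (fun t ht1 ht2 => by
                  have h3 := hdescpost (t - j*c) (by omega) (by omega)
                  rw [show j*c + (t - j*c) = t by omega] at h3
                  exact h3)
              rw [hv0', hvt 1 (by omega)] at this
              exact this
          right
          exact ⟨hB', hu1, hu2⟩
      · -- case (b)
        have hPA : g (j*c) % 2 = 0 ∧ g (j*c) ≤ 2*k - 2 := by
          constructor
          · omega
          · have : 1 ≤ g (j*c) := le_trans h0 (hmono (by omega))
            omega
        have hasc0 : w (j*c) < w (j*c + 1) := by
          rw [hv0, hvt 1 (by omega)]; exact hu1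
        have hstep : g (j*c) + 1 ≤ g (j*c + 1) := adv1 (j*c) (hidx 0 (by omega)) hPA
          (by rw [show j*c + 0 + 1 = j*c + 1 by ring] at hasc0 ⊢; exact hasc0)
        have hg1 : 2*j+1 ≤ g (j*c + 1) := by omega
        by_cases hB : 2*(j+1)+1 ≤ g ((j+1)*c)
        · left; exact hB
        · push_neg at hB
          have hBge : 2*j+1 ≤ g ((j+1)*c) := le_trans hg1 (hmono (by omega))
          rcases Nat.lt_or_ge (g ((j+1)*c)) (2*j+2) with hB1 | hB2
          · -- B = 2j+1 : all ascents from jc+1 to (j+1)c, contradiction with u1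
            exfalso
            have hBv : g ((j+1)*c) = 2*j+1 := by omega
            have hconst : ∀ t, j*c + 1 ≤ t → t ≤ (j+1)*c → g t = 2*j+1 := by
              intro t ht1 ht2
              have l1 : g (j*c+1) ≤ g t := hmono ht1
              have l2 : g t ≤ g ((j+1)*c) := hmono ht2
              omega
            have hch := chain_lt w (j*c + 1) ((j+1)*c) (by omega)
              (fun t ht1 ht2 => by
                have he : g t = g (t+1) := by
                  rw [hconst t ht1 (by omega), hconst (t+1) (by omega) (by omega)]
                exact (hpair t (by omega) he).2 (by rw [hconst t ht1 (by omega)]; omega))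
            rw [hv0', hvt 1 (by omega)] at hch
            omega
          · right
            exact ⟨by omega, hu1, hu2⟩
  -- final contradiction
  have hinvk := inv (k-1) (by omega)
  have hkm : (k-1)*c + c = k*c := by
    have hkk : k - 1 + 1 = k := by omega
    calc (k-1)*c + c = (k-1+1)*c := by ring
    _ = k*c := by rw [hkk]
  -- pick the starting position i0
  have hvk : ∀ t, t < c → w ((k-1)*c + t) = L.getD t 0 := fun t ht => hcopy (k-1) (by omega) t ht
  obtain ⟨i0, hi0g, hi0split⟩ : ∃ i0, 2*k-1 ≤ g i0 ∧
      (i0 = (k-1)*c ∨ (i0 = (k-1)*c + 1 ∧ L.getD 0 0 < L.getD 1 0)) := by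
    rcases hinvk with hA | ⟨hA, hu1, hu2⟩
    · by_cases hL01 : L.getD 0 0 < L.getD 1 0
      · have hmm : g ((k-1)*c) ≤ g ((k-1)*c + 1) := hmono (by omega)
        exact ⟨(k-1)*c + 1, by omega, Or.inr ⟨rfl, hL01⟩⟩
      · exact ⟨(k-1)*c, by omega, Or.inl rfl⟩
    · have h1le : (1:ℕ) ≤ g ((k-1)*c) := le_trans h0 (hmono (Nat.zero_le _))
      have hPA : g ((k-1)*c) % 2 = 0 ∧ g ((k-1)*c) ≤ 2*k - 2 := by
        rw [hA]; omega
      have hasc0 : w ((k-1)*c) < w ((k-1)*c + 1) := by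
        have e0 := hvk 0 (by omega)
        have e1 := hvk 1 (by omega)
        rw [show (k-1)*c + 0 = (k-1)*c by ring] at e0
        rw [e0, e1]; exact hu1
      have := adv1 ((k-1)*c) (by omega) hPA hasc0
      exact ⟨(k-1)*c + 1, by omega, Or.inr ⟨rfl, hu1⟩⟩
  have hi0le : i0 ≤ (k-1)*c + 1 := by rcases hi0split with h | ⟨h, _⟩ <;> omega
  -- counting lemma
  have cnt : ∀ j2, i0 ≤ j2 → j2 ≤ k*c + c - 1 →
      g i0 + ((Finset.Ico i0 j2).filter (fun t1 => ¬ w t1 < w (t1+1))).card ≤ g j2 := by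
    intro j2 hj2 hj2ub
    induction j2, hj2 using Nat.le_induction with
    | base => simp
    | succ j2 hj2 ih =>
      have ih' := ih (by omega)
      have hins : Finset.Ico i0 (j2+1) = insert j2 (Finset.Ico i0 j2) := by
        ext x
        simp only [Finset.mem_Ico, Finset.mem_insert]
        omega
      rw [hins, Finset.filter_insert]
      by_cases hna : ¬ w j2 < w (j2+1)
      · rw [if_pos hna, Finset.card_insert_of_notMem (by
          intro hmem
          have := Finset.mem_filter.1 hmem
          have := Finset.mem_Ico.1 this.1
          omega)]
        have hgj2 : 2*k-1 ≤ g j2 := le_trans hi0g (hmono hj2)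
        have hadv := adv2 j2 (by omega) (by omega) hna
        omega
      · rw [if_neg hna]
        have := hmono (show j2 ≤ j2 + 1 by omega)
        omega
  -- at least c bad pairs
  have hcard : c ≤ ((Finset.Ico i0 (k*c + c - 1)).filter (fun t1 => ¬ w t1 < w (t1+1))).card := by
    have := Finset.card_le_card_of_injOn
      (f := fun i => if i = c-1 then k*c - 1 else
        if L.getD i 0 < L.getD (i+1) 0 then k*c + (c-2-i) else (k-1)*c + i)
      (s := Finset.range c)
      (t := (Finset.Ico i0 (k*c + c - 1)).filter (fun t1 => ¬ w t1 < w (t1+1)))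
      ?_ ?_
    · simpa using this
    · intro i hi
      have hic : i < c := Finset.mem_range.1 hi
      dsimp only
      by_cases hie : i = c-1
      · rw [if_pos hie]
        refine Finset.mem_filter.2 ⟨Finset.mem_Ico.2 ⟨by omega, by omega⟩, ?_⟩
        have e0 : w (k*c - 1) = L.getD (c-1) 0 := by
          rw [show k*c - 1 = (k-1)*c + (c-1) by omega]
          exact hvk (c-1) (by omega)
        have e1 : w (k*c - 1 + 1) = L.getD (c-1) 0 := by
          rw [show k*c - 1 + 1 = k*c + 0 by omega]
          have := htail 0 (by omega)
          simpa using this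
        simp only [e0, e1]
        omega
      · rw [if_neg hie]
        by_cases hlt : L.getD i 0 < L.getD (i+1) 0
        · rw [if_pos hlt]
          refine Finset.mem_filter.2 ⟨Finset.mem_Ico.2 ⟨by omega, by omega⟩, ?_⟩
          have e0 : w (k*c + (c-2-i)) = L.getD (i+1) 0 := by
            have := htail (c-2-i) (by omega)
            rw [show c - 1 - (c-2-i) = i+1 by omega] at this
            exact this
          have e1 : w (k*c + (c-2-i) + 1) = L.getD i 0 := by
            rw [show k*c + (c-2-i) + 1 = k*c + (c-1-i) by omega]
            have := htail (c-1-i) (by omega)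
            rw [show c - 1 - (c-1-i) = i by omega] at this
            exact this
          simp only [e0, e1]
          omega
        · rw [if_neg hlt]
          have hge1 : i0 ≤ (k-1)*c + i := by
            rcases hi0split with h | ⟨h, hL01⟩
            · omega
            · have : i ≠ 0 := by
                intro h0'
                rw [h0'] at hlt
                exact hlt hL01
              omega
          refine Finset.mem_filter.2 ⟨Finset.mem_Ico.2 ⟨hge1, by omega⟩, ?_⟩
          have e0 : w ((k-1)*c + i) = L.getD i 0 := hvk i (by omega)
          have e1 : w ((k-1)*c + i + 1) = L.getD (i+1) 0 := by
            rw [show (k-1)*c + i + 1 = (k-1)*c + (i+1) by ring]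
            exact hvk (i+1) (by omega)
          simp only [e0, e1]
          exact hlt
    · intro i hi i' hi' heq
      have hic : i < c := Finset.mem_range.1 hi
      have hic' : i' < c := Finset.mem_range.1 hi'
      dsimp only at heq
      by_cases h1 : i = c-1 <;> by_cases h2 : i' = c-1
      · omega
      · rw [if_pos h1, if_neg h2] at heq
        by_cases h3 : L.getD i' 0 < L.getD (i'+1) 0
        · rw [if_pos h3] at heq; omega
        · rw [if_neg h3] at heq; omega
      · rw [if_neg h1, if_pos h2] at heq
        by_cases h3 : L.getD i 0 < L.getD (i+1) 0
        · rw [if_pos h3] at heq; omega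
        · rw [if_neg h3] at heq; omega
      · rw [if_neg h1, if_neg h2] at heq
        by_cases h3 : L.getD i 0 < L.getD (i+1) 0 <;> by_cases h4 : L.getD i' 0 < L.getD (i'+1) 0
        · rw [if_pos h3, if_pos h4] at heq; omega
        · rw [if_pos h3, if_neg h4] at heq; omega
        · rw [if_neg h3, if_pos h4] at heq; omega
        · rw [if_neg h3, if_neg h4] at heq; omega
  have hfin := cnt (k*c + c - 1) (by omega) le_rfl
  have hub' : g (k*c + c - 1) ≤ 2*k + c - 2 := by
    rw [show k*c + c - 1 = (k+1)*c - 1 by omega]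
    exact hub
  omega

lemma bridge (t : ℕ → Prop) [DecidablePred t] :
    ∀ (bs : List (List ℕ)) (q0 : ℕ) (v : List ℕ),
    (∀ qi, (h : qi < bs.length) →
      (t (q0 + qi) → bs[qi].Pairwise (· > ·)) ∧ (¬ t (q0 + qi) → bs[qi].Pairwise (· < ·))) →
    v.Sublist bs.flatten →
    ∃ g : ℕ → ℕ, Monotone g ∧ (∀ i, q0 ≤ g i) ∧ (∀ i, i < v.length → g i < q0 + bs.length) ∧
      (∀ i, i + 1 < v.length → g i = g (i+1) →
        (t (g i) → v.getD (i+1) 0 < v.getD i 0) ∧ (¬ t (g i) → v.getD i 0 < v.getD (i+1) 0)) := by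
  intro bs
  induction bs with
  | nil =>
    intro q0 v _ hsub
    rw [show ([] : List (List ℕ)).flatten = [] from rfl, List.sublist_nil] at hsub
    subst hsub
    exact ⟨fun _ => q0, monotone_const, fun _ => le_rfl, by simp, by simp⟩
  | cons b bs ih =>
    intro q0 v hsor hsub
    have hj : (b :: bs).flatten = b ++ bs.flatten := rfl
    rw [hj, List.sublist_append_iff] at hsub
    obtain ⟨v1, v2, rfl, h1, h2⟩ := hsub
    have hsor' : ∀ qi, (h : qi < bs.length) →
        (t (q0 + 1 + qi) → bs[qi].Pairwise (· > ·)) ∧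
        (¬ t (q0 + 1 + qi) → bs[qi].Pairwise (· < ·)) := by
      intro qi h
      have := hsor (qi + 1) (by simpa using Nat.succ_lt_succ h)
      rw [show q0 + 1 + qi = q0 + (qi+1) by omega]
      simpa using this
    obtain ⟨g', hg'mono, hg'lo, hg'hi, hg'pair⟩ := ih (q0 + 1) v2 hsor' h2
    refine ⟨fun i => if i < v1.length then q0 else g' (i - v1.length), ?_, ?_, ?_, ?_⟩
    · intro i j hij
      by_cases hi : i < v1.length <;> by_cases hj2 : j < v1.length <;> simp [hi, hj2]
      · exact le_trans (Nat.le_succ q0) (hg'lo _)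
      · omega
      · exact hg'mono (by omega)
    · intro i
      by_cases hi : i < v1.length <;> simp [hi]
      exact le_trans (Nat.le_succ q0) (hg'lo _)
    · intro i hilen
      by_cases hi : i < v1.length <;> simp only [hi, if_pos, if_neg, if_true, if_false]
      · simp only [List.length_cons]; omega
      · have hv2 : i - v1.length < v2.length := by
          simp only [List.length_append] at hilen; omega
        have := hg'hi _ hv2
        simp only [List.length_cons]; omega
    · intro i hilen heq
      have hlen : (v1 ++ v2).length = v1.length + v2.length := List.length_append
      by_cases hi : i < v1.length <;> by_cases hi1 : i + 1 < v1.length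
      · -- both in v1: same slot q0
        have hvi : (v1 ++ v2).getD i 0 = v1[i] := by
          rw [List.getD_append _ _ _ _ hi, List.getD_eq_getElem _ _ hi]
        have hvi1 : (v1 ++ v2).getD (i+1) 0 = v1[i+1] := by
          rw [List.getD_append _ _ _ _ hi1, List.getD_eq_getElem _ _ hi1]
        simp only [if_pos hi]
        constructor
        · intro ht
          have hs : b.Pairwise (· > ·) := (hsor 0 (by simp)).1 (by simpa using ht)
          have hs1 : v1.Pairwise (· > ·) := hs.sublist h1
          rw [hvi, hvi1]
          exact List.pairwise_iff_getElem.1 hs1 i (i+1) hi hi1 (by omega)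
        · intro ht
          have hs : b.Pairwise (· < ·) := (hsor 0 (by simp)).2 (by simpa using ht)
          have hs1 : v1.Pairwise (· < ·) := hs.sublist h1
          rw [hvi, hvi1]
          exact List.pairwise_iff_getElem.1 hs1 i (i+1) hi hi1 (by omega)
      · -- i in v1, i+1 in v2: slots differ
        exfalso
        simp only [if_pos hi, if_neg hi1] at heq
        have := hg'lo (i + 1 - v1.length)
        omega
      · omega
      · -- both in v2
        simp only [if_neg hi, if_neg hi1] at heq ⊢
        have hlt : (i - v1.length) + 1 < v2.length := by
          rw [hlen] at hilen; omega
        have e1 : i + 1 - v1.length = (i - v1.length) + 1 := by omega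
        have hvi : (v1 ++ v2).getD i 0 = v2.getD (i - v1.length) 0 :=
          List.getD_append_right _ _ _ _ (by omega)
        have hvi1 : (v1 ++ v2).getD (i+1) 0 = v2.getD ((i - v1.length) + 1) 0 := by
          rw [List.getD_append_right _ _ _ _ (by omega), e1]
        rw [hvi, hvi1]
        rw [e1] at heq
        exact hg'pair (i - v1.length) hlt heq

lemma length_rep (l : List ℕ) (k : ℕ) : (rep l k).length = k * l.length := by
  induction k with
  | zero => simp [rep]
  | succ k ih => rw [rep_succ, List.length_append, ih]; ring

lemma rep_map (f : ℕ → ℕ) (l : List ℕ) (k : ℕ) : (rep l k).map f = rep (l.map f) k := by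
  induction k with
  | zero => simp [rep]
  | succ k ih => rw [rep_succ, rep_succ, List.map_append, ih]

lemma rep_getD (l : List ℕ) (hl : 0 < l.length) (k : ℕ) :
    ∀ i, i < k * l.length → (rep l k).getD i 0 = l.getD (i % l.length) 0 := by
  induction k with
  | zero => intro i hi; omega
  | succ k ih =>
    intro i hi
    rw [rep_succ]
    rcases Nat.lt_or_ge i l.length with h | h
    · rw [List.getD_append _ _ _ _ h, Nat.mod_eq_of_lt h]
    · rw [List.getD_append_right _ _ _ _ h, ih (i - l.length) (by
        have : (k+1) * l.length = k * l.length + l.length := by ring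
        omega)]
      congr 1
      conv_rhs => rw [Nat.mod_eq_sub_mod h]

lemma getD_reverse (l : List ℕ) (s : ℕ) (hs : s < l.length) :
    l.reverse.getD s 0 = l.getD (l.length - 1 - s) 0 := by
  have h1 : s < l.reverse.length := by simpa using hs
  rw [List.getD_eq_getElem _ _ h1, List.getD_eq_getElem _ _ (show l.length - 1 - s < l.length by omega)]
  exact List.getElem_reverse h1

-- the avoiding block list
def BLst (r c k : ℕ) : List (List ℕ) :=
  ((List.range (2*k-2)).map fun i => if i % 2 = 0 then Ic r else Dc r) ++ List.replicate c (Ic r)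

lemma Ic_sorted (r : ℕ) : (Ic r).Pairwise (· < ·) := by
  simpa [Ic] using List.pairwise_lt_range' (s := 1) (n := r)

lemma Dc_sorted (r : ℕ) : (Dc r).Pairwise (· > ·) := by
  rw [Dc, List.pairwise_reverse]
  exact Ic_sorted r

lemma length_BLst (r c k : ℕ) : (BLst r c k).length = 2*k-2+c := by
  simp [BLst]

lemma BLst_sorted (r c k : ℕ) : ∀ qi, (h : qi < (BLst r c k).length) →
    ((1 + qi) % 2 = 0 ∧ 1 + qi ≤ 2*k-2 → (BLst r c k)[qi].Pairwise (· > ·)) ∧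
    (¬((1 + qi) % 2 = 0 ∧ 1 + qi ≤ 2*k-2) → (BLst r c k)[qi].Pairwise (· < ·)) := by
  intro qi h
  rw [length_BLst] at h
  by_cases hlt : qi < 2*k-2
  · have hget : (BLst r c k)[qi] = if qi % 2 = 0 then Ic r else Dc r := by
      simp only [BLst]
      rw [List.getElem_append_left (by simpa using hlt)]
      simp
    rcases Nat.even_or_odd qi with he | ho
    · have h2 : qi % 2 = 0 := Nat.even_iff.1 he
      rw [hget, if_pos h2]
      exact ⟨fun hcon => absurd hcon.1 (by omega), fun _ => Ic_sorted r⟩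
    · have h2 : qi % 2 = 1 := Nat.odd_iff.1 ho
      rw [hget, if_neg (by omega)]
      refine ⟨fun _ => Dc_sorted r, fun hcon => absurd ?_ hcon⟩
      omega
  · have hget : (BLst r c k)[qi] = Ic r := by
      simp only [BLst]
      rw [List.getElem_append_right (by simpa using hlt)]
      simp
    rw [hget]
    exact ⟨fun hcon => absurd hcon.2 (by omega), fun _ => Ic_sorted r⟩

/-- The central avoidance theorem. -/
theorem avoid_embed (c k r : ℕ) (hc : 2 ≤ c) (hk : 1 ≤ k) (L : List ℕ) (hLc : L.length = c) :
    ¬ (rep L k ++ L.reverse).Sublist (BLst r c k).flatten := by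
  intro hsub
  set v := rep L k ++ L.reverse with hv
  have hvlen : v.length = k*c + c := by
    simp [hv, length_rep, hLc]
  have hkc1 : (k+1)*c = k*c + c := by ring
  obtain ⟨g, hmono, hlo, hhi, hpair⟩ := bridge (t := fun q => q % 2 = 0 ∧ q ≤ 2*k-2)
    (BLst r c k) 1 v (by
      intro qi h
      have := BLst_sorted r c k qi h
      simpa [Nat.add_comm] using this) hsub
  have hclen : (0:ℕ) < L.length := by omega
  apply main_no_g L c k hc hk hLc (fun i => v.getD i 0) g
  · intro j hj i hi
    have hlt : j*c + i < k*c := by nlinarith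
    have hrep : (rep L k).length = k * c := by rw [length_rep, hLc]
    simp only [hv]
    rw [List.getD_append _ _ _ _ (by omega), rep_getD L hclen k (j*c+i) (by rw [hLc]; omega)]
    congr 1
    rw [hLc, Nat.add_comm, Nat.add_mul_mod_self_right, Nat.mod_eq_of_lt hi]
  · intro s hs
    have hrep : (rep L k).length = k * c := by rw [length_rep, hLc]
    simp only [hv]
    rw [List.getD_append_right _ _ _ _ (by omega), hrep,
      show k*c + s - k*c = s by omega, getD_reverse L s (by omega), hLc]
  · exact hmono
  · exact hlo 0
  · have h1 : (k+1)*c - 1 < v.length := by rw [hvlen]; omega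
    have := hhi _ h1
    rw [length_BLst] at this
    omega
  · intro i hi heq
    have hi' : i + 1 < v.length := by rw [hvlen]; omega
    exact hpair i hi' heq

lemma Ic_nodup (r : ℕ) : (Ic r).Nodup := List.nodup_range'
lemma Ic_length (r : ℕ) : (Ic r).length = r := List.length_range'

lemma BLst_mem (r c k : ℕ) {p : List ℕ} (hp : p ∈ BLst r c k) : p = Ic r ∨ p = Dc r := by
  rw [BLst, List.mem_append] at hp
  rcases hp with hp | hp
  · rw [List.mem_map] at hp
    obtain ⟨i, _, hi⟩ := hp
    by_cases h : i % 2 = 0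
    · left; rw [← hi, if_pos h]
    · right; rw [← hi, if_neg h]
  · left
    exact (List.eq_of_mem_replicate hp)

lemma take_join_sublist (l : List (List ℕ)) (x : ℕ) : (l.take x).flatten.Sublist l.flatten := by
  conv_rhs => rw [← List.take_append_drop x l]
  rw [show (List.take x l ++ List.drop x l).flatten = (List.take x l).flatten ++ (List.drop x l).flatten from List.flatten_append ..]
  exact List.sublist_append_left _ _

lemma BLst_formation (r c k x : ℕ) (hx : x ≤ 2*k-2+c) :
    IsFormation r x ((BLst r c k).take x).flatten := by
  refine ⟨(Ic r).toFinset, (BLst r c k).take x, ?_, ?_, ?_, rfl⟩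
  · rw [List.toFinset_card_of_nodup (Ic_nodup r), Ic_length]
  · rw [List.length_take, length_BLst]; omega
  · intro p hp
    have hp' : p ∈ BLst r c k := (List.take_sublist x _).mem hp
    rcases BLst_mem r c k hp' with h | h
    · subst h; exact ⟨Ic_nodup r, rfl⟩
    · subst h
      refine ⟨by simpa [Dc] using Ic_nodup r, ?_⟩
      simp [Dc]

lemma u_map (c k : ℕ) (f : ℕ → ℕ) :
    (rep (Ic c) k ++ Dc c).map f = rep ((Ic c).map f) k ++ ((Ic c).map f).reverse := by
  rw [List.map_append, rep_map, Dc, List.map_reverse]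

theorem lower_witness (c k r x : ℕ) (hc : 2 ≤ c) (hk : 1 ≤ k) (hx : x ≤ 2*k-2+c) :
    IsFormation r x ((BLst r c k).take x).flatten ∧
      ¬ Contains (((BLst r c k).take x).flatten) (rep (Ic c) k ++ Dc c) := by
  refine ⟨BLst_formation r c k x hx, ?_⟩
  rintro ⟨f, hfinj, hsub⟩
  rw [u_map] at hsub
  exact avoid_embed c k r hc hk ((Ic c).map f)
    (by rw [List.length_map, Ic_length])
    (hsub.trans (take_join_sublist _ _))

noncomputable def chainLen (v : ℕ → ℕ) (rel : ℕ → ℕ → Prop) [DecidableRel rel] (i : ℕ) : ℕ :=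
  1 + ((Finset.range i).attach.filter (fun j => rel (v j.1) (v i))).sup
    (fun j => chainLen v rel j.1)
termination_by i
decreasing_by exact Finset.mem_range.1 j.2

lemma chainLen_eq (v : ℕ → ℕ) (rel : ℕ → ℕ → Prop) [DecidableRel rel] (i : ℕ) :
    chainLen v rel i = 1 + ((Finset.range i).attach.filter (fun j => rel (v j.1) (v i))).sup
      (fun j => chainLen v rel j.1) := by
  rw [chainLen]

lemma chainLen_pos (v : ℕ → ℕ) (rel : ℕ → ℕ → Prop) [DecidableRel rel] (i : ℕ) :
    1 ≤ chainLen v rel i := by rw [chainLen_eq]; omega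

lemma chainLen_lt (v : ℕ → ℕ) (rel : ℕ → ℕ → Prop) [DecidableRel rel] {j i : ℕ}
    (hji : j < i) (hrel : rel (v j) (v i)) : chainLen v rel j < chainLen v rel i := by
  conv_rhs => rw [chainLen_eq]
  have hmem : (⟨j, Finset.mem_range.2 hji⟩ : {x // x ∈ Finset.range i}) ∈
      (Finset.range i).attach.filter (fun j => rel (v j.1) (v i)) :=
    Finset.mem_filter.2 ⟨Finset.mem_attach _ _, hrel⟩
  have h2 := Finset.le_sup (f := fun j : {x // x ∈ Finset.range i} => chainLen v rel j.1) hmem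
  simp only at h2
  omega

/-- extraction of an actual chain -/
lemma chainLen_extract (l : List ℕ) (rel : ℕ → ℕ → Prop) [DecidableRel rel] :
    ∀ i, (hi : i < l.length) →
    ∃ s : List ℕ, (s ++ [l[i]]).Sublist (l.take (i+1)) ∧
      (s ++ [l[i]]).length = chainLen (fun t => l.getD t 0) rel i ∧
      (s ++ [l[i]]).IsChain rel := by
  intro i
  induction i using Nat.strong_induction_on with
  | _ i ih =>
    intro hi
    rcases Finset.eq_empty_or_nonempty
      ((Finset.range i).attach.filter
        (fun j => rel ((fun t => l.getD t 0) j.1) ((fun t => l.getD t 0) i))) with hSe | hSne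
    · refine ⟨[], ?_, ?_, ?_⟩
      · have h1 : i < (l.take (i+1)).length := by rw [List.length_take]; omega
        have h2 : (l.take (i+1))[i]'h1 = l[i] := List.getElem_take
        simp only [List.nil_append]
        rw [← h2]
        exact List.singleton_sublist.2 (List.getElem_mem h1)
      · rw [chainLen_eq, hSe]
        simp
      · simp
    · obtain ⟨j, hjS, hjsup⟩ := Finset.exists_mem_eq_sup _ hSne
        (fun j : {x // x ∈ Finset.range i} => chainLen (fun t => l.getD t 0) rel j.1)
      have hji : j.1 < i := Finset.mem_range.1 j.2
      have hrel : rel (l.getD j.1 0) (l.getD i 0) := (Finset.mem_filter.1 hjS).2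
      obtain ⟨s, hsub, hlen, hch⟩ := ih j.1 hji (by omega)
      refine ⟨s ++ [l[j.1]], ?_, ?_, ?_⟩
      · have hsplit : l.take (i+1) = l.take (j.1+1) ++ (l.drop (j.1+1)).take (i - j.1) := by
          rw [← List.take_add]
          congr 1
          omega
        rw [hsplit]
        refine List.Sublist.append hsub ?_
        apply List.singleton_sublist.2
        have hlen2 : i - (j.1+1) < ((l.drop (j.1+1)).take (i - j.1)).length := by
          rw [List.length_take, List.length_drop]
          omega
        have h3 : ((l.drop (j.1+1)).take (i - j.1))[i - (j.1+1)]'hlen2 = l[i] := by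
          rw [List.getElem_take, List.getElem_drop]
          congr 1
          omega
        rw [← h3]
        exact List.getElem_mem _
      · have e1 := chainLen_eq (fun t => l.getD t 0) rel i
        rw [hjsup] at e1
        simp only [List.length_append, List.length_singleton] at hlen ⊢
        omega
      · rw [List.append_assoc, List.isChain_append]
        rw [List.isChain_append] at hch
        refine ⟨hch.1, ?_, ?_⟩
        · rw [List.isChain_append]
          refine ⟨List.isChain_singleton _, List.isChain_singleton _, ?_⟩
          intro x hx y hy
          simp only [List.getLast?_singleton, Option.mem_some_iff] at hx
          simp only [List.head?_cons, Option.mem_some_iff] at hy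
          subst hx; subst hy
          have hvj : l[j.1] = l.getD j.1 0 := (List.getD_eq_getElem l 0 (by omega)).symm
          have hvi : l[i] = l.getD i 0 := (List.getD_eq_getElem l 0 hi).symm
          rw [hvj, hvi]
          exact hrel
        · intro x hx y hy
          simp only [List.singleton_append, List.head?_cons, Option.mem_some_iff] at hy
          subst hy
          exact hch.2.2 x hx _ (by simp)

lemma erdos_szekeres_list (l : List ℕ) (hnd : l.Nodup) (a b : ℕ) (hlen : a * b < l.length) :
    (∃ s : List ℕ, s.Sublist l ∧ a + 1 ≤ s.length ∧ s.IsChain (· < ·)) ∨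
    (∃ s : List ℕ, s.Sublist l ∧ b + 1 ≤ s.length ∧ s.IsChain (· > ·)) := by
  by_contra hcon
  push_neg at hcon
  obtain ⟨h1, h2⟩ := hcon
  have hbd : ∀ i, (hi : i < l.length) →
      chainLen (fun t => l.getD t 0) (· < ·) i ≤ a ∧
      chainLen (fun t => l.getD t 0) (· > ·) i ≤ b := by
    intro i hi
    constructor
    · by_contra hgt
      obtain ⟨s, hsub, hlen', hch⟩ := chainLen_extract l (· < ·) i hi
      exact (h1 (s ++ [l[i]]) (hsub.trans (List.take_sublist _ _)) (by omega)) hch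
    · by_contra hgt
      obtain ⟨s, hsub, hlen', hch⟩ := chainLen_extract l (· > ·) i hi
      exact (h2 (s ++ [l[i]]) (hsub.trans (List.take_sublist _ _)) (by omega)) hch
  have hmaps : ∀ i ∈ Finset.range l.length,
      (chainLen (fun t => l.getD t 0) (· < ·) i, chainLen (fun t => l.getD t 0) (· > ·) i) ∈
        (Finset.Icc 1 a) ×ˢ (Finset.Icc 1 b) := by
    intro i hi
    have hi' := Finset.mem_range.1 hi
    have := hbd i hi'
    exact Finset.mem_product.2 ⟨Finset.mem_Icc.2 ⟨chainLen_pos _ _ _, this.1⟩,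
      Finset.mem_Icc.2 ⟨chainLen_pos _ _ _, this.2⟩⟩
  have hcard : ((Finset.Icc 1 a) ×ˢ (Finset.Icc 1 b)).card < (Finset.range l.length).card := by
    rw [Finset.card_product, Finset.card_range, Nat.card_Icc, Nat.card_Icc]
    simpa using hlen
  obtain ⟨i, hi, j, hj, hij, heq⟩ := Finset.exists_ne_map_eq_of_card_lt_of_maps_to hcard hmaps
  have hi' := Finset.mem_range.1 hi
  have hj' := Finset.mem_range.1 hj
  have hpw := List.pairwise_iff_getElem.1 hnd
  have heq1 := congrArg Prod.fst heq
  have heq2 := congrArg Prod.snd heq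
  simp only at heq1 heq2
  have hne : l.getD i 0 ≠ l.getD j 0 := by
    rw [List.getD_eq_getElem l 0 hi', List.getD_eq_getElem l 0 hj']
    rcases Nat.lt_or_ge i j with h | h
    · exact hpw i j hi' hj' h
    · have hlt : j < i := by omega
      exact fun hh => (hpw j i hj' hi' hlt) hh.symm
  rcases Nat.lt_or_ge i j with h | h
  · rcases Nat.lt_or_ge (l.getD i 0) (l.getD j 0) with hvv | hvv
    · exact absurd heq1 (Nat.ne_of_lt (chainLen_lt _ _ h hvv))
    · have hgt : l.getD j 0 < l.getD i 0 := by omega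
      exact absurd heq2 (Nat.ne_of_lt (chainLen_lt _ _ h hgt))
  · have hlt : j < i := by omega
    rcases Nat.lt_or_ge (l.getD j 0) (l.getD i 0) with hvv | hvv
    · exact absurd heq1.symm (Nat.ne_of_lt (chainLen_lt _ _ hlt hvv))
    · have hgt : l.getD i 0 < l.getD j 0 := by omega
      exact absurd heq2.symm (Nat.ne_of_lt (chainLen_lt _ _ hlt hgt))

def Rq (c : ℕ) : ℕ → ℕ
  | 0 => c
  | (n+1) => Rq c n * Rq c n + 1

lemma Rq_pos (c : ℕ) (hc : 1 ≤ c) : ∀ n, 1 ≤ Rq c n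
  | 0 => hc
  | (n+1) => by rw [Rq]; omega

/-- length of the T-restriction of a block containing T -/
lemma filter_length (p : List ℕ) (hnd : p.Nodup) (T : Finset ℕ) (hsub : T ⊆ p.toFinset) :
    (p.filter (· ∈ T)).length = T.card := by
  have hnd' : (p.filter (· ∈ T)).Nodup := hnd.filter _
  have htf : (p.filter (· ∈ T)).toFinset = T := by
    rw [List.toFinset_filter]
    simp only [decide_eq_true_eq]
    rw [Finset.filter_mem_eq_inter, Finset.inter_eq_right.2 hsub]
  rw [← List.toFinset_card_of_nodup hnd', htf]

lemma chain'_lt_nodup {l : List ℕ} (h : l.IsChain (· < ·)) : l.Nodup := by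
  rw [List.isChain_iff_pairwise] at h
  exact h.imp (fun hlt => Nat.ne_of_lt hlt)

lemma chain'_gt_nodup {l : List ℕ} (h : l.IsChain (· > ·)) : l.Nodup := by
  rw [List.isChain_iff_pairwise] at h
  exact h.imp (fun hlt => Nat.ne_of_gt hlt)

lemma iter (c : ℕ) (hc : 1 ≤ c) : ∀ (ps : List (List ℕ)) (T : Finset ℕ),
    (∀ p ∈ ps, p.Nodup ∧ T ⊆ p.toFinset) → Rq c (ps.length) ≤ T.card →
    ∃ T' : Finset ℕ, T' ⊆ T ∧ T'.card = c ∧ ∀ p ∈ ps,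
      ((p.filter (· ∈ T')).IsChain (· < ·) ∨ (p.filter (· ∈ T')).IsChain (· > ·)) := by
  intro ps
  induction ps with
  | nil =>
    intro T _ hcard
    obtain ⟨T', hsub, hcard'⟩ := Finset.exists_subset_card_eq (s := T) (n := c) (le_trans (by simp [Rq]) hcard)
    exact ⟨T', hsub, hcard', by simp⟩
  | cons p ps ih =>
    intro T hblocks hcard
    obtain ⟨hpnd, hpT⟩ := hblocks p (List.mem_cons_self)
    set l := p.filter (· ∈ T) with hl
    have hlnd : l.Nodup := hpnd.filter _
    have hllen : l.length = T.card := filter_length p hpnd T hpT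
    set n := ps.length with hn
    have hlenps : (p :: ps).length = n + 1 := by simp [hn]
    rw [hlenps] at hcard
    have hRnpos : 1 ≤ Rq c n := Rq_pos c hc n
    have hprod : (Rq c n - 1) * (Rq c n - 1) < l.length := by
      have h1 : (Rq c n - 1) * (Rq c n - 1) ≤ Rq c n * Rq c n :=
        Nat.mul_le_mul (by omega) (by omega)
      have h2 : Rq c (n+1) = Rq c n * Rq c n + 1 := rfl
      omega
    have hES := erdos_szekeres_list l hlnd (Rq c n - 1) (Rq c n - 1) hprod
    -- extract a monotone piece of length exactly Rq c n
    obtain ⟨s, hs_sub, hs_len, hs_chain⟩ : ∃ s : List ℕ, s.Sublist l ∧ s.length = Rq c n ∧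
        (s.IsChain (· < ·) ∨ s.IsChain (· > ·)) := by
      rcases hES with ⟨s, h1, h2, h3⟩ | ⟨s, h1, h2, h3⟩
      · refine ⟨s.take (Rq c n), (List.take_sublist _ _).trans h1, ?_, Or.inl ?_⟩
        · rw [List.length_take]; omega
        · rw [List.isChain_iff_pairwise] at h3 ⊢
          exact List.Pairwise.sublist (List.take_sublist _ _) h3
      · refine ⟨s.take (Rq c n), (List.take_sublist _ _).trans h1, ?_, Or.inr ?_⟩
        · rw [List.length_take]; omega
        · rw [List.isChain_iff_pairwise] at h3 ⊢
          exact List.Pairwise.sublist (List.take_sublist _ _) h3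
    have hsnd : s.Nodup := by
      rcases hs_chain with h | h
      · exact chain'_lt_nodup h
      · exact chain'_gt_nodup h
    set T1 := s.toFinset with hT1
    have hT1card : T1.card = Rq c n := by
      rw [hT1, List.toFinset_card_of_nodup hsnd, hs_len]
    have hT1T : T1 ⊆ T := by
      intro x hx
      rw [hT1, List.mem_toFinset] at hx
      have := hs_sub.mem hx
      rw [hl] at this
      simp only [List.mem_filter, decide_eq_true_eq] at this
      exact this.2
    obtain ⟨T', hT'1, hT'card, hT'chains⟩ := ih T1
      (fun q hq => ⟨(hblocks q (List.mem_cons_of_mem _ hq)).1,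
        le_trans hT1T (hblocks q (List.mem_cons_of_mem _ hq)).2⟩)
      (by rw [hT1card])
    refine ⟨T', le_trans hT'1 hT1T, hT'card, ?_⟩
    intro q hq
    rcases List.mem_cons.1 hq with rfl | hq'
    · -- the head block: its restriction equals s.filter (· ∈ T')
      have hT'q : T' ⊆ q.toFinset := le_trans (le_trans hT'1 hT1T) hpT
      have hT's : T' ⊆ s.toFinset := hT'1
      have hsq : s.Sublist q := hs_sub.trans (by rw [hl]; exact List.filter_sublist (l := q))
      have heq : s.filter (· ∈ T') = q.filter (· ∈ T') := by
        apply List.Sublist.eq_of_length (List.Sublist.filter _ hsq)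
        rw [filter_length q hpnd T' hT'q, filter_length s hsnd T' hT's]
      rw [← heq]
      rcases hs_chain with h | h
      · left
        rw [List.isChain_iff_pairwise] at h ⊢
        exact List.Pairwise.sublist (List.filter_sublist (l := s)) h
      · right
        rw [List.isChain_iff_pairwise] at h ⊢
        exact List.Pairwise.sublist (List.filter_sublist (l := s)) h
    · exact hT'chains q hq'

lemma forall2_join_sublist : ∀ {ws qs : List (List ℕ)}, List.Forall₂ List.Sublist ws qs →
    ws.flatten.Sublist qs.flatten := by
  intro ws qs h
  induction h with
  | nil => simp
  | cons h _ ih => exact List.Sublist.append h ih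

lemma sublist_join_of_sublist : ∀ {ps' ps : List (List ℕ)}, ps'.Sublist ps →
    ps'.flatten.Sublist ps.flatten := by
  intro ps' ps h
  induction h with
  | slnil => simp
  | @cons l1 l2 b _ ih =>
    refine ih.trans ?_
    rw [show (b :: l2).flatten = b ++ l2.flatten from rfl]
    exact List.sublist_append_right _ _
  | @cons_cons l1 l2 b _ ih =>
    rw [show (b :: l1).flatten = b ++ l1.flatten from rfl, show (b :: l2).flatten = b ++ l2.flatten from rfl]
    exact ih.append_left b

lemma join_map_singleton (tl : List ℕ) : (tl.map (fun t => [t])).flatten = tl := by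
  induction tl with
  | nil => simp
  | cons a tl ih => simp [ih]

lemma forall2_of_all {r : ℕ → List ℕ → Prop} : ∀ (tl : List ℕ) (qs : List (List ℕ)),
    tl.length = qs.length → (∀ x ∈ tl, ∀ p ∈ qs, r x p) → List.Forall₂ r tl qs := by
  intro tl
  induction tl with
  | nil =>
    intro qs hlen _
    have : qs = [] := List.eq_nil_of_length_eq_zero hlen.symm
    subst this
    exact List.Forall₂.nil
  | cons x tl ih =>
    intro qs hlen hall
    cases qs with
    | nil => simp at hlen
    | cons q qs =>
      refine List.Forall₂.cons (hall x (by simp) q (by simp)) (ih qs (by simpa using hlen) ?_)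
      intro y hy p hp
      exact hall y (List.mem_cons_of_mem _ hy) p (List.mem_cons_of_mem _ hp)

lemma forall2_replicate {r : ℕ → ℕ → Prop} {a : List ℕ} : ∀ (qs : List (List ℕ)),
    (∀ p ∈ qs, a.Sublist p) → List.Forall₂ List.Sublist (List.replicate qs.length a) qs := by
  intro qs
  induction qs with
  | nil => intro _; simp [List.replicate]
  | cons q qs ih =>
    intro h
    rw [List.length_cons, List.replicate_succ]
    exact List.Forall₂.cons (h q (by simp)) (ih (fun p hp => h p (List.mem_cons_of_mem _ hp)))

lemma forall2_append {r : List ℕ → List ℕ → Prop} :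
    ∀ {l1 l3 : List (List ℕ)} {l2 l4 : List (List ℕ)}, List.Forall₂ r l1 l2 →
    List.Forall₂ r l3 l4 → List.Forall₂ r (l1 ++ l3) (l2 ++ l4) := by
  intro l1 l3 l2 l4 h1 h2
  induction h1 with
  | nil => exact h2
  | cons h _ ih => exact List.Forall₂.cons h ih

lemma embed_aux (k c : ℕ) (ps : List (List ℕ)) (sl tl : List ℕ)
    (hps : 2*k-1+c ≤ ps.length) (hmem : ∀ p ∈ ps, ∀ x ∈ tl, x ∈ p)
    (htl : tl.length ≤ c)
    (sel : List (List ℕ)) (hsel1 : sel.Sublist (ps.take (2*k-1))) (hsel2 : sel.length = k)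
    (hsel3 : ∀ p ∈ sel, sl.Sublist p) :
    (rep sl k ++ tl).Sublist ps.flatten := by
  set qs := (ps.drop (2*k-1)).take tl.length with hqs
  have hqslen : qs.length = tl.length := by
    rw [hqs, List.length_take, List.length_drop]
    omega
  have hps' : (sel ++ qs).Sublist ps := by
    conv_rhs => rw [← List.take_append_drop (2*k-1) ps]
    exact List.Sublist.append hsel1 (List.take_sublist _ _)
  have hws : List.Forall₂ List.Sublist (List.replicate k sl ++ tl.map (fun t => [t]))
      (sel ++ qs) := by
    refine forall2_append ?_ ?_
    · rw [← hsel2]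
      exact forall2_replicate (r := (· < ·)) sel hsel3
    · rw [List.forall₂_map_left_iff]
      refine forall2_of_all tl qs hqslen.symm ?_
      intro x hx p hp
      have hpps : p ∈ ps := ((List.take_sublist _ _).trans (List.drop_sublist _ _)).mem hp
      exact List.singleton_sublist.2 (hmem p hpps x hx)
  have hjoin : (List.replicate k sl ++ tl.map (fun t => [t])).flatten = rep sl k ++ tl := by
    rw [show (List.replicate k sl ++ List.map (fun t => [t]) tl).flatten
      = (List.replicate k sl).flatten ++ (List.map (fun t => [t]) tl).flatten from List.flatten_append ..,
      join_map_singleton]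
    rfl
  rw [← hjoin]
  exact (forall2_join_sublist hws).trans (sublist_join_of_sublist hps')

lemma mem_le_foldr_max (l : List ℕ) : ∀ x ∈ l, x ≤ l.foldr max 0 := by
  induction l with
  | nil => simp
  | cons a l ih =>
    intro x hx
    rcases List.mem_cons.1 hx with rfl | hx'
    · exact le_max_left _ _
    · exact le_trans (ih x hx') (le_max_right _ _)

lemma contains_of (ps : List (List ℕ)) (c k : ℕ) (hc : 2 ≤ c) (hk : 1 ≤ k) (sl0 : List ℕ)
    (hnd : sl0.Nodup) (hlen0 : sl0.length = c)
    (hps : 2*k-1+c ≤ ps.length)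
    (hmem : ∀ p ∈ ps, ∀ x ∈ sl0, x ∈ p)
    (sel : List (List ℕ)) (hsel1 : sel.Sublist (ps.take (2*k-1))) (hsel2 : sel.length = k)
    (hsel3 : ∀ p ∈ sel, sl0.Sublist p) :
    Contains ps.flatten (rep (Ic c) k ++ Dc c) := by
  set B := sl0.foldr max 0 with hB
  set f : ℕ → ℕ := fun i => if 1 ≤ i ∧ i ≤ c then sl0.getD (i-1) 0 else B + 1 + i with hf
  have hgetmem : ∀ i, 1 ≤ i → i ≤ c → sl0.getD (i-1) 0 ∈ sl0 := by
    intro i h1 h2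
    rw [List.getD_eq_getElem sl0 0 (by omega : i - 1 < sl0.length)]
    exact List.getElem_mem _
  have hinj : Function.Injective f := by
    intro i j heq
    simp only [hf] at heq
    by_cases hi : 1 ≤ i ∧ i ≤ c <;> by_cases hj : 1 ≤ j ∧ j ≤ c
    · rw [if_pos hi, if_pos hj] at heq
      have h1 : i - 1 < sl0.length := by omega
      have h2 : j - 1 < sl0.length := by omega
      rw [List.getD_eq_getElem sl0 0 h1, List.getD_eq_getElem sl0 0 h2] at heq
      have := (hnd.getElem_inj_iff).1 heq
      omega
    · rw [if_pos hi, if_neg hj] at heq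
      have := mem_le_foldr_max sl0 _ (hgetmem i hi.1 hi.2)
      rw [← hB] at this
      omega
    · rw [if_neg hi, if_pos hj] at heq
      have := mem_le_foldr_max sl0 _ (hgetmem j hj.1 hj.2)
      rw [← hB] at this
      omega
    · rw [if_neg hi, if_neg hj] at heq
      omega
  have hmap : (Ic c).map f = sl0 := by
    have hIc : Ic c = List.range' 1 c := rfl
    apply List.ext_getElem
    · rw [List.length_map, hIc, List.length_range', hlen0]
    · intro n h1 h2
      have hn : n < c := by
        rw [List.length_map, hIc, List.length_range'] at h1
        exact h1
      rw [List.getElem_map]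
      have h3 : n < (Ic c).length := by rw [hIc, List.length_range']; exact hn
      have h4 : (Ic c)[n]'h3 = 1 + n := by
        simp only [hIc]
        simpa using List.getElem_range' (n := 1) n (by simpa [hIc] using h3)
      rw [h4]
      simp only [hf]
      rw [if_pos (by omega)]
      rw [List.getD_eq_getElem sl0 0 (by omega : 1 + n - 1 < sl0.length)]
      congr 1
      omega
  refine ⟨f, hinj, ?_⟩
  rw [u_map, hmap]
  refine embed_aux k c ps sl0 sl0.reverse hps ?_ (by rw [List.length_reverse, hlen0])
    sel hsel1 hsel2 hsel3
  intro p hp x hx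
  exact hmem p hp x (List.mem_reverse.1 hx)

lemma upper_mem (c k : ℕ) (hc : 2 ≤ c) (hk : 1 ≤ k) (F : List ℕ)
    (hF : IsFormation (Rq c (c + 2*k - 1)) (c + 2*k - 1) F) :
    Contains F (rep (Ic c) k ++ Dc c) := by
  obtain ⟨A, ps, hA, hlen, hblocks, rfl⟩ := hF
  obtain ⟨T', hT'A, hT'card, hchains⟩ := iter c (by omega) ps A
    (fun p hp => ⟨(hblocks p hp).1, le_of_eq (hblocks p hp).2.symm⟩)
    (by rw [hlen, hA])
  haveI ha1 : IsAntisymm ℕ (· < ·) := ⟨fun a b h1 h2 => absurd h1 (not_lt.2 h2.le)⟩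
  haveI ha2 : IsAntisymm ℕ (· > ·) := ⟨fun a b h1 h2 => absurd h1 (not_lt.2 h2.le)⟩
  set sl := T'.sort (· ≤ ·) with hsl
  have hslnd : sl.Nodup := Finset.sort_nodup _ _
  have hsllen : sl.length = c := by rw [hsl, Finset.length_sort, hT'card]
  have hsltf : sl.toFinset = T' := Finset.sort_toFinset _ _
  have hslsorted : sl.Pairwise (· < ·) := (Finset.sortedLT_sort _).pairwise
  have hT'sub : ∀ p ∈ ps, T' ⊆ p.toFinset := by
    intro p hp
    rw [(hblocks p hp).2]
    exact hT'A
  have hfilter_tf : ∀ p ∈ ps, (p.filter (· ∈ T')).toFinset = T' := by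
    intro p hp
    rw [List.toFinset_filter]
    simp only [decide_eq_true_eq]
    rw [Finset.filter_mem_eq_inter, Finset.inter_eq_right.2 (hT'sub p hp)]
  have hdichot : ∀ p ∈ ps, p.filter (· ∈ T') = sl ∨ p.filter (· ∈ T') = sl.reverse := by
    intro p hp
    have hnd' : (p.filter (· ∈ T')).Nodup := (hblocks p hp).1.filter _
    rcases hchains p hp with h | h
    · left
      refine (fun h1 h2 => List.Perm.eq_of_pairwise' h1 h2
        (List.perm_of_nodup_nodup_toFinset_eq hnd' hslnd (by rw [hfilter_tf p hp, hsltf])))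
        ?_ hslsorted
      rw [← List.isChain_iff_pairwise]
      exact h
    · right
      refine (fun h1 h2 => List.Perm.eq_of_pairwise' (r := (· > ·)) h1 h2
        (List.perm_of_nodup_nodup_toFinset_eq hnd' (by simpa using hslnd)
          (by rw [hfilter_tf p hp, List.toFinset_reverse, hsltf])))
        ?_ ?_
      · rw [← List.isChain_iff_pairwise]
        exact h
      · rw [List.pairwise_reverse]
        exact hslsorted
  set t2k := ps.take (2*k-1) with ht2k
  have hlent2k : t2k.length = 2*k-1 := by
    rw [ht2k, List.length_take, hlen]
    omega
  have hsplitcount := List.length_eq_countP_add_countP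
    (fun p : List ℕ => decide (p.filter (· ∈ T') = sl)) (l := t2k)
  have hmono : t2k.countP (fun p => decide ¬(decide (p.filter (· ∈ T') = sl) = true)) ≤
      t2k.countP (fun p => decide (p.filter (· ∈ T') = sl.reverse)) := by
    apply List.countP_mono_left
    intro p hp hne
    simp only [decide_eq_true_eq] at hne ⊢
    rcases hdichot p ((List.take_sublist _ _).mem hp) with h | h
    · exact absurd h hne
    · exact h
  have hmem_sl : ∀ p ∈ ps, ∀ x ∈ sl, x ∈ p := by
    intro p hp x hx
    have : x ∈ T' := by rw [← hsltf]; exact List.mem_toFinset.2 hx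
    have : x ∈ p.toFinset := hT'sub p hp this
    exact List.mem_toFinset.1 this
  have hpslen : 2*k-1+c ≤ ps.length := by rw [hlen]; omega
  rcases Nat.lt_or_ge (t2k.countP (fun p : List ℕ => decide (p.filter (· ∈ T') = sl))) k with hcase | hcase
  · -- at least k descending blocks
    have hdesccnt : k ≤ t2k.countP (fun p => decide (p.filter (· ∈ T') = sl.reverse)) := by
      omega
    set sel := (t2k.filter (fun p => decide (p.filter (· ∈ T') = sl.reverse))).take k with hsel
    have hsellen : sel.length = k := by
      rw [hsel, List.length_take, ← List.countP_eq_length_filter]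
      omega
    refine contains_of ps c k hc hk sl.reverse (by simpa using hslnd)
      (by rw [List.length_reverse, hsllen]) hpslen
      (fun p hp x hx => hmem_sl p hp x (List.mem_reverse.1 hx)) sel
      ((List.take_sublist _ _).trans List.filter_sublist) hsellen ?_
    intro p hp
    have hp' := (List.take_sublist _ _).mem hp
    have := List.of_mem_filter hp'
    simp only [decide_eq_true_eq] at this
    rw [← this]
    exact List.filter_sublist
  · set sel := (t2k.filter (fun p => decide (p.filter (· ∈ T') = sl))).take k with hsel
    have hsellen : sel.length = k := by
      rw [hsel, List.length_take, ← List.countP_eq_length_filter]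
      omega
    refine contains_of ps c k hc hk sl hslnd hsllen hpslen hmem_sl sel
      ((List.take_sublist _ _).trans List.filter_sublist) hsellen ?_
    intro p hp
    have hp' := (List.take_sublist _ _).mem hp
    have := List.of_mem_filter hp'
    simp only [decide_eq_true_eq] at this
    rw [← this]
    exact List.filter_sublist


lemma BLst_join (r c k : ℕ) : (BLst r c k).flatten = altSeq r (2*k-2) ++ rep (Ic r) c := by
  rw [BLst]
  rw [show (((List.range (2*k-2)).map fun i => if i % 2 = 0 then Ic r else Dc r) ++
      List.replicate c (Ic r)).flatten
    = ((List.range (2*k-2)).map fun i => if i % 2 = 0 then Ic r else Dc r).flatten ++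
      (List.replicate c (Ic r)).flatten from List.flatten_append ..]
  rfl

theorem stmt19 (c k : ℕ) (hc : 2 ≤ c) (hk : 1 ≤ k) :
    fw (rep (Ic c) k ++ Dc c) = c + 2 * k - 1 ∧
    ∀ π : Equiv.Perm (Fin c),
      ¬ (rep (Iperm π) k ++ (Iperm π).reverse).Sublist
          (altSeq c (2 * k - 2) ++ rep (Ic c) c) := by
  have hmem : (c + 2*k - 1) ∈ {s | ∃ r, ∀ F, IsFormation r s F →
      Contains F (rep (Ic c) k ++ Dc c)} :=
    ⟨Rq c (c + 2*k - 1), fun F hF => upper_mem c k hc hk F hF⟩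
  constructor
  · have hset : fw (rep (Ic c) k ++ Dc c) = sInf {s | ∃ r, ∀ F, IsFormation r s F →
        Contains F (rep (Ic c) k ++ Dc c)} := rfl
    rw [hset]
    apply le_antisymm
    · exact Nat.sInf_le hmem
    · apply le_csInf ⟨c + 2*k - 1, hmem⟩
      intro x hx
      by_contra hlt
      push_neg at hlt
      obtain ⟨r, hall⟩ := hx
      have hxle : x ≤ 2*k-2+c := by omega
      obtain ⟨hform, hnc⟩ := lower_witness c k r x hc hk hxle
      exact hnc (hall _ hform)
  · intro π hsub
    have hlenp : (Iperm π).length = c := by simp [Iperm]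
    apply avoid_embed c k c hc hk (Iperm π) hlenp
    rw [BLst_join]
    exact hsub
end
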